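/- arXiv:2509.00011 — 11 statements merged into one kernel-verified Lean document; each statement's English description precedes it below -/
import Mathlib

section
/- Let N(t) = 1_{T≤t} with hazard rate μ under measure P, let v(t) = exp(-∫₀ᵗ δ) and let V solve Thiele's equation V'(t) = δ(t)V(t) + P(t) - μ(t)(S(t)-V(t)) with V(n) = S̄. Then for each t ∈ [0,n], 1_{T>t}·V(t) = E[ ∫_{(t,n]} (v(r)/v(t)) d(-B)(r) | F_t ], where dB(r) = 1_{T>r}P(r)dr - S(r)dN(r) for r<n and the cashflow at n additionally includes -1_{T>n}S̄. -/
open MeasureTheory Set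
open Filter Topology

/-- Stochastic interpretation of the prospective policy value: the deterministic
Thiele solution `V`, multiplied by the survival indicator, is a version of the
conditional expectation of the discounted future net outgo given `ℱ t`. -/
theorem prospective_value_as_condexp
    {Ω : Type*} [m0 : MeasurableSpace Ω] (P : Measure Ω) [IsProbabilityMeasure P]
    (n Sbar : ℝ) (hn : 0 < n)
    (T : Ω → ℝ) (hT : Measurable T) (hTnn : ∀ ω, 0 ≤ T ω)
    (δ μ Prem S V : ℝ → ℝ)
    (hδ : Continuous δ) (hμ : Continuous μ)
    (hPrem : Continuous Prem) (hS : Continuous S)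
    -- under P, T has hazard rate μ
    (hTlaw : ∀ t : ℝ, P {ω | t < T ω}
      = ENNReal.ofReal (Real.exp (-(∫ r in (0:ℝ)..t, μ r))))
    (v : ℝ → ℝ) (hv : ∀ t, v t = Real.exp (-(∫ r in (0:ℝ)..t, δ r)))
    -- V solves Thiele's equation with V(n) = S̄
    (hV : ∀ t ∈ Icc (0:ℝ) n,
      HasDerivAt V (δ t * V t + Prem t - μ t * (S t - V t)) t)
    (hVn : V n = Sbar)
    (ℱ : Filtration ℝ m0)
    (hℱ : ∀ t, (ℱ t : MeasurableSpace Ω) = ⨆ s ∈ Iic t,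
      MeasurableSpace.comap (fun ω => if T ω ≤ s then (1:ℝ) else 0) inferInstance)
    -- Y t = ∫_{(t,n]} (v r / v t) d(-B)(r) : discounted future benefits less premiums
    (Y : ℝ → Ω → ℝ)
    (hY : ∀ t ω, Y t ω =
      -(∫ r in t..n, (v r / v t) * (if r < T ω then Prem r else 0))
      + (if t < T ω ∧ T ω ≤ n then (v (T ω) / v t) * S (T ω) else 0)
      + (if n < T ω then (v n / v t) * Sbar else 0)) :
    ∀ t ∈ Icc (0:ℝ) n,
      (fun ω => (if t < T ω then (1:ℝ) else 0) * V t) =ᵐ[P] P[Y t | ℱ t] := by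
  intro t ht
  obtain ⟨ht0, htn⟩ := ht
  -- ### deterministic preliminaries
  set M : ℝ → ℝ := fun x => ∫ r in (0:ℝ)..x, μ r with hMdef
  set Ef : ℝ → ℝ := fun x => Real.exp (-(M x)) with hEdef
  have hMderiv : ∀ x, HasDerivAt M (μ x) x := fun x =>
    (hμ.integral_hasStrictDerivAt 0 x).hasDerivAt
  have hMcont : Continuous M :=
    continuous_iff_continuousAt.mpr fun x => (hMderiv x).continuousAt
  have hEfpos : ∀ x, 0 < Ef x := fun x => Real.exp_pos _
  have hEfderiv : ∀ x, HasDerivAt Ef (-(μ x * Ef x)) x := by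
    intro x
    have h := ((hMderiv x).neg).exp
    refine h.congr_deriv ?_
    show Real.exp (-(M x)) * -μ x = -(μ x * Real.exp (-(M x)))
    ring
  have hEfcont : Continuous Ef := Real.continuous_exp.comp hMcont.neg
  have hPT : ∀ x, P {ω | x < T ω} = ENNReal.ofReal (Ef x) := fun x => hTlaw x
  have hEfle : ∀ a b, a ≤ b → Ef b ≤ Ef a := by
    intro a b hab
    have h1 : P {ω | b < T ω} ≤ P {ω | a < T ω} :=
      measure_mono fun ω hω => lt_of_le_of_lt hab hω
    rw [hPT a, hPT b] at h1
    exact (ENNReal.ofReal_le_ofReal_iff (hEfpos a).le).mp h1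
  have hMmono : Monotone M := by
    intro a b hab
    have h1 := hEfle a b hab
    simp only [hEdef] at h1
    have h2 := Real.exp_le_exp.mp h1
    linarith
  have hμnn : ∀ x, 0 ≤ μ x := by
    intro x
    have hs : Tendsto (slope M x) (𝓝[≠] x) (𝓝 (μ x)) :=
      hasDerivAt_iff_tendsto_slope.mp (hMderiv x)
    refine ge_of_tendsto hs ?_
    refine eventually_nhdsWithin_of_forall fun y hy => ?_
    rw [slope_def_field]
    rcases lt_or_gt_of_ne (Ne.symm hy) with h | h
    · exact div_nonneg (by linarith [hMmono h.le]) (by linarith)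
    · exact div_nonneg_iff.mpr (Or.inr ⟨by linarith [hMmono h.le], by linarith⟩)
  have hM0 : ∀ x ≤ (0:ℝ), M x = 0 := by
    intro x hx
    rcases eq_or_lt_of_le hx with h | hx'
    · rw [h]; simp [hMdef]
    · have huniv : {ω | x < T ω} = univ :=
        eq_univ_of_forall fun ω => lt_of_lt_of_le hx' (hTnn ω)
      have h1 := hPT x
      rw [huniv, measure_univ] at h1
      have h2 : Ef x = 1 := ENNReal.ofReal_eq_one.mp h1.symm
      simp only [hEdef] at h2
      have h3 := congrArg Real.log h2
      rw [Real.log_exp, Real.log_one] at h3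
      linarith
  have hμ0 : ∀ x < (0:ℝ), μ x = 0 := by
    intro x hx
    have hev : M =ᶠ[nhds x] (fun _ => (0:ℝ)) := by
      filter_upwards [Iio_mem_nhds hx] with y hy
      exact hM0 y (le_of_lt hy)
    have h0 : HasDerivAt M 0 x := (hasDerivAt_const x (0:ℝ)).congr_of_eventuallyEq hev
    exact ((hMderiv x).unique h0)
  have hEf0 : Ef 0 = 1 := by simp [hEdef, hM0 0 le_rfl]
  have hEfle1 : ∀ x, Ef x ≤ 1 := by
    intro x
    rcases le_total x 0 with hx | hx
    · simp [hEdef, hM0 x hx]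
    · have h1 : M 0 ≤ M x := hMmono hx
      have h0 : M 0 = 0 := hM0 0 le_rfl
      calc Ef x ≤ Ef 0 := hEfle 0 x hx
        _ = 1 := hEf0
  have hg_nonneg : ∀ x, 0 ≤ μ x * Ef x := fun x => mul_nonneg (hμnn x) (hEfpos x).le
  have hgcont : Continuous fun x => μ x * Ef x := hμ.mul hEfcont
  have ftcE : ∀ a b : ℝ, (∫ x in a..b, μ x * Ef x) = Ef a - Ef b := by
    intro a b
    have hderiv : ∀ x ∈ uIcc a b, HasDerivAt (fun y => -(Ef y)) (μ x * Ef x) x := by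
      intro x _
      have h := (hEfderiv x).neg
      refine h.congr_deriv ?_
      ring
    have h2 := intervalIntegral.integral_eq_sub_of_hasDerivAt hderiv
      (hgcont.intervalIntegrable a b)
    rw [h2]; ring
  -- ### the law of T as a density measure
  set ν : Measure ℝ := volume.withDensity (fun x => ENNReal.ofReal (μ x * Ef x)) with hνdef
  have hgmeas : Measurable fun x => ENNReal.ofReal (μ x * Ef x) :=
    hgcont.measurable.ennreal_ofReal
  have hzero : ∀ z ≤ (0:ℝ), (∫⁻ y in Iic z, ENNReal.ofReal (μ y * Ef y)) = 0 := by
    intro z hz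
    rw [lintegral_eq_zero_iff hgmeas, Filter.EventuallyEq, ae_restrict_iff' measurableSet_Iic]
    filter_upwards [compl_mem_ae_iff.mpr (Real.volume_singleton (a := (0:ℝ)))] with y hy hyIic
    have hy0 : y < 0 := lt_of_le_of_ne (le_trans hyIic hz) (by simpa using hy)
    simp [hμ0 y hy0]
  have hνIic : ∀ x, ν (Iic x) = ENNReal.ofReal (1 - Ef x) := by
    intro x
    rw [hνdef, withDensity_apply _ measurableSet_Iic]
    rcases le_total x 0 with hx | hx
    · rw [hzero x hx]
      simp [hEdef, hM0 x hx]
    · have hsplit : Iic x = Iic 0 ∪ Ioc 0 x := (Iic_union_Ioc_eq_Iic hx).symm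
      have hdisj : Disjoint (Iic (0:ℝ)) (Ioc 0 x) := by
        rw [Set.disjoint_left]; intro y hy1 hy2; exact absurd hy1 (not_le.mpr hy2.1)
      rw [hsplit, lintegral_union measurableSet_Ioc hdisj, hzero 0 le_rfl, zero_add]
      have hInt : IntegrableOn (fun y => μ y * Ef y) (Ioc 0 x) volume :=
        hgcont.integrableOn_Ioc
      rw [← ofReal_integral_eq_lintegral_ofReal hInt (ae_of_all _ fun y => hg_nonneg y)]
      congr 1
      rw [← intervalIntegral.integral_of_le hx, ftcE 0 x, hEf0]
  haveI hνfin : IsFiniteMeasure ν := by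
    constructor
    have huniv : (univ : Set ℝ) = ⋃ k : ℕ, Iic (k : ℝ) := by
      ext y
      simp only [mem_univ, mem_iUnion, mem_Iic, true_iff]
      exact exists_nat_ge y
    rw [huniv, Monotone.measure_iUnion (fun i j hij => Iic_subset_Iic.mpr (by exact_mod_cast hij))]
    refine lt_of_le_of_lt (iSup_le fun k => ?_) (ENNReal.one_lt_top)
    rw [hνIic]
    calc ENNReal.ofReal (1 - Ef k) ≤ ENNReal.ofReal 1 :=
          ENNReal.ofReal_le_ofReal (by linarith [(hEfpos k).le])
      _ = 1 := ENNReal.ofReal_one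
  haveI : IsProbabilityMeasure (P.map T) := Measure.isProbabilityMeasure_map hT.aemeasurable
  have hmap : P.map T = ν := by
    refine Measure.ext_of_Iic (P.map T) ν fun x => ?_
    rw [Measure.map_apply hT measurableSet_Iic, hνIic]
    have hc : T ⁻¹' Iic x = {ω | x < T ω}ᶜ := by
      ext ω; simp [not_lt]
    have hmeasx : MeasurableSet {ω | x < T ω} := hT measurableSet_Ioi
    rw [hc, measure_compl hmeasx (measure_ne_top P _), hPT x, measure_univ,
      ENNReal.ofReal_sub 1 (hEfpos x).le, ENNReal.ofReal_one]
  -- ### facts about v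
  have hvpos : ∀ x, 0 < v x := fun x => (hv x) ▸ Real.exp_pos _
  have hvt : v t ≠ 0 := (hvpos t).ne'
  have hNderiv : ∀ y, HasDerivAt (fun u => ∫ r in (0:ℝ)..u, δ r) (δ y) y := fun y =>
    (hδ.integral_hasStrictDerivAt 0 y).hasDerivAt
  have hvderiv : ∀ x, HasDerivAt v (-(δ x) * v x) x := by
    intro x
    have h1 := ((hNderiv x).neg).exp
    have h2 : HasDerivAt v (Real.exp (-(∫ r in (0:ℝ)..x, δ r)) * -(δ x)) x := by
      have hveq : v = fun u => Real.exp (-(∫ r in (0:ℝ)..u, δ r)) := funext hv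
      rw [hveq]; exact h1
    convert h2 using 1
    rw [hv x]; ring
  have hvcont : Continuous v :=
    continuous_iff_continuousAt.mpr fun x => (hvderiv x).continuousAt
  -- ### the primitive of discounted premiums
  set q : ℝ → ℝ := fun x => ∫ r in t..x, (v r / v t) * Prem r with hqdef
  have hGcont : Continuous fun r => (v r / v t) * Prem r := (hvcont.div_const _).mul hPrem
  have hqderiv : ∀ x, HasDerivAt q ((v x / v t) * Prem x) x := fun x =>
    (hGcont.integral_hasStrictDerivAt t x).hasDerivAt
  have hqcont : Continuous q :=
    continuous_iff_continuousAt.mpr fun x => (hqderiv x).continuousAt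
  have hq_t : q t = 0 := intervalIntegral.integral_same
  -- ### pointwise evaluation of the premium integral
  have hclamp : ∀ x : ℝ, (∫ r in t..n, (v r / v t) * (if r < x then Prem r else 0))
      = q (max t (min x n)) := by
    intro x
    set c := max t (min x n) with hcdef
    have htc : t ≤ c := le_max_left _ _
    have hcn : c ≤ n := max_le htn (min_le_right _ _)
    have hf_eq : (fun r => (v r / v t) * (if r < x then Prem r else 0))
        = Set.indicator (Iio x) (fun r => (v r / v t) * Prem r) := by
      funext r; by_cases hr : r < x <;> simp [Set.indicator, Set.mem_Iio, hr]
    have hfi : ∀ a b : ℝ, IntervalIntegrable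
        (fun r => (v r / v t) * (if r < x then Prem r else 0)) volume a b := by
      intro a b
      rw [hf_eq, intervalIntegrable_iff]
      exact (intervalIntegrable_iff.mp (hGcont.intervalIntegrable a b)).indicator
        measurableSet_Iio
    have key1 : (∫ r in t..c, (v r / v t) * (if r < x then Prem r else 0)) = q c := by
      simp only [hqdef]
      apply intervalIntegral.integral_congr_ae
      filter_upwards [compl_mem_ae_iff.mpr (Real.volume_singleton (a := x))] with r hr hrmem
      rw [uIoc_of_le htc] at hrmem
      have hrx : r < x := by
        rcases le_or_gt x t with hxt | hxt
        · exfalso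
          have hct : c = t := by
            rw [hcdef, max_eq_left ((min_le_left x n).trans hxt)]
          rw [hct] at hrmem
          exact absurd hrmem (by simp)
        · have hcx : c ≤ x := by
            rw [hcdef]; exact max_le hxt.le (min_le_left _ _)
          exact lt_of_le_of_ne (hrmem.2.trans hcx) (by simpa using hr)
      simp [if_pos hrx]
    have key2 : (∫ r in c..n, (v r / v t) * (if r < x then Prem r else 0)) = 0 := by
      have hz : ∀ r ∈ Set.uIoc c n, (v r / v t) * (if r < x then Prem r else 0) = 0 := by
        intro r hrmem
        rw [uIoc_of_le hcn] at hrmem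
        have hxr : ¬ r < x := by
          rcases le_or_gt x n with hxn | hxn
          · have hxc : x ≤ c := by
              rcases le_or_gt x t with h1 | h1
              · exact h1.trans htc
              · rw [hcdef, min_eq_left hxn]; exact le_max_right _ _
            exact not_lt.mpr (hxc.trans hrmem.1.le)
          · exfalso
            have hcn' : c = n := by rw [hcdef, min_eq_right hxn.le, max_eq_right htn]
            rw [hcn'] at hrmem
            exact absurd hrmem (by simp)
        simp [hxr]
      have := intervalIntegral.integral_congr_ae (g := fun _ => (0:ℝ))
        (μ := volume) (a := c) (b := n) (ae_of_all _ hz)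
      simpa using this
    calc (∫ r in t..n, (v r / v t) * (if r < x then Prem r else 0))
        = (∫ r in t..c, (v r / v t) * (if r < x then Prem r else 0))
          + ∫ r in c..n, (v r / v t) * (if r < x then Prem r else 0) :=
          (intervalIntegral.integral_add_adjacent_intervals (hfi t c) (hfi c n)).symm
      _ = q c := by rw [key1, key2, add_zero]
  -- ### decomposition of Y t
  set h1f : ℝ → ℝ := fun x => -q x + (v x / v t) * S x with hh1def
  set c1 : ℝ := -q n + (v n / v t) * Sbar with hc1def
  have hh1cont : Continuous h1f := hqcont.neg.add ((hvcont.div_const _).mul hS)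
  have hYΨ : ∀ ω, Y t ω = (if t < T ω ∧ T ω ≤ n then h1f (T ω) else 0)
      + (if n < T ω then c1 else 0) := by
    intro ω
    rw [hY t ω, hclamp (T ω)]
    simp only [hh1def, hc1def]
    rcases lt_or_ge t (T ω) with h1 | h1
    · rcases le_or_gt (T ω) n with h2 | h2
      · have hc : max t (min (T ω) n) = T ω := by rw [min_eq_left h2, max_eq_right h1.le]
        rw [hc]
        simp [h1, h2, not_lt.mpr h2]
      · have hc : max t (min (T ω) n) = n := by rw [min_eq_right h2.le, max_eq_right htn]
        rw [hc]
        simp [h2, not_le.mpr h2]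
    · have hc : max t (min (T ω) n) = t := by
        rw [max_eq_left ((min_le_left _ _).trans h1)]
      rw [hc, hq_t]
      simp [not_lt.mpr h1, not_lt.mpr (h1.trans htn)]
  -- ### integrability of the pieces
  have hmeasIoc : MeasurableSet {ω | t < T ω ∧ T ω ≤ n} := hT measurableSet_Ioc
  have hmeasIoi : ∀ a : ℝ, MeasurableSet {ω | a < T ω} := fun a => hT measurableSet_Ioi
  have hB1meas : Measurable fun ω => (if t < T ω ∧ T ω ≤ n then h1f (T ω) else 0) :=
    Measurable.ite hmeasIoc (hh1cont.measurable.comp hT) measurable_const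
  have hB2meas : Measurable fun ω => (if n < T ω then c1 else 0) :=
    Measurable.ite (hmeasIoi n) measurable_const measurable_const
  obtain ⟨C1, hC1⟩ := (isCompact_Icc (a := t) (b := n)).exists_bound_of_continuousOn
    hh1cont.continuousOn
  have hB1int : Integrable (fun ω => (if t < T ω ∧ T ω ≤ n then h1f (T ω) else 0)) P := by
    refine (integrable_const (max C1 0)).mono' hB1meas.aestronglyMeasurable
      (ae_of_all _ fun ω => ?_)
    by_cases hω : t < T ω ∧ T ω ≤ n
    · rw [if_pos hω]
      exact le_trans (hC1 _ ⟨hω.1.le, hω.2⟩) (le_max_left _ _)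
    · rw [if_neg hω, norm_zero]; exact le_max_right _ _
  have hB2int : Integrable (fun ω => (if n < T ω then c1 else 0)) P := by
    refine (integrable_const |c1|).mono' hB2meas.aestronglyMeasurable
      (ae_of_all _ fun ω => ?_)
    by_cases hω : n < T ω
    · rw [if_pos hω]; exact le_of_eq (Real.norm_eq_abs c1)
    · rw [if_neg hω, norm_zero]; exact abs_nonneg _
  -- ### key change-of-variables lemma
  have hKEY : ∀ h : ℝ → ℝ, Continuous h →
      (∫ ω, (if t < T ω ∧ T ω ≤ n then h (T ω) else 0) ∂P)
        = ∫ x in t..n, h x * (μ x * Ef x) := by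
    intro h hh
    have hHmeas : Measurable fun x => Set.indicator (Ioc t n) h x :=
      hh.measurable.indicator measurableSet_Ioc
    have step1 : (∫ ω, (if t < T ω ∧ T ω ≤ n then h (T ω) else 0) ∂P)
        = ∫ x, Set.indicator (Ioc t n) h x ∂(P.map T) := by
      rw [integral_map hT.aemeasurable hHmeas.aestronglyMeasurable]
      refine integral_congr_ae (ae_of_all _ fun ω => ?_)
      by_cases hω : t < T ω ∧ T ω ≤ n
      · simp [Set.indicator, mem_Ioc, hω]
      · simp [Set.indicator, mem_Ioc, hω]
    rw [step1, hmap, hνdef]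
    have hofReal : (fun x => ENNReal.ofReal (μ x * Ef x))
        = fun x => (((fun x => (μ x * Ef x).toNNReal) x : NNReal) : ENNReal) := rfl
    rw [hofReal, integral_withDensity_eq_integral_smul
      (show Measurable fun x => (μ x * Ef x).toNNReal from
        (continuous_real_toNNReal.comp hgcont).measurable) _]
    have step2 : (fun x => ((fun x => (μ x * Ef x).toNNReal) x : NNReal) • Set.indicator (Ioc t n) h x)
        = Set.indicator (Ioc t n) (fun y => h y * (μ y * Ef y)) := by
      funext x
      by_cases hx : x ∈ Ioc t n
      · simp only [Set.indicator_of_mem hx, NNReal.smul_def,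
          Real.coe_toNNReal _ (hg_nonneg x), smul_eq_mul]
        ring
      · simp [Set.indicator_of_notMem hx]
    rw [step2, integral_indicator measurableSet_Ioc, ← intervalIntegral.integral_of_le htn]
  -- ### the expectation of Y t
  have hB2val : (∫ ω, (if n < T ω then c1 else 0) ∂P) = c1 * Ef n := by
    have hind : (fun ω => if n < T ω then c1 else 0)
        = Set.indicator {ω | n < T ω} (fun _ => c1) := by
      funext ω; by_cases hω : n < T ω <;> simp [Set.indicator, hω]
    rw [hind, integral_indicator (hmeasIoi n), setIntegral_const, measureReal_def, hPT n,
      ENNReal.toReal_ofReal (hEfpos n).le, smul_eq_mul, mul_comm]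
  have hi1' : IntervalIntegrable (fun x => q x * (μ x * Ef x)) volume t n :=
    (hqcont.mul hgcont).intervalIntegrable t n
  have hi2' : IntervalIntegrable (fun x => (v x / v t) * S x * (μ x * Ef x)) volume t n :=
    (((hvcont.div_const _).mul hS).mul hgcont).intervalIntegrable t n
  have hi3' : IntervalIntegrable (fun x => (v x / v t) * Prem x * Ef x) volume t n :=
    (hGcont.mul hEfcont).intervalIntegrable t n
  have hsplit2 : (∫ x in t..n, h1f x * (μ x * Ef x))
      = (∫ x in t..n, (v x / v t) * S x * (μ x * Ef x))
        - ∫ x in t..n, q x * (μ x * Ef x) := by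
    rw [← intervalIntegral.integral_sub hi2' hi1']
    apply intervalIntegral.integral_congr
    intro x _
    simp only [hh1def]; ring
  have hparts : (∫ x in t..n, q x * (μ x * Ef x))
      = -(q n * Ef n) + ∫ x in t..n, (v x / v t) * Prem x * Ef x := by
    have hderiv : ∀ x ∈ uIcc t n, HasDerivAt (fun y => -(q y * Ef y))
        (q x * (μ x * Ef x) - (v x / v t) * Prem x * Ef x) x := by
      intro x _
      have h := ((hqderiv x).mul (hEfderiv x)).neg
      refine h.congr_deriv ?_
      ring
    have hint : IntervalIntegrable
        (fun x => q x * (μ x * Ef x) - (v x / v t) * Prem x * Ef x) volume t n :=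
      hi1'.sub hi3'
    have h2 := intervalIntegral.integral_eq_sub_of_hasDerivAt hderiv hint
    rw [intervalIntegral.integral_sub hi1' hi3'] at h2
    rw [hq_t] at h2
    simp only [zero_mul, neg_zero, sub_zero] at h2
    linarith
  have hODE : v t * V t * Ef t = v n * Sbar * Ef n
      + ∫ x in t..n, v x * (μ x * S x - Prem x) * Ef x := by
    have hderiv : ∀ x ∈ uIcc t n, HasDerivAt (fun y => -(v y * V y * Ef y))
        (v x * (μ x * S x - Prem x) * Ef x) x := by
      intro x hx
      rw [uIcc_of_le htn] at hx
      have hx0n : x ∈ Icc 0 n := ⟨ht0.trans hx.1, hx.2⟩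
      have h := (((hvderiv x).mul (hV x hx0n)).mul (hEfderiv x)).neg
      refine h.congr_deriv ?_
      simp only [Pi.mul_apply]
      ring
    have hint : IntervalIntegrable (fun x => v x * (μ x * S x - Prem x) * Ef x) volume t n :=
      ((hvcont.mul ((hμ.mul hS).sub hPrem)).mul hEfcont).intervalIntegrable t n
    have h2 := intervalIntegral.integral_eq_sub_of_hasDerivAt hderiv hint
    rw [hVn] at h2
    linarith
  have hI23 : (∫ x in t..n, (v x / v t) * S x * (μ x * Ef x))
      - (∫ x in t..n, (v x / v t) * Prem x * Ef x)
      = (v t)⁻¹ * ∫ x in t..n, v x * (μ x * S x - Prem x) * Ef x := by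
    rw [← intervalIntegral.integral_const_mul, ← intervalIntegral.integral_sub hi2' hi3']
    apply intervalIntegral.integral_congr
    intro x _
    field_simp
  have hEY : ∫ ω, Y t ω ∂P = V t * Ef t := by
    have h1sum : ∫ ω, Y t ω ∂P
        = (∫ ω, (if t < T ω ∧ T ω ≤ n then h1f (T ω) else 0) ∂P)
          + ∫ ω, (if n < T ω then c1 else 0) ∂P := by
      rw [← integral_add hB1int hB2int]
      exact integral_congr_ae (ae_of_all _ hYΨ)
    have e1 : ∫ ω, Y t ω ∂P = (∫ x in t..n, (v x / v t) * S x * (μ x * Ef x))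
        - (∫ x in t..n, (v x / v t) * Prem x * Ef x) + (v n / v t) * Sbar * Ef n := by
      rw [h1sum, hKEY h1f hh1cont, hB2val, hsplit2, hparts]
      simp only [hc1def]
      ring
    rw [e1, hI23]
    have e2 : (∫ x in t..n, v x * (μ x * S x - Prem x) * Ef x)
        = v t * V t * Ef t - v n * Sbar * Ef n := by linarith
    rw [e2]
    field_simp
    ring
  -- ### the integral of the candidate conditional expectation
  have hfmeas0 : Measurable (fun ω => (if t < T ω then (1:ℝ) else 0) * V t) :=
    (Measurable.ite (hmeasIoi t) measurable_const measurable_const).mul_const _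
  have hfint : Integrable (fun ω => (if t < T ω then (1:ℝ) else 0) * V t) P := by
    refine (integrable_const |V t|).mono' hfmeas0.aestronglyMeasurable
      (ae_of_all _ fun ω => ?_)
    by_cases hω : t < T ω
    · rw [if_pos hω, one_mul]; exact le_of_eq (Real.norm_eq_abs _)
    · rw [if_neg hω, zero_mul, norm_zero]; exact abs_nonneg _
  have hEf' : (∫ ω, (if t < T ω then (1:ℝ) else 0) * V t ∂P) = V t * Ef t := by
    have hind : (fun ω => (if t < T ω then (1:ℝ) else 0) * V t)
        = Set.indicator {ω | t < T ω} (fun _ => V t) := by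
      funext ω; by_cases hω : t < T ω <;> simp [Set.indicator, hω]
    rw [hind, integral_indicator (hmeasIoi t), setIntegral_const, measureReal_def, hPT t,
      ENNReal.toReal_ofReal (hEfpos t).le, smul_eq_mul, mul_comm]
  have hIntY : Integrable (Y t) P :=
    (hB1int.add hB2int).congr (ae_of_all _ fun ω => (hYΨ ω).symm)
  -- ### description of the filtration σ-algebra
  set pi : Set (Set Ω) := {A | ∃ s ≤ t, A = {ω | T ω ≤ s}} with hpidef
  have hgen : (ℱ t : MeasurableSpace Ω) = MeasurableSpace.generateFrom pi := by
    rw [hℱ t]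
    apply le_antisymm
    · refine iSup₂_le fun s hs => ?_
      refine Measurable.comap_le ?_
      refine Measurable.ite ?_ measurable_const measurable_const
      exact MeasurableSpace.measurableSet_generateFrom ⟨s, hs, rfl⟩
    · refine MeasurableSpace.generateFrom_le fun A hA => ?_
      obtain ⟨s, hs, rfl⟩ := hA
      have h1 : MeasurableSet[MeasurableSpace.comap
          (fun ω => if T ω ≤ s then (1:ℝ) else 0) inferInstance] {ω | T ω ≤ s} := by
        refine ⟨{1}, measurableSet_singleton 1, ?_⟩
        ext ω; by_cases h : T ω ≤ s <;> simp [h]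
      exact (le_iSup₂ (f := fun (s : ℝ) (_ : s ∈ Iic t) => MeasurableSpace.comap
        (fun ω => if T ω ≤ s then (1:ℝ) else 0) inferInstance) s hs) _ h1
  have hpisys : IsPiSystem pi := by
    rintro A ⟨s1, hs1, rfl⟩ B ⟨s2, hs2, rfl⟩ -
    exact ⟨min s1 s2, (min_le_left _ _).trans hs1, by ext ω; simp [le_min_iff]⟩
  -- ### equality of set integrals on the filtration
  have hEuniv : ∫ ω, Y t ω ∂P = ∫ ω, (if t < T ω then (1:ℝ) else 0) * V t ∂P := by
    rw [hEY, hEf']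
  have hsets : ∀ A : Set Ω, MeasurableSet[(ℱ t : MeasurableSpace Ω)] A →
      (∫ ω in A, Y t ω ∂P) = ∫ ω in A, (if t < T ω then (1:ℝ) else 0) * V t ∂P := by
    intro A hA
    rw [hgen] at hA
    refine MeasurableSpace.induction_on_inter (m := MeasurableSpace.generateFrom pi) (s := pi)
      (C := fun A _ => (∫ ω in A, Y t ω ∂P) = ∫ ω in A, (if t < T ω then (1:ℝ) else 0) * V t ∂P)
      rfl hpisys ?_ ?_ ?_ ?_ _ hA
    · simp
    · rintro A ⟨s, hs, rfl⟩
      rw [setIntegral_eq_zero_of_forall_eq_zero, setIntegral_eq_zero_of_forall_eq_zero]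
      · intro ω hω
        have h1 : ¬ t < T ω := not_lt.mpr (le_trans hω hs)
        rw [if_neg h1, zero_mul]
      · intro ω hω
        have h1 : ¬ t < T ω := not_lt.mpr (le_trans hω hs)
        have h2 : ¬ n < T ω := not_lt.mpr (le_trans hω (hs.trans htn))
        rw [hYΨ ω, if_neg (fun hc => h1 hc.1), if_neg h2, add_zero]
    · intro A hAmeas hCA
      have hAm0 : MeasurableSet A := (ℱ.le t) A (hgen ▸ hAmeas)
      have e1 := integral_add_compl hAm0 hIntY
      have e2 := integral_add_compl hAm0 hfint
      linarith [hEuniv]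
    · intro F hdisj hFmeas hCF
      have hFm0 : ∀ i, MeasurableSet (F i) := fun i => (ℱ.le t) _ (hgen ▸ hFmeas i)
      rw [integral_iUnion hFm0 hdisj hIntY.integrableOn,
        integral_iUnion hFm0 hdisj hfint.integrableOn]
      exact tsum_congr hCF
  -- ### the candidate is measurable for ℱ t
  have hTtℱ : MeasurableSet[(ℱ t : MeasurableSpace Ω)] {ω | t < T ω} := by
    have h1 : MeasurableSet[(ℱ t : MeasurableSpace Ω)] {ω | T ω ≤ t} := by
      rw [hgen]; exact MeasurableSpace.measurableSet_generateFrom ⟨t, le_rfl, rfl⟩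
    have h2 := h1.compl
    have h3 : {ω | T ω ≤ t}ᶜ = {ω | t < T ω} := by ext ω; simp [not_le]
    rwa [h3] at h2
  have hfsm : StronglyMeasurable[(ℱ t : MeasurableSpace Ω)]
      (fun ω => (if t < T ω then (1:ℝ) else 0) * V t) := by
    refine Measurable.stronglyMeasurable ?_
    exact (Measurable.ite hTtℱ measurable_const measurable_const).mul_const _
  -- ### conclusion
  exact ae_eq_condExp_of_forall_setIntegral_eq (ℱ.le t) hIntY
    (fun A hA _ => hfint.integrableOn)
    (fun A hA _ => (hsets A hA).symm)
    ⟨_, hfsm, EventuallyEq.rfl⟩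
end

section
/- Under the single-life model with hazard μ and discount v(t) = exp(-∫₀ᵗδ), if W solves Thiele's equation W'(t) = δ(t)W(t) + P(t) - μ(t)(S(t)-W(t)) with W(0)=0, then W(t) = φ(t)⁻¹ · E[ ∫₀ᵗ v(r) dB(r) ], where φ(t) = v(t)·exp(-∫₀ᵗμ) and dB(r) = 1_{T>r}P(r)dr - S(r)dN(r). -/
open MeasureTheory Set Filter Topology
open scoped ENNReal NNReal

/-- The accumulation (retrospective reserve) as a scaled expectation of
discounted past cashflows: `W(t) = φ(t)⁻¹ · E[∫₀ᵗ v(r) dB(r)]`. -/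
theorem accumulation_as_scaled_expectation
    {Ω : Type*} [m0 : MeasurableSpace Ω] (P : Measure Ω) [IsProbabilityMeasure P]
    (n : ℝ) (hn : 0 < n)
    (T : Ω → ℝ) (hT : Measurable T) (hTnn : ∀ ω, 0 ≤ T ω)
    (δ μ Prem S W : ℝ → ℝ)
    (hδ : Continuous δ) (hμ : Continuous μ)
    (hPrem : Continuous Prem) (hS : Continuous S)
    -- under P, T has hazard rate μ
    (hTlaw : ∀ t : ℝ, P {ω | t < T ω}
      = ENNReal.ofReal (Real.exp (-(∫ r in (0:ℝ)..t, μ r))))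
    (v p φ : ℝ → ℝ)
    (hv : ∀ t, v t = Real.exp (-(∫ r in (0:ℝ)..t, δ r)))
    (hp : ∀ t, p t = Real.exp (-(∫ r in (0:ℝ)..t, μ r)))
    (hφ : ∀ t, φ t = v t * p t)
    -- W solves Thiele's equation with W(0) = 0
    (hW : ∀ t ∈ Icc (0:ℝ) n,
      HasDerivAt W (δ t * W t + Prem t - μ t * (S t - W t)) t)
    (hW0 : W 0 = 0) :
    ∀ t ∈ Icc (0:ℝ) n,
      W t = (φ t)⁻¹ *
        ∫ ω, ((∫ r in (0:ℝ)..t, v r * (if r < T ω then Prem r else 0))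
          - (if 0 < T ω ∧ T ω ≤ t then v (T ω) * S (T ω) else 0)) ∂P := by
  -- derivatives of the primitives
  have hq : ∀ s : ℝ, HasDerivAt (fun u => ∫ r in (0:ℝ)..u, μ r) (μ s) s :=
    fun s => (hμ.integral_hasStrictDerivAt 0 s).hasDerivAt
  have hqv : ∀ s : ℝ, HasDerivAt (fun u => ∫ r in (0:ℝ)..u, δ r) (δ s) s :=
    fun s => (hδ.integral_hasStrictDerivAt 0 s).hasDerivAt
  have hpfun : p = fun u => Real.exp (-(∫ r in (0:ℝ)..u, μ r)) := funext hp
  have hvfun : v = fun u => Real.exp (-(∫ r in (0:ℝ)..u, δ r)) := funext hv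
  have hp' : ∀ s, HasDerivAt p (-μ s * p s) s := by
    intro s
    rw [hpfun]
    have h := ((hq s).neg).exp
    convert h using 1
    · rfl
    simp only [Pi.neg_apply]
    ring
  have hv' : ∀ s, HasDerivAt v (-δ s * v s) s := by
    intro s
    rw [hvfun]
    have h := ((hqv s).neg).exp
    convert h using 1
    · rfl
    simp only [Pi.neg_apply]
    ring
  have hppos : ∀ s, 0 < p s := fun s => by rw [hp]; exact Real.exp_pos _
  have hvpos : ∀ s, 0 < v s := fun s => by rw [hv]; exact Real.exp_pos _
  have hpc : Continuous p :=
    (Differentiable.continuous (fun s => (hp' s).differentiableAt))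
  have hvc : Continuous v :=
    (Differentiable.continuous (fun s => (hv' s).differentiableAt))
  have hp0 : p 0 = 1 := by rw [hp]; simp
  -- monotonicity of the cumulative hazard
  have hqmono : Monotone (fun u => ∫ r in (0:ℝ)..u, μ r) := by
    intro s u hsu
    have h1 : P {ω | u < T ω} ≤ P {ω | s < T ω} :=
      measure_mono fun ω hw => lt_of_le_of_lt hsu hw
    rw [hTlaw, hTlaw] at h1
    have h2 := (ENNReal.ofReal_le_ofReal_iff (Real.exp_pos _).le).1 h1
    have h3 := Real.exp_le_exp.1 h2
    linarith
  -- nonnegativity of the hazard rate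
  have hμnn : ∀ s : ℝ, 0 ≤ μ s := by
    intro s
    have h1 : Tendsto (slope (fun u => ∫ r in (0:ℝ)..u, μ r) s) (𝓝[>] s) (𝓝 (μ s)) :=
      (hasDerivAt_iff_tendsto_slope.1 (hq s)).mono_left
        (nhdsWithin_mono _ fun x hx => ne_of_gt hx)
    refine ge_of_tendsto h1 ?_
    filter_upwards [self_mem_nhdsWithin] with x hx
    rw [slope_def_field]
    have hx' : s < x := hx
    exact div_nonneg (sub_nonneg.2 (hqmono hx'.le)) (sub_nonneg.2 hx'.le)
  -- the density measure
  haveI hPT : IsProbabilityMeasure (P.map T) := Measure.isProbabilityMeasure_map hT.aemeasurable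
  set d : ℝ → NNReal := fun r => if 0 < r then Real.toNNReal (μ r * p r) else 0 with hd_def
  have hd_meas : Measurable d := by
    refine Measurable.ite ?_ (measurable_real_toNNReal.comp (hμ.mul hpc).measurable)
      measurable_const
    exact measurableSet_Ioi
  set θ : Measure ℝ := volume.withDensity (fun r => (d r : ℝ≥0∞)) with hθ_def
  -- FTC for μ·p
  have hFTCmp : ∀ a : ℝ, ∫ r in (0:ℝ)..a, μ r * p r = 1 - p a := by
    intro a
    have h1 : ∀ u ∈ uIcc (0:ℝ) a, HasDerivAt (fun x => -p x) (μ u * p u) u := by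
      intro u _
      have h := (hp' u).neg
      refine h.congr_deriv ?_
      ring
    have h2 := intervalIntegral.integral_eq_sub_of_hasDerivAt h1
      ((hμ.mul hpc).intervalIntegrable _ _)
    rw [h2, hp0]; ring
  -- the law of T
  have key : P.map T = θ := by
    refine Measure.ext_of_Iic (P.map T) θ fun a => ?_
    rw [Measure.map_apply hT measurableSet_Iic, hθ_def, withDensity_apply _ measurableSet_Iic]
    rcases lt_or_ge a 0 with ha | ha
    · have hL : T ⁻¹' Iic a = ∅ := by
        ext ω
        simp only [mem_preimage, mem_Iic, mem_empty_iff_false, iff_false, not_le]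
        exact lt_of_lt_of_le ha (hTnn ω)
      rw [hL, measure_empty]
      symm
      calc ∫⁻ r in Iic a, (d r : ℝ≥0∞) = ∫⁻ _ in Iic a, 0 := by
            refine setLIntegral_congr_fun measurableSet_Iic (fun r hr => ?_)
            have : ¬ (0:ℝ) < r := not_lt.2 (le_trans hr ha.le)
            simp [hd_def, this]
        _ = 0 := lintegral_zero
    · have hLHS : P (T ⁻¹' Iic a) = 1 - ENNReal.ofReal (p a) := by
        have hset : T ⁻¹' Iic a = {ω | a < T ω}ᶜ := by
          ext ω; simp [not_lt]
        rw [hset, prob_compl_eq_one_sub (show MeasurableSet {ω | a < T ω} from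
          hT measurableSet_Ioi), hTlaw, ← hp]
      have hRHS : ∫⁻ r in Iic a, (d r : ℝ≥0∞) = ENNReal.ofReal (1 - p a) := by
        have e1 : ∀ r : ℝ, (d r : ℝ≥0∞)
            = (Ioi (0:ℝ)).indicator (fun r => ENNReal.ofReal (μ r * p r)) r := by
          intro r
          by_cases h : 0 < r <;> simp [hd_def, h, indicator_apply, ENNReal.ofReal]
        simp_rw [e1]
        rw [lintegral_indicator measurableSet_Ioi, Measure.restrict_restrict measurableSet_Ioi,
          Ioi_inter_Iic]
        rw [← ofReal_integral_eq_lintegral_ofReal (f := fun r => μ r * p r) ((hμ.mul hpc).integrableOn_Ioc)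
          (ae_of_all _ fun r => mul_nonneg (hμnn r) (hppos r).le)]
        congr 1
        have := hFTCmp a
        rwa [intervalIntegral.integral_of_le ha] at this
      rw [hLHS, hRHS, ENNReal.ofReal_sub 1 (hppos a).le, ENNReal.ofReal_one]
  -- main computation for fixed t
  intro t ht
  obtain ⟨ht0, htn⟩ := ht
  set g : ℝ → ℝ := fun r => v r * S r with hg_def
  have hgm : Measurable fun r => (Ioc (0:ℝ) t).indicator g r :=
    ((hvc.mul hS).measurable).indicator measurableSet_Ioc
  have e1B : ∀ ω, (if 0 < T ω ∧ T ω ≤ t then v (T ω) * S (T ω) else 0)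
      = (Ioc (0:ℝ) t).indicator g (T ω) := by
    intro ω; simp [indicator_apply, mem_Ioc, hg_def]
  -- death benefit term
  have hB' : ∫ ω, (Ioc (0:ℝ) t).indicator g (T ω) ∂P
      = ∫ r in (0:ℝ)..t, v r * S r * (μ r * p r) := by
    calc ∫ ω, (Ioc (0:ℝ) t).indicator g (T ω) ∂P
        = ∫ x, (Ioc (0:ℝ) t).indicator g x ∂(P.map T) :=
          (integral_map hT.aemeasurable hgm.aestronglyMeasurable).symm
      _ = ∫ x in Ioc (0:ℝ) t, g x ∂θ := by
          rw [key, integral_indicator measurableSet_Ioc]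
      _ = ∫ x in Ioc (0:ℝ) t, (d x : ℝ) • g x := by
          rw [hθ_def]
          exact setIntegral_withDensity_eq_setIntegral_smul hd_meas g measurableSet_Ioc
      _ = ∫ x in Ioc (0:ℝ) t, v x * S x * (μ x * p x) := by
          refine setIntegral_congr_fun measurableSet_Ioc fun x hx => ?_
          have hdx : (d x : ℝ) = μ x * p x := by
            simp [hd_def, hx.1, Real.coe_toNNReal _ (mul_nonneg (hμnn x) (hppos x).le)]
          rw [smul_eq_mul, hdx, hg_def]; ring
      _ = ∫ r in (0:ℝ)..t, v r * S r * (μ r * p r) :=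
          (intervalIntegral.integral_of_le ht0).symm
  -- premium term via Fubini
  set A : Set (Ω × ℝ) := {z : Ω × ℝ | z.2 < T z.1} ∩ (Prod.snd ⁻¹' Ioc (0:ℝ) t) with hA_def
  have hA_meas : MeasurableSet A :=
    (measurableSet_lt measurable_snd (hT.comp measurable_fst)).inter
      (measurable_snd measurableSet_Ioc)
  set k : Ω × ℝ → ℝ := A.indicator (fun z => v z.2 * Prem z.2) with hk_def
  have hk_meas : Measurable k :=
    (((hvc.mul hPrem).measurable).comp measurable_snd).indicator hA_meas
  obtain ⟨M, hM⟩ := (isCompact_Icc (a := (0:ℝ)) (b := n)).exists_bound_of_continuousOn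
    ((hvc.mul hPrem).continuousOn)
  have hM0 : 0 ≤ M := le_trans (norm_nonneg _) (hM 0 ⟨le_refl 0, hn.le⟩)
  haveI : IsFiniteMeasure (volume.restrict (Ioc (0:ℝ) t)) :=
    ⟨by rw [Measure.restrict_apply_univ]; exact measure_Ioc_lt_top⟩
  have hk_int : Integrable k (P.prod (volume.restrict (Ioc (0:ℝ) t))) := by
    refine Integrable.mono' (integrable_const M) hk_meas.aestronglyMeasurable
      (ae_of_all _ fun z => ?_)
    rw [hk_def]
    by_cases hz : z ∈ A
    · rw [indicator_of_mem hz]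
      exact hM z.2 ⟨hz.2.1.le, hz.2.2.trans htn⟩
    · rw [indicator_of_notMem hz]
      simpa using hM0
  have hA_inner : ∀ ω, (∫ r in (0:ℝ)..t, v r * (if r < T ω then Prem r else 0))
      = ∫ r in Ioc (0:ℝ) t, k (ω, r) := by
    intro ω
    rw [intervalIntegral.integral_of_le ht0]
    refine setIntegral_congr_fun measurableSet_Ioc fun r hr => ?_
    rw [hk_def]
    by_cases h : r < T ω
    · rw [indicator_of_mem (show (ω, r) ∈ A from ⟨h, hr⟩)]
      simp [h]
    · rw [indicator_of_notMem (show (ω, r) ∉ A from fun hc => h hc.1)]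
      simp [h]
  have hA_int : Integrable (fun ω => ∫ r in Ioc (0:ℝ) t, k (ω, r)) P :=
    hk_int.integral_prod_left
  have hA' : ∫ ω, (∫ r in Ioc (0:ℝ) t, k (ω, r)) ∂P
      = ∫ r in (0:ℝ)..t, v r * Prem r * p r := by
    have hswap : ∫ ω, (∫ r in Ioc (0:ℝ) t, k (ω, r)) ∂P
        = ∫ r in Ioc (0:ℝ) t, (∫ ω, k (ω, r) ∂P) := integral_integral_swap hk_int
    rw [hswap]
    calc ∫ r in Ioc (0:ℝ) t, (∫ ω, k (ω, r) ∂P)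
        = ∫ r in Ioc (0:ℝ) t, v r * Prem r * p r := by
          refine setIntegral_congr_fun measurableSet_Ioc fun r hr => ?_
          have e1 : ∀ ω, k (ω, r) = ({ω | r < T ω}).indicator (fun _ => v r * Prem r) ω := by
            intro ω
            rw [hk_def]
            by_cases h : r < T ω
            · rw [indicator_of_mem (show (ω, r) ∈ A from ⟨h, hr⟩),
                indicator_of_mem (show ω ∈ {ω | r < T ω} from h)]
            · rw [indicator_of_notMem (show (ω, r) ∉ A from fun hc => h hc.1),
                indicator_of_notMem (show ω ∉ {ω | r < T ω} from h)]
          simp_rw [e1]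
          rw [integral_indicator_const (v r * Prem r)
            (show MeasurableSet {ω | r < T ω} from hT measurableSet_Ioi)]
          rw [measureReal_def, hTlaw, ENNReal.toReal_ofReal (Real.exp_pos _).le, ← hp, smul_eq_mul]
          ring
      _ = ∫ r in (0:ℝ)..t, v r * Prem r * p r := (intervalIntegral.integral_of_le ht0).symm
  -- integrability of the death benefit term
  obtain ⟨M2, hM2⟩ := (isCompact_Icc (a := (0:ℝ)) (b := n)).exists_bound_of_continuousOn
    ((hvc.mul hS).continuousOn)
  have hM20 : 0 ≤ M2 := le_trans (norm_nonneg _) (hM2 0 ⟨le_refl 0, hn.le⟩)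
  have hB_int : Integrable (fun ω => (Ioc (0:ℝ) t).indicator g (T ω)) P := by
    refine Integrable.mono' (integrable_const M2) ((hgm.comp hT)).aestronglyMeasurable
      (ae_of_all _ fun ω => ?_)
    by_cases h : T ω ∈ Ioc (0:ℝ) t
    · rw [indicator_of_mem h]
      exact hM2 (T ω) ⟨h.1.le, h.2.trans htn⟩
    · rw [indicator_of_notMem h]
      simpa using hM20
  -- splitting the expectation
  have hsplit : ∫ ω, ((∫ r in (0:ℝ)..t, v r * (if r < T ω then Prem r else 0))
      - (if 0 < T ω ∧ T ω ≤ t then v (T ω) * S (T ω) else 0)) ∂P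
      = (∫ r in (0:ℝ)..t, v r * Prem r * p r)
        - ∫ r in (0:ℝ)..t, v r * S r * (μ r * p r) := by
    have e : ∀ ω, (∫ r in (0:ℝ)..t, v r * (if r < T ω then Prem r else 0))
        - (if 0 < T ω ∧ T ω ≤ t then v (T ω) * S (T ω) else 0)
        = (∫ r in Ioc (0:ℝ) t, k (ω, r)) - (Ioc (0:ℝ) t).indicator g (T ω) := by
      intro ω; rw [hA_inner ω, e1B ω]
    rw [integral_congr_ae (ae_of_all _ e), integral_sub hA_int hB_int, hA', hB']
  -- FTC for φ·W
  have hFW : φ t * W t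
      = ∫ r in (0:ℝ)..t, (v r * Prem r * p r - v r * S r * (μ r * p r)) := by
    have hφfun : φ = fun s => v s * p s := funext hφ
    have hder : ∀ u ∈ uIcc (0:ℝ) t, HasDerivAt (fun s => φ s * W s)
        (v u * Prem u * p u - v u * S u * (μ u * p u)) u := by
      intro u hu
      rw [uIcc_of_le ht0] at hu
      have hWu := hW u ⟨hu.1, hu.2.trans htn⟩
      have hφu : HasDerivAt φ (-δ u * v u * p u + v u * (-μ u * p u)) u := by
        rw [hφfun]
        exact (hv' u).mul (hp' u)
      have h := hφu.mul hWu
      refine h.congr_deriv ?_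
      rw [hφ u]
      ring
    have hcont : Continuous (fun r => v r * Prem r * p r - v r * S r * (μ r * p r)) :=
      ((hvc.mul hPrem).mul hpc).sub ((hvc.mul hS).mul (hμ.mul hpc))
    have h := intervalIntegral.integral_eq_sub_of_hasDerivAt hder
      (hcont.intervalIntegrable _ _)
    rw [h, hW0, mul_zero, sub_zero]
  have hφt : φ t ≠ 0 := by
    rw [hφ]
    exact (mul_pos (hvpos t) (hppos t)).ne'
  rw [hsplit, ← intervalIntegral.integral_sub (f := fun r => v r * Prem r * p r)
    (g := fun r => v r * S r * (μ r * p r)) (((hvc.mul hPrem).mul hpc).intervalIntegrable _ _)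
    (((hvc.mul hS).mul (hμ.mul hpc)).intervalIntegrable _ _), ← hFW,
    inv_mul_cancel_left₀ hφt]
end

section
/- Let V solve Thiele's equation on basis (δ,μ) with V(n)=S̄, let v(t)=exp(-∫₀ᵗδ), M(t)=N(t)-∫₀ᵗ1_{T>r}μ(r)dr, and define the stochastic surplus Θ(t) = ∫₀ᵗ (v(r)/v(t)) dB(r) - 1_{T>t}V(t). Then dΘ(t) = δ(t)Θ(t)dt - (S(t)-V(t))dM(t); equivalently, the discounted surplus satisfies d(v(t)Θ(t)) = -v(t)(S(t)-V(t))dM(t). -/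
open MeasureTheory Set

/-- Surplus dynamics with a single technical basis, in integrated form:
`Θ(t) - Θ(0) = ∫₀ᵗ δ Θ dr - ∫₀ᵗ (S-V) dM`, and equivalently for the discounted
surplus, `v(t)Θ(t) - v(0)Θ(0) = -∫₀ᵗ v (S-V) dM`, where the stochastic integral
against `M = N - ∫ 1_{T>r} μ dr` is written out pathwise for the single-jump
counting process `N(t) = 1_{T ≤ t}`. -/
theorem single_basis_surplus_dynamics
    {Ω : Type*} (n Sbar : ℝ) (hn : 0 < n)
    (T : Ω → ℝ) (hTnn : ∀ ω, 0 ≤ T ω)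
    (δ μ Prem S V : ℝ → ℝ)
    (hδ : Continuous δ) (hμ : Continuous μ)
    (hPrem : Continuous Prem) (hS : Continuous S)
    (v : ℝ → ℝ) (hv : ∀ t, v t = Real.exp (-(∫ r in (0:ℝ)..t, δ r)))
    -- V solves Thiele's equation with V(n) = S̄
    (hV : ∀ t ∈ Icc (0:ℝ) n,
      HasDerivAt V (δ t * V t + Prem t - μ t * (S t - V t)) t)
    (hVn : V n = Sbar)
    -- stochastic surplus Θ(t) = ∫₀ᵗ (v r / v t) dB(r) - 1_{T>t} V(t)
    (Θ : ℝ → Ω → ℝ)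
    (hΘ : ∀ t ω, Θ t ω =
      (∫ r in (0:ℝ)..t, (v r / v t) * (if r < T ω then Prem r else 0))
      - (if 0 < T ω ∧ T ω ≤ t then (v (T ω) / v t) * S (T ω) else 0)
      - (if t < T ω then V t else 0)) :
    ∀ ω, ∀ t ∈ Icc (0:ℝ) n,
      (Θ t ω - Θ 0 ω =
        (∫ r in (0:ℝ)..t, δ r * Θ r ω)
        - ((if 0 < T ω ∧ T ω ≤ t then S (T ω) - V (T ω) else 0)
            - ∫ r in (0:ℝ)..t, (if r < T ω then (S r - V r) * μ r else 0)))
      ∧ (v t * Θ t ω - v 0 * Θ 0 ω =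
        -((if 0 < T ω ∧ T ω ≤ t then v (T ω) * (S (T ω) - V (T ω)) else 0)
            - ∫ r in (0:ℝ)..t, (if r < T ω then v r * (S r - V r) * μ r else 0))) := by
  -- basic facts about v
  have hvpos : ∀ s, 0 < v s := fun s => (hv s).symm ▸ Real.exp_pos _
  have hvne : ∀ s, v s ≠ 0 := fun s => (hvpos s).ne'
  have hv0 : v 0 = 1 := by rw [hv 0]; simp
  have hvD : ∀ s, HasDerivAt v (-δ s * v s) s := by
    intro s
    have h1 : HasDerivAt (fun u => ∫ r in (0:ℝ)..u, δ r) (δ s) s :=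
      intervalIntegral.integral_hasDerivAt_right (hδ.intervalIntegrable 0 s)
        (hδ.stronglyMeasurableAtFilter volume (nhds s)) hδ.continuousAt
    have h2 := (h1.neg).exp
    have h3 : v = fun u => Real.exp (-(∫ r in (0:ℝ)..u, δ r)) := funext hv
    rw [show (-δ s * v s) = Real.exp (-(∫ r in (0:ℝ)..s, δ r)) * -δ s by
      rw [← hv s]; ring, h3]
    exact h2
  have hvc : Continuous v := continuous_iff_continuousAt.mpr fun s => (hvD s).continuousAt
  have hVcont : ContinuousOn V (Icc 0 n) := fun x hx => (hV x hx).continuousAt.continuousWithinAt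
  have hne : ∀ c : ℝ, ∀ᵐ x : ℝ, x ≠ c := by
    intro c
    rw [ae_iff]
    have : {x : ℝ | ¬ x ≠ c} = {c} := by ext x; simp
    rw [this]
    exact Real.volume_singleton
  have hzero : ∀ (f : ℝ → ℝ) (a b : ℝ), (∀ x ∈ uIcc a b, f x = 0) → (∫ r in a..b, f r) = 0 := by
    intro f a b h
    rw [intervalIntegral.integral_congr (g := fun _ => (0:ℝ)) h]
    simp
  -- primitive of v * Prem
  set P : ℝ → ℝ := fun s => ∫ r in (0:ℝ)..s, v r * Prem r with hPdef
  have hPD : ∀ s, HasDerivAt P (v s * Prem s) s := fun s =>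
    intervalIntegral.integral_hasDerivAt_right ((hvc.mul hPrem).intervalIntegrable 0 s)
      ((hvc.mul hPrem).stronglyMeasurableAtFilter volume (nhds s)) (hvc.mul hPrem).continuousAt
  have hPc : Continuous P := continuous_iff_continuousAt.mpr fun s => (hPD s).continuousAt
  have hP0 : P 0 = 0 := intervalIntegral.integral_same
  -- FTC for v * V
  have keyA : ∀ s, s ∈ Icc (0:ℝ) n →
      v s * V s - V 0 = ∫ r in (0:ℝ)..s, v r * (Prem r - μ r * (S r - V r)) := by
    intro s hs
    have hsub : uIcc (0:ℝ) s ⊆ Icc 0 n := by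
      rw [uIcc_of_le hs.1]; exact Icc_subset_Icc le_rfl hs.2
    have hderiv : ∀ r ∈ uIcc (0:ℝ) s,
        HasDerivAt (fun x => v x * V x) (v r * (Prem r - μ r * (S r - V r))) r := by
      intro r hr
      have h : HasDerivAt (fun x => v x * V x) _ r := (hvD r).mul (hV r (hsub hr))
      convert h using 1; ring
    have hint : IntervalIntegrable (fun r => v r * (Prem r - μ r * (S r - V r))) volume 0 s :=
      ContinuousOn.intervalIntegrable
        (hvc.continuousOn.mul (hPrem.continuousOn.sub
          (hμ.continuousOn.mul (hS.continuousOn.sub (hVcont.mono hsub)))))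
    have h := intervalIntegral.integral_eq_sub_of_hasDerivAt hderiv hint
    rw [h, hv0]
    ring
  have hsubKey : ∀ s, s ∈ Icc (0:ℝ) n →
      (∫ r in (0:ℝ)..s, v r * (Prem r - μ r * (S r - V r)))
        = P s - ∫ r in (0:ℝ)..s, v r * (S r - V r) * μ r := by
    intro s hs
    have hsub : uIcc (0:ℝ) s ⊆ Icc 0 n := by
      rw [uIcc_of_le hs.1]; exact Icc_subset_Icc le_rfl hs.2
    have h1 : IntervalIntegrable (fun r => v r * Prem r) volume 0 s :=
      (hvc.mul hPrem).intervalIntegrable 0 s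
    have h2 : IntervalIntegrable (fun r => v r * (S r - V r) * μ r) volume 0 s :=
      ContinuousOn.intervalIntegrable
        ((hvc.continuousOn.mul (hS.continuousOn.sub (hVcont.mono hsub))).mul hμ.continuousOn)
    simp only [hPdef]
    rw [← intervalIntegral.integral_sub h1 h2]
    apply intervalIntegral.integral_congr
    intro r _
    show v r * (Prem r - μ r * (S r - V r)) = v r * Prem r - v r * (S r - V r) * μ r
    ring
  -- the function G describing Θ before death
  set G : ℝ → ℝ := fun s => P s / v s - V s with hGdef
  have hGc : ContinuousOn G (Icc 0 n) := ((hPc.div hvc hvne).continuousOn).sub hVcont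
  have hG0 : G 0 = -V 0 := by rw [hGdef]; simp [hP0, hv0]
  have hGD : ∀ s ∈ Icc (0:ℝ) n, HasDerivAt G (δ s * G s + μ s * (S s - V s)) s := by
    intro s hs
    have h1 : HasDerivAt (fun x => P x / v x)
        ((v s * Prem s * v s - P s * (-δ s * v s)) / v s ^ 2) s :=
      (hPD s).div (hvD s) (hvne s)
    have h2 : HasDerivAt G
        ((v s * Prem s * v s - P s * (-δ s * v s)) / v s ^ 2
          - (δ s * V s + Prem s - μ s * (S s - V s))) s := h1.sub (hV s hs)
    convert h2 using 1
    simp only [hGdef]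
    field_simp [hvne s]
    ring
  have keyG : ∀ s ∈ Icc (0:ℝ) n,
      G s - G 0 = ∫ r in (0:ℝ)..s, (δ r * G r + μ r * (S r - V r)) := by
    intro s hs
    have hsub : uIcc (0:ℝ) s ⊆ Icc 0 n := by
      rw [uIcc_of_le hs.1]; exact Icc_subset_Icc le_rfl hs.2
    have hint : IntervalIntegrable (fun r => δ r * G r + μ r * (S r - V r)) volume 0 s :=
      ContinuousOn.intervalIntegrable
        ((hδ.continuousOn.mul (hGc.mono hsub)).add
          (hμ.continuousOn.mul (hS.continuousOn.sub (hVcont.mono hsub))))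
    rw [intervalIntegral.integral_eq_sub_of_hasDerivAt (fun r hr => hGD r (hsub hr)) hint]
  have hCD : ∀ (c s : ℝ), HasDerivAt (fun x => c / v x) (δ s * (c / v s)) s := by
    intro c s
    have h : HasDerivAt (fun x => c / v x) _ s := (hasDerivAt_const s c).div (hvD s) (hvne s)
    convert h using 1
    field_simp [hvne s]
    ring
  -- splitting lemma for indicator integrals
  have hsplit : ∀ (f : ℝ → ℝ) (a b : ℝ), 0 ≤ a → a ≤ b →
      IntervalIntegrable f volume 0 a →
      (∫ r in (0:ℝ)..b, if r < a then f r else 0) = ∫ r in (0:ℝ)..a, f r := by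
    intro f a b ha hab hint
    have hind1 : IntervalIntegrable (fun r => if r < a then f r else 0) volume 0 a := by
      apply hint.congr_ae
      rw [Filter.EventuallyEq, ae_restrict_iff' measurableSet_uIoc]
      filter_upwards [hne a] with x hx hmem
      rw [uIoc_of_le ha] at hmem
      simp only [if_pos (lt_of_le_of_ne hmem.2 hx)]
    have hind2 : IntervalIntegrable (fun r => if r < a then f r else 0) volume a b := by
      apply (intervalIntegrable_const (c := (0:ℝ))).congr_ae
      rw [Filter.EventuallyEq, ae_restrict_iff' measurableSet_uIoc]
      refine Filter.Eventually.of_forall fun x hmem => ?_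
      rw [uIoc_of_le hab] at hmem
      simp only [if_neg (not_lt.2 (le_of_lt hmem.1))]
    rw [← intervalIntegral.integral_add_adjacent_intervals hind1 hind2]
    have h2 : (∫ r in a..b, if r < a then f r else 0) = 0 := by
      apply hzero
      intro x hx
      rw [uIcc_of_le hab] at hx
      exact if_neg (not_lt.2 hx.1)
    have h1 : (∫ r in (0:ℝ)..a, if r < a then f r else 0) = ∫ r in (0:ℝ)..a, f r := by
      apply intervalIntegral.integral_congr_ae
      filter_upwards [hne a] with x hx hmem
      rw [uIoc_of_le ha] at hmem
      simp only [if_pos (lt_of_le_of_ne hmem.2 hx)]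
    rw [h1, h2, add_zero]
  intro ω t ht
  have ht0 : 0 ≤ t := ht.1
  rcases (hTnn ω).eq_or_lt with hτ | hτ
  · -- death at time 0 : everything vanishes
    have hT0 : T ω = 0 := hτ.symm
    have hΘz : ∀ s, 0 ≤ s → Θ s ω = 0 := by
      intro s hs
      rw [hΘ s ω, hT0]
      have h1 : (∫ r in (0:ℝ)..s, (v r / v s) * (if r < (0:ℝ) then Prem r else 0)) = 0 := by
        apply hzero
        intro x hx
        rw [uIcc_of_le hs] at hx
        simp [not_lt.2 hx.1]
      rw [h1, if_neg (by simp), if_neg (not_lt.2 hs)]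
      ring
    have hδΘ : (∫ r in (0:ℝ)..t, δ r * Θ r ω) = 0 := by
      apply hzero
      intro x hx
      rw [uIcc_of_le ht0] at hx
      simp [hΘz x hx.1]
    constructor
    · rw [hΘz t ht0, hΘz 0 le_rfl, hδΘ, hT0,
        hzero (fun r => if r < (0:ℝ) then (S r - V r) * μ r else 0) 0 t (by
          intro x hx
          rw [uIcc_of_le ht0] at hx
          exact if_neg (not_lt.2 hx.1)),
        if_neg (by simp)]
      ring
    · rw [hΘz t ht0, hΘz 0 le_rfl, hT0,
        hzero (fun r => if r < (0:ℝ) then v r * (S r - V r) * μ r else 0) 0 t (by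
          intro x hx
          rw [uIcc_of_le ht0] at hx
          exact if_neg (not_lt.2 hx.1)),
        if_neg (by simp)]
      ring
  · -- death strictly after time 0
    have hτ0' : 0 ≤ T ω := hTnn ω
    have hΘlt : ∀ s, 0 ≤ s → s < T ω → Θ s ω = G s := by
      intro s hs0 hsτ
      rw [hΘ s ω]
      have h1 : (∫ r in (0:ℝ)..s, (v r / v s) * (if r < T ω then Prem r else 0))
          = P s / v s := by
        simp only [hPdef]
        rw [← intervalIntegral.integral_div]
        apply intervalIntegral.integral_congr
        intro x hx
        rw [uIcc_of_le hs0] at hx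
        simp only [if_pos (lt_of_le_of_lt hx.2 hsτ)]
        ring
      rw [h1, if_neg (fun h => absurd h.2 (not_le.2 hsτ)), if_pos hsτ]
      simp only [hGdef]
      ring
    set C : ℝ := P (T ω) - v (T ω) * S (T ω) with hCdef
    have hΘge : ∀ s, T ω ≤ s → Θ s ω = C / v s := by
      intro s hs
      have hs0 : 0 ≤ s := le_trans hτ0' hs
      rw [hΘ s ω]
      have e : (fun r => (v r / v s) * (if r < T ω then Prem r else 0))
          = fun r => (if r < T ω then v r * Prem r else 0) / v s := by
        funext r
        split_ifs with h
        · rw [div_mul_eq_mul_div]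
        · simp
      have h1 : (∫ r in (0:ℝ)..s, (v r / v s) * (if r < T ω then Prem r else 0))
          = P (T ω) / v s := by
        rw [e, intervalIntegral.integral_div,
          hsplit (fun r => v r * Prem r) (T ω) s hτ0' hs
            ((hvc.mul hPrem).intervalIntegrable 0 (T ω))]
      rw [h1, if_pos ⟨hτ, hs⟩, if_neg (not_lt.2 hs), hCdef]
      ring
    have hΘ0' : Θ 0 ω = -V 0 := by rw [hΘlt 0 le_rfl hτ, hG0]
    rcases lt_or_ge t (T ω) with htτ | htτ
    · -- t before death
      have hsubt : uIcc (0:ℝ) t ⊆ Icc 0 n := by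
        rw [uIcc_of_le ht0]; exact Icc_subset_Icc le_rfl ht.2
      have hGeq := keyG t ht
      have hint1 : IntervalIntegrable (fun r => δ r * G r) volume 0 t :=
        ContinuousOn.intervalIntegrable (hδ.continuousOn.mul (hGc.mono hsubt))
      have hint2 : IntervalIntegrable (fun r => μ r * (S r - V r)) volume 0 t :=
        ContinuousOn.intervalIntegrable
          (hμ.continuousOn.mul (hS.continuousOn.sub (hVcont.mono hsubt)))
      have hadd := intervalIntegral.integral_add hint1 hint2
      rw [hadd, hG0] at hGeq
      have e1 : (∫ r in (0:ℝ)..t, δ r * Θ r ω) = ∫ r in (0:ℝ)..t, δ r * G r := by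
        apply intervalIntegral.integral_congr
        intro x hx
        rw [uIcc_of_le ht0] at hx
        simp only [hΘlt x hx.1 (lt_of_le_of_lt hx.2 htτ)]
      have hifneg : ¬(0 < T ω ∧ T ω ≤ t) := fun h => absurd h.2 (not_le.2 htτ)
      constructor
      · have e2 : (∫ r in (0:ℝ)..t, (if r < T ω then (S r - V r) * μ r else 0))
            = ∫ r in (0:ℝ)..t, μ r * (S r - V r) := by
          apply intervalIntegral.integral_congr
          intro x hx
          rw [uIcc_of_le ht0] at hx
          simp only [if_pos (lt_of_le_of_lt hx.2 htτ)]
          ring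
        rw [hΘlt t ht0 htτ, hΘ0', e1, e2, if_neg hifneg]
        linarith [hGeq]
      · have e2 : (∫ r in (0:ℝ)..t, (if r < T ω then v r * (S r - V r) * μ r else 0))
            = ∫ r in (0:ℝ)..t, v r * (S r - V r) * μ r := by
          apply intervalIntegral.integral_congr
          intro x hx
          rw [uIcc_of_le ht0] at hx
          simp only [if_pos (lt_of_le_of_lt hx.2 htτ)]
        have hA := keyA t ht
        have hB := hsubKey t ht
        rw [hB] at hA
        have hvG : v t * G t = P t - v t * V t := by
          simp only [hGdef]
          field_simp [hvne t]
        rw [hΘlt t ht0 htτ, hΘ0', e2, if_neg hifneg, hv0, hvG]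
        linarith [hA]
    · -- t at or after death
      have hτmem : T ω ∈ Icc (0:ℝ) n := ⟨hτ0', le_trans htτ ht.2⟩
      have hsubτ : uIcc (0:ℝ) (T ω) ⊆ Icc 0 n := by
        rw [uIcc_of_le hτ0']; exact Icc_subset_Icc le_rfl hτmem.2
      have hintδG : IntervalIntegrable (fun r => δ r * G r) volume 0 (T ω) :=
        ContinuousOn.intervalIntegrable (hδ.continuousOn.mul (hGc.mono hsubτ))
      have hintμτ : IntervalIntegrable (fun r => μ r * (S r - V r)) volume 0 (T ω) :=
        ContinuousOn.intervalIntegrable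
          (hμ.continuousOn.mul (hS.continuousOn.sub (hVcont.mono hsubτ)))
      have eqG := keyG (T ω) hτmem
      rw [intervalIntegral.integral_add hintδG hintμτ, hG0] at eqG
      have hcontCv : Continuous fun r => δ r * (C / v r) :=
        hδ.mul (continuous_const.div hvc hvne)
      have eqC : C / v t - C / v (T ω) = ∫ r in (T ω)..t, δ r * (C / v r) := by
        rw [intervalIntegral.integral_eq_sub_of_hasDerivAt (fun r _ => hCD C r)
          (hcontCv.intervalIntegrable (T ω) t)]
      have i1 : IntervalIntegrable (fun r => δ r * Θ r ω) volume 0 (T ω) := by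
        apply hintδG.congr_ae
        rw [Filter.EventuallyEq, ae_restrict_iff' measurableSet_uIoc]
        filter_upwards [hne (T ω)] with x hx hmem
        rw [uIoc_of_le hτ0'] at hmem
        simp only [hΘlt x (le_of_lt hmem.1) (lt_of_le_of_ne hmem.2 hx)]
      have i2 : IntervalIntegrable (fun r => δ r * Θ r ω) volume (T ω) t := by
        apply (hcontCv.intervalIntegrable (T ω) t).congr_ae
        rw [Filter.EventuallyEq, ae_restrict_iff' measurableSet_uIoc]
        refine Filter.Eventually.of_forall fun x hmem => ?_
        rw [uIoc_of_le htτ] at hmem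
        simp only [hΘge x (le_of_lt hmem.1)]
      have esplit : (∫ r in (0:ℝ)..t, δ r * Θ r ω)
          = (∫ r in (0:ℝ)..(T ω), δ r * Θ r ω) + ∫ r in (T ω)..t, δ r * Θ r ω :=
        (intervalIntegral.integral_add_adjacent_intervals i1 i2).symm
      have e1 : (∫ r in (0:ℝ)..(T ω), δ r * Θ r ω) = ∫ r in (0:ℝ)..(T ω), δ r * G r := by
        apply intervalIntegral.integral_congr_ae
        filter_upwards [hne (T ω)] with x hx hmem
        rw [uIoc_of_le hτ0'] at hmem
        rw [hΘlt x (le_of_lt hmem.1) (lt_of_le_of_ne hmem.2 hx)]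
      have e2 : (∫ r in (T ω)..t, δ r * Θ r ω) = ∫ r in (T ω)..t, δ r * (C / v r) := by
        apply intervalIntegral.integral_congr
        intro x hx
        rw [uIcc_of_le htτ] at hx
        simp only [hΘge x hx.1]
      have hCG : C / v (T ω) = G (T ω) - (S (T ω) - V (T ω)) := by
        simp only [hCdef, hGdef]
        field_simp [hvne (T ω)]
        ring
      constructor
      · have e3 : (∫ r in (0:ℝ)..t, (if r < T ω then (S r - V r) * μ r else 0))
            = ∫ r in (0:ℝ)..(T ω), μ r * (S r - V r) := by
          rw [hsplit (fun r => (S r - V r) * μ r) (T ω) t hτ0' htτ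
            (ContinuousOn.intervalIntegrable
              ((hS.continuousOn.sub (hVcont.mono hsubτ)).mul hμ.continuousOn))]
          apply intervalIntegral.integral_congr
          intro x _
          show (S x - V x) * μ x = μ x * (S x - V x)
          ring
        rw [hΘge t htτ, hΘ0', esplit, e1, e2, e3, if_pos ⟨hτ, htτ⟩]
        linear_combination eqG + eqC + hCG
      · have e3 : (∫ r in (0:ℝ)..t, (if r < T ω then v r * (S r - V r) * μ r else 0))
            = ∫ r in (0:ℝ)..(T ω), v r * (S r - V r) * μ r :=
          hsplit (fun r => v r * (S r - V r) * μ r) (T ω) t hτ0' htτ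
            (ContinuousOn.intervalIntegrable
              ((hvc.continuousOn.mul (hS.continuousOn.sub (hVcont.mono hsubτ))).mul
                hμ.continuousOn))
        have hA := keyA (T ω) hτmem
        have hB := hsubKey (T ω) hτmem
        rw [hB] at hA
        have hvtC : v t * (C / v t) = C := by field_simp [hvne t]
        rw [hΘge t htτ, hΘ0', e3, if_pos ⟨hτ, htτ⟩, hv0, hvtC, hCdef]
        linear_combination -hA
end

section
/- Under a single special valuation basis (V(0)=0, V(n)=S̄), the discounted stochastic surplus satisfies v(t)Θ(t) = -∫₀ᵗ v(r)(S(r)-V(r)) dM(r) for all t ∈ [0,n]; in particular its expectation is zero for all t, i.e. the modeled discounted surplus vanishes identically. -/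
open MeasureTheory Set

lemma aux_deriv_nonneg {f : ℝ → ℝ} {x d : ℝ} (hf : Monotone f) (h : HasDerivAt f d x) :
    0 ≤ d := by
  have h2 : Filter.Tendsto (slope f x) (nhdsWithin x (Ioi x)) (nhds d) :=
    (hasDerivAt_iff_tendsto_slope.mp h).mono_left
      (nhdsWithin_mono x fun y hy => ne_of_gt hy)
  refine ge_of_tendsto h2 ?_
  filter_upwards [self_mem_nhdsWithin] with y hy
  rw [slope_def_field]
  exact div_nonneg (sub_nonneg.mpr (hf hy.le)) (sub_nonneg.mpr (le_of_lt hy))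

lemma aux_ite_int (f : ℝ → ℝ) (hf : Continuous f) {t c : ℝ} (ht : 0 ≤ t) (hc : 0 ≤ c) :
    (∫ r in (0:ℝ)..t, if r < c then f r else 0) = ∫ r in (0:ℝ)..(min t c), f r := by
  have hne : ∀ᵐ r : ℝ, r ≠ c := by
    rw [ae_iff]
    have : {a : ℝ | ¬a ≠ c} = {c} := by ext r; simp
    rw [this]
    exact measure_singleton c
  rcases le_or_gt t c with h | h
  · rw [min_eq_left h]
    refine intervalIntegral.integral_congr_ae ?_
    filter_upwards [hne] with r hr hrI
    rw [uIoc_of_le ht] at hrI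
    have : r < c := lt_of_le_of_ne (hrI.2.trans h) hr
    simp [this]
  · rw [min_eq_right h.le]
    have hint : ∀ a b : ℝ, IntervalIntegrable (fun r => if r < c then f r else 0) volume a b := by
      intro a b
      have he : (fun r => if r < c then f r else 0) = (Iio c).indicator f := by
        ext r; simp [indicator_apply, mem_Iio]
      rw [he, intervalIntegrable_iff]
      exact (hf.integrableOn_uIoc).indicator measurableSet_Iio
    rw [← intervalIntegral.integral_add_adjacent_intervals (hint 0 c) (hint c t)]
    have h2 : (∫ r in c..t, if r < c then f r else 0) = 0 := by
      have : (∫ r in c..t, (if r < c then f r else 0)) = ∫ r in c..t, (0:ℝ) := by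
        refine intervalIntegral.integral_congr_ae ?_
        filter_upwards with r hrI
        rw [uIoc_of_le h.le] at hrI
        simp [not_lt.mpr hrI.1.le]
      simp [this]
    have h1 : (∫ r in (0:ℝ)..c, if r < c then f r else 0) = ∫ r in (0:ℝ)..c, f r := by
      refine intervalIntegral.integral_congr_ae ?_
      filter_upwards [hne] with r hr hrI
      rw [uIoc_of_le hc] at hrI
      simp [lt_of_le_of_ne hrI.2 hr]
    rw [h1, h2, add_zero]

/-- With a single special valuation basis (`V(0)=0`, `V(n)=S̄`), the discounted
stochastic surplus is the martingale integral `-∫₀ᵗ v (S-V) dM` pathwise, and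
its expectation (the modeled discounted surplus) vanishes identically. -/
theorem single_basis_discounted_surplus_vanishes
    {Ω : Type*} [m0 : MeasurableSpace Ω] (P : Measure Ω) [IsProbabilityMeasure P]
    (n Sbar : ℝ) (hn : 0 < n)
    (T : Ω → ℝ) (hT : Measurable T) (hTnn : ∀ ω, 0 ≤ T ω)
    (δ μ Prem S V : ℝ → ℝ)
    (hδ : Continuous δ) (hμ : Continuous μ)
    (hPrem : Continuous Prem) (hS : Continuous S)
    -- under P, T has hazard rate μ
    (hTlaw : ∀ t : ℝ, P {ω | t < T ω}
      = ENNReal.ofReal (Real.exp (-(∫ r in (0:ℝ)..t, μ r))))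
    (v : ℝ → ℝ) (hv : ∀ t, v t = Real.exp (-(∫ r in (0:ℝ)..t, δ r)))
    -- V solves Thiele's equation with V(0) = 0 and V(n) = S̄ (special valuation basis)
    (hV : ∀ t ∈ Icc (0:ℝ) n,
      HasDerivAt V (δ t * V t + Prem t - μ t * (S t - V t)) t)
    (hV0 : V 0 = 0) (hVn : V n = Sbar)
    (Θ : ℝ → Ω → ℝ)
    (hΘ : ∀ t ω, Θ t ω =
      (∫ r in (0:ℝ)..t, (v r / v t) * (if r < T ω then Prem r else 0))
      - (if 0 < T ω ∧ T ω ≤ t then (v (T ω) / v t) * S (T ω) else 0)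
      - (if t < T ω then V t else 0)) :
    ∀ t ∈ Icc (0:ℝ) n,
      (∀ ω, v t * Θ t ω =
        -((if 0 < T ω ∧ T ω ≤ t then v (T ω) * (S (T ω) - V (T ω)) else 0)
            - ∫ r in (0:ℝ)..t, (if r < T ω then v r * (S r - V r) * μ r else 0)))
      ∧ (∫ ω, v t * Θ t ω ∂P) = 0 := by
  -- basic facts about v
  have hvpos : ∀ s, 0 < v s := fun s => by rw [hv]; exact Real.exp_pos _
  have hvd : ∀ s, HasDerivAt v (-δ s * v s) s := by
    intro s
    have h1 : HasDerivAt (fun u => ∫ r in (0:ℝ)..u, δ r) (δ s) s :=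
      intervalIntegral.integral_hasDerivAt_right (hδ.intervalIntegrable _ _)
        (hδ.stronglyMeasurableAtFilter _ _) hδ.continuousAt
    have h2 := (h1.neg).exp
    have hve : v = fun u => Real.exp (-(∫ r in (0:ℝ)..u, δ r)) := funext hv
    rw [hve]
    convert h2 using 1
    show -δ s * Real.exp (-(∫ r in (0:ℝ)..s, δ r)) = Real.exp (-(∫ r in (0:ℝ)..s, δ r)) * -δ s
    ring
    rfl
  have hvc : Continuous v := continuous_iff_continuousAt.mpr fun s => (hvd s).continuousAt
  -- survival function Em
  set Em : ℝ → ℝ := fun s => Real.exp (-(∫ r in (0:ℝ)..s, μ r)) with hEm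
  have hEpos : ∀ s, 0 < Em s := fun s => Real.exp_pos _
  have hMd : ∀ s, HasDerivAt (fun u => ∫ r in (0:ℝ)..u, μ r) (μ s) s := fun s =>
    intervalIntegral.integral_hasDerivAt_right (hμ.intervalIntegrable _ _)
      (hμ.stronglyMeasurableAtFilter _ _) hμ.continuousAt
  have hEd : ∀ s, HasDerivAt Em (-μ s * Em s) s := by
    intro s
    have h2 := ((hMd s).neg).exp
    convert h2 using 1
    show -μ s * Real.exp (-(∫ r in (0:ℝ)..s, μ r)) = Real.exp (-(∫ r in (0:ℝ)..s, μ r)) * -μ s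
    ring
    rfl
  have hEmc : Continuous Em := continuous_iff_continuousAt.mpr fun s => (hEd s).continuousAt
  have hEanti : Antitone Em := by
    intro a b hab
    have hsub : {ω | b < T ω} ⊆ {ω | a < T ω} := fun ω hω => lt_of_le_of_lt hab hω
    have := measure_mono (μ := P) hsub
    rw [hTlaw, hTlaw] at this
    exact (ENNReal.ofReal_le_ofReal_iff (hEpos a).le).mp this
  have hμnn : ∀ s, 0 ≤ μ s := by
    intro s
    refine aux_deriv_nonneg (f := fun u => ∫ r in (0:ℝ)..u, μ r) ?_ (hMd s)
    intro a b hab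
    have := hEanti hab
    have := Real.exp_le_exp.mp this
    linarith
  have hE0 : Em 0 = 1 := by simp [hEm]
  -- continuity of V on [0, n] and continuous extension Vt
  have hVcont : ContinuousOn V (Icc 0 n) := fun s hs => ((hV s hs).continuousAt).continuousWithinAt
  set Vt : ℝ → ℝ := fun s => V (max 0 (min s n)) with hVtdef
  have hVtc : Continuous Vt := by
    refine hVcont.comp_continuous (continuous_const.max (continuous_id.min continuous_const)) ?_
    intro s
    exact ⟨le_max_left _ _, max_le hn.le (min_le_right s n)⟩
  have hVtV : ∀ s ∈ Icc (0:ℝ) n, Vt s = V s := by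
    intro s hs
    simp only [hVtdef]
    rw [min_eq_left hs.2, max_eq_right hs.1]
  set g : ℝ → ℝ := fun s => v s * (S s - Vt s) * μ s with hgdef
  set h : ℝ → ℝ := fun s => v s * (S s - Vt s) with hhdef
  have hgc : Continuous g := ((hvc.mul (hS.sub hVtc)).mul hμ)
  have hhc : Continuous h := (hvc.mul (hS.sub hVtc))
  intro t ht
  obtain ⟨ht0, htn⟩ := ht
  have hvtne : v t ≠ 0 := (hvpos t).ne'
  -- FTC for v·V
  have FTC : ∀ τ, 0 ≤ τ → τ ≤ n →
      (∫ r in (0:ℝ)..τ, (v r * Prem r - g r)) = v τ * V τ := by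
    intro τ h0 h1
    have hderiv : ∀ x ∈ uIcc (0:ℝ) τ, HasDerivAt (fun s => v s * V s) (v x * Prem x - g x) x := by
      intro x hx
      rw [uIcc_of_le h0] at hx
      have hxn : x ∈ Icc (0:ℝ) n := ⟨hx.1, hx.2.trans h1⟩
      have hd := (hvd x).mul (hV x hxn)
      convert hd using 1
      show v x * Prem x - v x * (S x - Vt x) * μ x = _
      rw [hVtV x hxn]
      ring
      all_goals rfl
    rw [intervalIntegral.integral_eq_sub_of_hasDerivAt hderiv
      (((hvc.mul hPrem).sub hgc).intervalIntegrable _ _)]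
    simp [hV0]
  -- rewriting the ite-integrand with the continuous extension
  have e2 : ∀ c : ℝ, (∫ r in (0:ℝ)..t, if r < c then v r * (S r - V r) * μ r else 0)
      = ∫ r in (0:ℝ)..t, if r < c then g r else 0 := by
    intro c
    refine intervalIntegral.integral_congr fun r hr => ?_
    rw [uIcc_of_le ht0] at hr
    have hVr : Vt r = V r := hVtV r ⟨hr.1, hr.2.trans htn⟩
    by_cases hrc : r < c <;> simp [hrc, hgdef, hVr]
  -- pathwise identity
  have key : ∀ ω, v t * Θ t ω =
      -((if 0 < T ω ∧ T ω ≤ t then v (T ω) * (S (T ω) - V (T ω)) else 0)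
          - ∫ r in (0:ℝ)..t, (if r < T ω then v r * (S r - V r) * μ r else 0)) := by
    intro ω
    have hc : 0 ≤ T ω := hTnn ω
    set c := T ω with hcdef
    set τ := min t c with hτdef
    have hτ0 : 0 ≤ τ := le_min ht0 hc
    have hτn : τ ≤ n := le_trans (min_le_left _ _) htn
    have e1 : (∫ r in (0:ℝ)..t, (v r / v t) * (if r < c then Prem r else 0))
        = (v t)⁻¹ * ∫ r in (0:ℝ)..t, (if r < c then v r * Prem r else 0) := by
      rw [← intervalIntegral.integral_const_mul]
      refine intervalIntegral.integral_congr fun r _ => ?_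
      by_cases hrc : r < c <;> simp [hrc] <;> ring
    have I1 : (∫ r in (0:ℝ)..t, (if r < c then v r * Prem r else 0))
        = ∫ r in (0:ℝ)..τ, v r * Prem r := aux_ite_int _ (hvc.mul hPrem) ht0 hc
    have I2 : (∫ r in (0:ℝ)..t, (if r < c then g r else 0))
        = ∫ r in (0:ℝ)..τ, g r := aux_ite_int _ hgc ht0 hc
    have I3 : (∫ r in (0:ℝ)..τ, v r * Prem r) - (∫ r in (0:ℝ)..τ, g r) = v τ * V τ := by
      rw [← intervalIntegral.integral_sub (f := fun r => v r * Prem r) ((hvc.mul hPrem).intervalIntegrable _ _)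
        (hgc.intervalIntegrable _ _)]
      exact FTC τ hτ0 hτn
    rw [hΘ, e2, e1, I1, I2]
    simp only [← hcdef]
    rcases le_or_gt c t with hct | htc
    · have hτc : τ = c := min_eq_right hct
      rcases eq_or_lt_of_le hc with h0c | h0c
      · -- c = 0
        have hB : ¬(0 < c ∧ c ≤ t) := by intro hh2; exact absurd hh2.1 (by rw [← h0c]; exact lt_irrefl 0)
        have hC : ¬(t < c) := by rw [← h0c]; exact not_lt.mpr ht0
        have hτ0' : τ = 0 := by rw [hτc, ← h0c]
        rw [if_neg hB, if_neg hC, if_neg hB, hτ0']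
        simp
      · have hB : 0 < c ∧ c ≤ t := ⟨h0c, hct⟩
        have hC : ¬(t < c) := not_lt.mpr hct
        rw [if_pos hB, if_neg hC, if_pos hB, hτc]
        rw [hτc] at I3
        field_simp
        linear_combination I3
    · have hτt : τ = t := min_eq_left htc.le
      have hB : ¬(0 < c ∧ c ≤ t) := fun hh2 => absurd hh2.2 (not_le.mpr htc)
      have hC : t < c := htc
      rw [if_neg hB, if_pos hC, if_neg hB, hτt]
      rw [hτt] at I3
      field_simp
      linear_combination I3
  refine ⟨key, ?_⟩
  -- the law of T restricted to (0, t] has density μ·Em w.r.t. Lebesgue measure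
  set ν := Measure.map T P with hν
  haveI : IsProbabilityMeasure ν := Measure.isProbabilityMeasure_map hT.aemeasurable
  set D := volume.withDensity (fun s => ENNReal.ofReal (μ s * Em s)) with hD
  have L : ∀ a b : ℝ, a ≤ b →
      (∫⁻ s in Ioc a b, ENNReal.ofReal (μ s * Em s)) = ENNReal.ofReal (Em a - Em b) := by
    intro a b hab
    rw [← ofReal_integral_eq_lintegral_ofReal (f := fun s => μ s * Em s) ((hμ.mul hEmc).integrableOn_Ioc)
      (Filter.Eventually.of_forall fun s => mul_nonneg (hμnn s) (hEpos s).le)]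
    congr 1
    rw [← intervalIntegral.integral_of_le hab]
    have hderiv : ∀ x ∈ uIcc a b, HasDerivAt (fun s => -Em s) (μ x * Em x) x := by
      intro x _
      have hd := (hEd x).neg
      convert hd using 1
      case e'_9 => ring
      all_goals rfl
    rw [intervalIntegral.integral_eq_sub_of_hasDerivAt hderiv
      ((hμ.mul hEmc).intervalIntegrable _ _)]
    ring
  haveI hDfin : IsFiniteMeasure (D.restrict (Ioc (0:ℝ) t)) := by
    constructor
    rw [Measure.restrict_apply_univ, hD, withDensity_apply _ measurableSet_Ioc, L 0 t ht0]
    exact ENNReal.ofReal_lt_top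
  have hrestr : ν.restrict (Ioc (0:ℝ) t) = D.restrict (Ioc (0:ℝ) t) := by
    refine Measure.ext_of_Iic _ _ (fun x => ?_)
    rw [Measure.restrict_apply measurableSet_Iic, Measure.restrict_apply measurableSet_Iic]
    have hset : Iic x ∩ Ioc (0:ℝ) t = Ioc (0:ℝ) (min x t) := by
      ext s
      simp only [mem_inter_iff, mem_Iic, mem_Ioc, lt_min_iff, le_min_iff]
      constructor
      · rintro ⟨h1, h2, h3⟩; exact ⟨h2, h1, h3⟩
      · rintro ⟨h1, h2, h3⟩; exact ⟨h2, h1, h3⟩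
    rw [hset]
    rcases le_or_gt (min x t) 0 with hm | hm
    · rw [Ioc_eq_empty (not_lt.mpr hm)]
      simp
    · have hνv : ν (Ioc 0 (min x t)) = ENNReal.ofReal (Em 0 - Em (min x t)) := by
        rw [hν, Measure.map_apply hT measurableSet_Ioc]
        have hpre : T ⁻¹' Ioc 0 (min x t) = {ω | 0 < T ω} \ {ω | (min x t) < T ω} := by
          ext ω
          simp [mem_preimage, mem_Ioc, mem_diff, mem_setOf_eq, not_lt]
        rw [hpre, measure_diff (s₁ := {ω | 0 < T ω}) (s₂ := {ω | (min x t) < T ω})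
          (fun ω hω => lt_trans hm hω)
          ((show MeasurableSet {ω | (min x t) < T ω} from hT measurableSet_Ioi).nullMeasurableSet)
          (measure_ne_top P _)]
        rw [show {ω | 0 < T ω} = {ω | (0:ℝ) < T ω} from rfl, hTlaw 0, hTlaw (min x t)]
        rw [← ENNReal.ofReal_sub _ (hEpos (min x t)).le]
      have hDv : D (Ioc 0 (min x t)) = ENNReal.ofReal (Em 0 - Em (min x t)) := by
        rw [hD, withDensity_apply _ measurableSet_Ioc, L 0 (min x t) hm.le]
      rw [hνv, hDv]
  -- expectation of the jump term
  have hind : ∀ ω, (if 0 < T ω ∧ T ω ≤ t then v (T ω) * (S (T ω) - V (T ω)) else 0)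
      = (Ioc (0:ℝ) t).indicator h (T ω) := by
    intro ω
    by_cases hb : 0 < T ω ∧ T ω ≤ t
    · rw [if_pos hb, indicator_of_mem (show T ω ∈ Ioc 0 t from ⟨hb.1, hb.2⟩)]
      simp only [hhdef]
      rw [hVtV _ ⟨hTnn ω, hb.2.trans htn⟩]
    · rw [if_neg hb, indicator_of_notMem (by simpa [mem_Ioc] using hb)]
  have EI1 : (∫ ω, (Ioc (0:ℝ) t).indicator h (T ω) ∂P)
      = ∫ s in Ioc (0:ℝ) t, (μ s * Em s) * h s := by
    rw [← integral_map hT.aemeasurable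
      ((hhc.measurable.indicator measurableSet_Ioc).aestronglyMeasurable)]
    rw [integral_indicator measurableSet_Ioc, ← hν]
    rw [show (∫ s in Ioc (0:ℝ) t, h s ∂ν) = ∫ s, h s ∂(ν.restrict (Ioc 0 t)) from rfl, hrestr]
    rw [hD, restrict_withDensity measurableSet_Ioc]
    rw [show (fun s => ENNReal.ofReal (μ s * Em s))
        = fun s => ((fun u => Real.toNNReal (μ u * Em u)) s : ENNReal) from rfl]
    rw [integral_withDensity_eq_integral_smul (f := fun u => Real.toNNReal (μ u * Em u)) ((hμ.mul hEmc).measurable.real_toNNReal) h]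
    refine integral_congr_ae (Filter.Eventually.of_forall fun s => ?_)
    show (μ s * Em s).toNNReal • h s = (μ s * Em s) * h s
    rw [NNReal.smul_def, Real.coe_toNNReal _ (mul_nonneg (hμnn s) (hEpos s).le)]
    rfl
  -- expectation of the drift term, via Fubini
  set F : Ω × ℝ → ℝ := fun p => if p.2 < T p.1 then g p.2 else 0 with hF
  have hAmeas : MeasurableSet {p : Ω × ℝ | p.2 < T p.1} :=
    measurableSet_lt measurable_snd (hT.comp measurable_fst)
  have hFmeas : Measurable F :=
    Measurable.ite hAmeas (hgc.measurable.comp measurable_snd) measurable_const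
  obtain ⟨C, hC⟩ := (isCompact_Icc (a := (0:ℝ)) (b := t)).exists_bound_of_continuousOn
    hgc.continuousOn
  have hFint : Integrable F (P.prod (volume.restrict (Ioc (0:ℝ) t))) := by
    refine Integrable.mono' (integrable_const (max C 0)) hFmeas.aestronglyMeasurable ?_
    have hmem : ∀ᵐ p ∂(P.prod (volume.restrict (Ioc (0:ℝ) t))), p.2 ∈ Ioc (0:ℝ) t := by
      rw [ae_iff]
      have hone : {p : Ω × ℝ | ¬ p.2 ∈ Ioc (0:ℝ) t} = univ ×ˢ (Ioc (0:ℝ) t)ᶜ := by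
        ext p; simp [mem_prod]
      rw [hone, Measure.prod_prod, Measure.restrict_apply (measurableSet_Ioc.compl)]
      simp
    filter_upwards [hmem] with p hp
    simp only [hF]
    by_cases hlt : p.2 < T p.1
    · rw [if_pos hlt]
      exact le_trans (hC p.2 ⟨hp.1.le, hp.2⟩) (le_max_left _ _)
    · rw [if_neg hlt]
      simp [le_max_right]
  have EI2 : (∫ ω, (∫ r in Ioc (0:ℝ) t, (if r < T ω then g r else 0)) ∂P)
      = ∫ r in Ioc (0:ℝ) t, (μ r * Em r) * h r := by
    rw [integral_integral_swap hFint]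
    refine integral_congr_ae (Filter.Eventually.of_forall fun r => ?_)
    show (∫ ω, (if r < T ω then g r else 0) ∂P) = (μ r * Em r) * h r
    have hiconst : (fun ω => if r < T ω then g r else 0)
        = {ω | r < T ω}.indicator (fun _ => g r) := by
      ext ω
      by_cases hlt : r < T ω <;> simp [Set.indicator_apply, hlt]
    rw [hiconst, integral_indicator_const _ (show MeasurableSet {ω | r < T ω} from hT measurableSet_Ioi), measureReal_def, hTlaw r,
      ENNReal.toReal_ofReal (hEpos r).le]
    simp only [hgdef, hhdef, smul_eq_mul]
    ring
  -- integrability of the two pieces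
  obtain ⟨C1, hC1⟩ := (isCompact_Icc (a := (0:ℝ)) (b := t)).exists_bound_of_continuousOn
    hhc.continuousOn
  have hI1int : Integrable (fun ω => (Ioc (0:ℝ) t).indicator h (T ω)) P := by
    refine Integrable.mono' (integrable_const (max C1 0))
      ((hhc.measurable.indicator measurableSet_Ioc).comp hT).aestronglyMeasurable ?_
    refine Filter.Eventually.of_forall fun ω => ?_
    by_cases hb : T ω ∈ Ioc (0:ℝ) t
    · rw [indicator_of_mem hb]
      exact le_trans (hC1 _ ⟨hb.1.le, hb.2⟩) (le_max_left _ _)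
    · rw [indicator_of_notMem hb]
      simp [le_max_right]
  have hI2int : Integrable (fun ω => ∫ r in Ioc (0:ℝ) t, (if r < T ω then g r else 0)) P :=
    hFint.integral_prod_left
  -- assemble
  have hrw : ∀ ω, v t * Θ t ω =
      -(((Ioc (0:ℝ) t).indicator h (T ω))
        - ∫ r in Ioc (0:ℝ) t, (if r < T ω then g r else 0)) := by
    intro ω
    rw [key ω, hind ω]
    congr 1
    congr 1
    rw [e2 (T ω), intervalIntegral.integral_of_le ht0]
  calc (∫ ω, v t * Θ t ω ∂P)
      = ∫ ω, -(((Ioc (0:ℝ) t).indicator h (T ω))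
          - ∫ r in Ioc (0:ℝ) t, (if r < T ω then g r else 0)) ∂P :=
        integral_congr_ae (Filter.Eventually.of_forall hrw)
    _ = -((∫ ω, (Ioc (0:ℝ) t).indicator h (T ω) ∂P)
          - ∫ ω, (∫ r in Ioc (0:ℝ) t, (if r < T ω then g r else 0)) ∂P) := by
        rw [integral_neg, integral_sub hI1int hI2int]
    _ = 0 := by rw [EI1, EI2, sub_self, neg_zero]
end

section
/- Discounted surpluses over non-overlapping time intervals are uncorrelated: with discounted surplus Θ̃(t) = -∫₀ᵗ v(r)R(r)dM(r) where R(r)=S(r)-V(r) is bounded measurable and M is the compensated single-jump counting-process martingale, for 0 ≤ s ≤ t ≤ u ≤ w, E[(Θ̃(t)-Θ̃(s))(Θ̃(w)-Θ̃(u))] = 0. -/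
open MeasureTheory Set Filter
open scoped ENNReal NNReal

namespace HattendorffAux

noncomputable def Gf (μ : ℝ → ℝ) (t : ℝ) : ℝ := Real.exp (-(∫ r in (0:ℝ)..t, μ r))

theorem hasDerivAt_I {μ : ℝ → ℝ} (hμ : Continuous μ) (x : ℝ) :
    HasDerivAt (fun t => ∫ r in (0:ℝ)..t, μ r) (μ x) x :=
  intervalIntegral.integral_hasDerivAt_right (hμ.intervalIntegrable _ _)
    (hμ.stronglyMeasurableAtFilter _ _) hμ.continuousAt

theorem hasDerivAt_Gf {μ : ℝ → ℝ} (hμ : Continuous μ) (x : ℝ) :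
    HasDerivAt (Gf μ) (-(μ x * Gf μ x)) x := by
  have h := ((hasDerivAt_I hμ x).neg).exp
  simp only [Gf]
  convert h using 1
  · rfl
  · simp only [Pi.neg_apply]; ring

theorem continuous_Gf {μ : ℝ → ℝ} (hμ : Continuous μ) : Continuous (Gf μ) :=
  continuous_iff_continuousAt.2 fun x => (hasDerivAt_Gf hμ x).continuousAt

theorem Gf_pos {μ : ℝ → ℝ} (t : ℝ) : 0 < Gf μ t := Real.exp_pos _

theorem integral_muG {μ : ℝ → ℝ} (hμ : Continuous μ) (c d : ℝ) :
    ∫ r in c..d, μ r * Gf μ r = Gf μ c - Gf μ d := by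
  have h : ∀ x ∈ uIcc c d, HasDerivAt (fun y => -Gf μ y) (μ x * Gf μ x) x := fun x _ => by
    have h' := (hasDerivAt_Gf hμ x).neg; rw [neg_neg] at h'; exact h'
  rw [intervalIntegral.integral_eq_sub_of_hasDerivAt h
    ((hμ.mul (continuous_Gf hμ)).intervalIntegrable _ _)]
  ring

variable {Ω : Type*} [m0 : MeasurableSpace Ω] {P : Measure Ω} [IsProbabilityMeasure P]
  {T : Ω → ℝ} {μ : ℝ → ℝ}

theorem antitone_Gf (hTlaw : ∀ t, P {ω | t < T ω} = ENNReal.ofReal (Gf μ t)) :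
    Antitone (Gf μ) := by
  intro s t hst
  have hmono : P {ω | t < T ω} ≤ P {ω | s < T ω} :=
    measure_mono fun ω hω => lt_of_le_of_lt hst hω
  rw [hTlaw, hTlaw] at hmono
  exact (ENNReal.ofReal_le_ofReal_iff (Real.exp_pos _).le).1 hmono

theorem mu_nonneg (hμ : Continuous μ) (hA : Antitone (Gf μ)) (x : ℝ) : 0 ≤ μ x := by
  have hI : Monotone (fun t => ∫ r in (0:ℝ)..t, μ r) := by
    intro s t hst
    have h2 := Real.exp_le_exp.1 (hA hst)
    linarith
  have hd : HasDerivWithinAt (fun t => ∫ r in (0:ℝ)..t, μ r) (μ x) (Ioi x) x :=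
    (hasDerivAt_I hμ x).hasDerivWithinAt
  rw [hasDerivWithinAt_iff_tendsto_slope] at hd
  rw [show Ioi x \ {x} = Ioi x from diff_singleton_eq_self (fun h => lt_irrefl x h)] at hd
  refine ge_of_tendsto hd ?_
  filter_upwards [self_mem_nhdsWithin] with y hy
  rw [slope_def_field]
  have hxy : x < y := hy
  exact div_nonneg (sub_nonneg.2 (hI hxy.le)) (sub_nonneg.2 hxy.le)

theorem map_Ioc (hT : Measurable T)
    (hTlaw : ∀ t, P {ω | t < T ω} = ENNReal.ofReal (Gf μ t)) (c d : ℝ) :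
    P.map T (Ioc c d) = ENNReal.ofReal (Gf μ c - Gf μ d) := by
  have hν : ∀ x, P.map T (Ioi x) = ENNReal.ofReal (Gf μ x) := fun x => by
    rw [Measure.map_apply hT measurableSet_Ioi]; exact hTlaw x
  rcases le_or_gt c d with h | h
  · rw [← Ioi_diff_Ioi, measure_diff (Ioi_subset_Ioi h) measurableSet_Ioi.nullMeasurableSet
      (measure_ne_top _ _), hν, hν]
    exact (ENNReal.ofReal_sub _ (Real.exp_pos _).le).symm
  · rw [Ioc_eq_empty h.not_gt, measure_empty, eq_comm, ENNReal.ofReal_eq_zero]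
    have := antitone_Gf hTlaw h.le
    linarith

theorem lint_Ioc (hμ : Continuous μ)
    (hTlaw : ∀ t, P {ω | t < T ω} = ENNReal.ofReal (Gf μ t)) (c d : ℝ) :
    (∫⁻ r in Ioc c d, ENNReal.ofReal (μ r * Gf μ r)) = ENNReal.ofReal (Gf μ c - Gf μ d) := by
  have hμnn := mu_nonneg hμ (antitone_Gf hTlaw)
  rcases le_or_gt c d with h | h
  · rw [← ofReal_integral_eq_lintegral_ofReal (f := fun r => μ r * Gf μ r)
      ((hμ.mul (continuous_Gf hμ)).integrableOn_Ioc)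
      (ae_of_all _ fun r => mul_nonneg (hμnn r) (Real.exp_pos _).le),
      ← intervalIntegral.integral_of_le h, integral_muG hμ]
  · rw [Ioc_eq_empty h.not_gt, eq_comm]
    simp only [Measure.restrict_empty, lintegral_zero_measure, ENNReal.ofReal_eq_zero]
    have := antitone_Gf hTlaw h.le
    linarith

theorem restrict_map_eq (hT : Measurable T) (hμ : Continuous μ)
    (hTlaw : ∀ t, P {ω | t < T ω} = ENNReal.ofReal (Gf μ t)) (a b : ℝ) :
    (P.map T).restrict (Ioc a b)
      = (volume.restrict (Ioc a b)).withDensity (fun r => ENNReal.ofReal (μ r * Gf μ r)) := by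
  haveI : IsProbabilityMeasure (P.map T) := Measure.isProbabilityMeasure_map hT.aemeasurable
  refine ext_of_generate_finite (range Ioi)
    ((BorelSpace.measurable_eq (α := ℝ)).trans (borel_eq_generateFrom_Ioi ℝ)) isPiSystem_Ioi
    ?_ ?_
  · rintro _ ⟨x, rfl⟩
    rw [Measure.restrict_apply measurableSet_Ioi,
      withDensity_apply _ measurableSet_Ioi, Measure.restrict_restrict measurableSet_Ioi,
      inter_comm, Ioc_inter_Ioi, map_Ioc hT hTlaw, lint_Ioc hμ hTlaw]
  · rw [Measure.restrict_apply_univ, withDensity_apply _ MeasurableSet.univ,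
      Measure.restrict_univ, map_Ioc hT hTlaw, lint_Ioc hμ hTlaw]
theorem mean_zero (hT : Measurable T)
    (hμ : Continuous μ) {v R : ℝ → ℝ} (hvc : Continuous v) (hR : Measurable R)
    {C : ℝ} (hRb : ∀ r, |R r| ≤ C)
    (hTlaw : ∀ t, P {ω | t < T ω} = ENNReal.ofReal (Gf μ t))
    {a b : ℝ} (hab : a ≤ b) :
    (∫ ω, (if a < T ω ∧ T ω ≤ b then v (T ω) * R (T ω) else 0) ∂P)
      = ∫ ω, (∫ r in a..b, if r < T ω then v r * R r * μ r else 0) ∂P := by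
  have hGc := continuous_Gf hμ
  have hμnn := mu_nonneg hμ (antitone_Gf hTlaw)
  have hC0 : 0 ≤ C := (abs_nonneg _).trans (hRb 0)
  -- Left-hand side
  have hL : (∫ ω, (if a < T ω ∧ T ω ≤ b then v (T ω) * R (T ω) else 0) ∂P)
      = ∫ x in Ioc a b, μ x * Gf μ x * (v x * R x) := by
    have hgm : Measurable fun x => v x * R x := hvc.measurable.mul hR
    have h1 : (fun ω => if a < T ω ∧ T ω ≤ b then v (T ω) * R (T ω) else 0)
        = fun ω => (Ioc a b).indicator (fun x => v x * R x) (T ω) := by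
      funext ω; simp [Set.indicator_apply, Set.mem_Ioc]
    rw [h1, ← integral_map hT.aemeasurable
        (hgm.indicator measurableSet_Ioc).aestronglyMeasurable,
      integral_indicator measurableSet_Ioc, restrict_map_eq hT hμ hTlaw a b]
    have h2 : (fun r => ENNReal.ofReal (μ r * Gf μ r))
        = fun r => ((Real.toNNReal (μ r * Gf μ r) : ℝ≥0) : ℝ≥0∞) := rfl
    rw [h2, integral_withDensity_eq_integral_smul
        (show Measurable fun r => Real.toNNReal (μ r * Gf μ r) from
          (hμ.mul hGc).measurable.real_toNNReal) _]
    refine integral_congr_ae (Filter.Eventually.of_forall fun x => ?_)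
    have hx : ((Real.toNNReal (μ x * Gf μ x) : NNReal) : ℝ) = μ x * Gf μ x :=
      Real.coe_toNNReal _ (mul_nonneg (hμnn x) (Gf_pos (μ := μ) x).le)
    simp only [NNReal.smul_def, smul_eq_mul, hx]
  -- Right-hand side
  obtain ⟨B, hB⟩ := (isCompact_Icc (a := a) (b := b)).exists_bound_of_continuousOn
      ((hvc.mul hμ).continuousOn)
  have hB0 : 0 ≤ B := le_trans (norm_nonneg _) (hB a (left_mem_Icc.2 hab))
  set F : Ω → ℝ → ℝ := fun ω r => if r < T ω then (Ioc a b).indicator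
      (fun x => v x * R x * μ x) r else 0 with hF
  have hf0b : ∀ r ∈ Icc a b, |v r * R r * μ r| ≤ B * C := by
    intro r hr
    have h4 : v r * R r * μ r = (v r * μ r) * R r := by ring
    rw [h4, abs_mul]
    exact mul_le_mul (hB r hr) (hRb r) (abs_nonneg _) hB0
  have hFb : ∀ p : Ω × ℝ, ‖Function.uncurry F p‖ ≤ B * C := by
    rintro ⟨ω, r⟩
    simp only [Function.uncurry, hF, Real.norm_eq_abs]
    split
    · by_cases hr : r ∈ Ioc a b
      · rw [Set.indicator_of_mem hr]
        exact hf0b r (Ioc_subset_Icc_self hr)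
      · rw [Set.indicator_of_notMem hr]
        simpa using mul_nonneg hB0 hC0
    · simpa using mul_nonneg hB0 hC0
  have hFmeas : Measurable (Function.uncurry F) := by
    have h5 : Function.uncurry F = fun p : Ω × ℝ =>
        if p.2 < T p.1 then (Ioc a b).indicator (fun x => v x * R x * μ x) p.2 else 0 := rfl
    rw [h5]
    exact Measurable.ite (measurableSet_lt measurable_snd (hT.comp measurable_fst))
      ((((hvc.measurable.mul hR).mul hμ.measurable).indicator
        measurableSet_Ioc).comp measurable_snd) measurable_const
  have hFint : Integrable (Function.uncurry F) (P.prod (volume.restrict (Ioc a b))) :=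
    (integrable_const (B * C)).mono' hFmeas.aestronglyMeasurable (ae_of_all _ hFb)
  have hinner : ∀ ω, (∫ r in a..b, if r < T ω then v r * R r * μ r else 0)
      = ∫ r in Ioc a b, F ω r ∂volume := by
    intro ω
    rw [intervalIntegral.integral_of_le hab]
    refine setIntegral_congr_fun measurableSet_Ioc fun r hr => ?_
    simp only [hF, Set.indicator_of_mem hr]
  have hR1 : ∀ r ∈ Ioc a b, (∫ ω, F ω r ∂P) = (v r * R r * μ r) * Gf μ r := by
    intro r hr
    have h3 : (fun ω => F ω r) = fun ω =>
        ({ω | r < T ω}).indicator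
          (fun _ => (Ioc a b).indicator (fun x => v x * R x * μ x) r) ω := by
      funext ω
      by_cases h : r < T ω <;> simp [hF, Set.indicator_apply, h]
    have hms : MeasurableSet {ω | r < T ω} := hT measurableSet_Ioi
    rw [h3, integral_indicator_const _ hms, measureReal_def, hTlaw r,
      ENNReal.toReal_ofReal (Gf_pos (μ := μ) r).le, Set.indicator_of_mem hr, smul_eq_mul]
    ring
  calc (∫ ω, (if a < T ω ∧ T ω ≤ b then v (T ω) * R (T ω) else 0) ∂P)
      = ∫ x in Ioc a b, μ x * Gf μ x * (v x * R x) := hL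
    _ = ∫ r in Ioc a b, (v r * R r * μ r) * Gf μ r :=
        setIntegral_congr_fun measurableSet_Ioc fun x _ => by ring
    _ = ∫ r in Ioc a b, (∫ ω, F ω r ∂P) ∂volume :=
        (setIntegral_congr_fun measurableSet_Ioc fun r hr => (hR1 r hr)).symm
    _ = ∫ ω, ∫ r in Ioc a b, F ω r ∂volume ∂P := (integral_integral_swap hFint).symm
    _ = ∫ ω, (∫ r in a..b, if r < T ω then v r * R r * μ r else 0) ∂P :=
        integral_congr_ae (Filter.Eventually.of_forall fun ω => (hinner ω).symm)
theorem intInt {v R : ℝ → ℝ} (hμ : Continuous μ) (hvc : Continuous v) (hR : Measurable R)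
    {C : ℝ} (hRb : ∀ r, |R r| ≤ C) (ω : Ω) (c d : ℝ) :
    IntervalIntegrable (fun r => if r < T ω then v r * R r * μ r else 0) volume c d := by
  obtain ⟨B, hB⟩ := (isCompact_uIcc (a := c) (b := d)).exists_bound_of_continuousOn
    ((hvc.mul hμ).continuousOn)
  have hB0 : 0 ≤ B := le_trans (norm_nonneg _) (hB c left_mem_uIcc)
  have hC0 : 0 ≤ C := (abs_nonneg _).trans (hRb 0)
  have hmeas : Measurable fun r => if r < T ω then v r * R r * μ r else 0 :=
    Measurable.ite measurableSet_Iio ((hvc.measurable.mul hR).mul hμ.measurable)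
      measurable_const
  rw [intervalIntegrable_iff]
  haveI : IsFiniteMeasure (volume.restrict (Set.uIoc c d)) :=
    Real.isFiniteMeasure_restrict_Ioc _ _
  refine (integrable_const (B * C)).mono' hmeas.aestronglyMeasurable ?_
  refine (ae_restrict_iff' measurableSet_uIoc).2 (ae_of_all _ fun r hr => ?_)
  have hr' : r ∈ uIcc c d := Ioc_subset_Icc_self hr
  rw [Real.norm_eq_abs]
  split
  · have h4 : v r * R r * μ r = (v r * μ r) * R r := by ring
    rw [h4, abs_mul]
    exact mul_le_mul (hB r hr') (hRb r) (abs_nonneg _) hB0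
  · simpa using mul_nonneg hB0 hC0

theorem integrable_J (hT : Measurable T) {v R : ℝ → ℝ} (hvc : Continuous v) (hR : Measurable R)
    {C : ℝ} (hRb : ∀ r, |R r| ≤ C) {a b : ℝ} (hab : a ≤ b) :
    Integrable (fun ω => if a < T ω ∧ T ω ≤ b then v (T ω) * R (T ω) else 0) P := by
  obtain ⟨B, hB⟩ := (isCompact_Icc (a := a) (b := b)).exists_bound_of_continuousOn
    hvc.continuousOn
  have hB0 : 0 ≤ B := le_trans (norm_nonneg _) (hB a (left_mem_Icc.2 hab))
  have hC0 : 0 ≤ C := (abs_nonneg _).trans (hRb 0)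
  have hmeas : Measurable fun ω => if a < T ω ∧ T ω ≤ b then v (T ω) * R (T ω) else 0 := by
    refine Measurable.ite ?_ ((hvc.measurable.mul hR).comp hT) measurable_const
    exact hT measurableSet_Ioc
  refine (integrable_const (B * C)).mono' hmeas.aestronglyMeasurable (ae_of_all _ fun ω => ?_)
  rw [Real.norm_eq_abs]
  split
  · next h =>
    rw [abs_mul]
    exact mul_le_mul (hB (T ω) (Ioc_subset_Icc_self ⟨h.1, h.2⟩)) (hRb (T ω)) (abs_nonneg _) hB0
  · simpa using mul_nonneg hB0 hC0

theorem integrable_A (hT : Measurable T) (hμ : Continuous μ) {v R : ℝ → ℝ}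
    (hvc : Continuous v) (hR : Measurable R)
    {C : ℝ} (hRb : ∀ r, |R r| ≤ C) {a b : ℝ} (hab : a ≤ b) :
    Integrable (fun ω => ∫ r in a..b, if r < T ω then v r * R r * μ r else 0) P := by
  obtain ⟨B, hB⟩ := (isCompact_Icc (a := a) (b := b)).exists_bound_of_continuousOn
      ((hvc.mul hμ).continuousOn)
  have hB0 : 0 ≤ B := le_trans (norm_nonneg _) (hB a (left_mem_Icc.2 hab))
  have hC0 : 0 ≤ C := (abs_nonneg _).trans (hRb 0)
  set F : Ω → ℝ → ℝ := fun ω r => if r < T ω then (Ioc a b).indicator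
      (fun x => v x * R x * μ x) r else 0 with hF
  have hf0b : ∀ r ∈ Icc a b, |v r * R r * μ r| ≤ B * C := by
    intro r hr
    have h4 : v r * R r * μ r = (v r * μ r) * R r := by ring
    rw [h4, abs_mul]
    exact mul_le_mul (hB r hr) (hRb r) (abs_nonneg _) hB0
  have hFb : ∀ p : Ω × ℝ, ‖Function.uncurry F p‖ ≤ B * C := by
    rintro ⟨ω, r⟩
    simp only [Function.uncurry, hF, Real.norm_eq_abs]
    split
    · by_cases hr : r ∈ Ioc a b
      · rw [Set.indicator_of_mem hr]
        exact hf0b r (Ioc_subset_Icc_self hr)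
      · rw [Set.indicator_of_notMem hr]
        simpa using mul_nonneg hB0 hC0
    · simpa using mul_nonneg hB0 hC0
  have hFmeas : Measurable (Function.uncurry F) := by
    have h5 : Function.uncurry F = fun p : Ω × ℝ =>
        if p.2 < T p.1 then (Ioc a b).indicator (fun x => v x * R x * μ x) p.2 else 0 := rfl
    rw [h5]
    exact Measurable.ite (measurableSet_lt measurable_snd (hT.comp measurable_fst))
      ((((hvc.measurable.mul hR).mul hμ.measurable).indicator
        measurableSet_Ioc).comp measurable_snd) measurable_const
  have hFint : Integrable (Function.uncurry F) (P.prod (volume.restrict (Ioc a b))) :=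
    (integrable_const (B * C)).mono' hFmeas.aestronglyMeasurable (ae_of_all _ hFb)
  have hinner : ∀ ω, (∫ r in a..b, if r < T ω then v r * R r * μ r else 0)
      = ∫ r in Ioc a b, F ω r ∂volume := by
    intro ω
    rw [intervalIntegral.integral_of_le hab]
    refine setIntegral_congr_fun measurableSet_Ioc fun r hr => ?_
    simp only [hF, Set.indicator_of_mem hr]
  exact (hFint.integral_prod_left).congr (ae_of_all _ fun ω => (hinner ω).symm)
end HattendorffAux

/-- Hattendorff's theorem in the single-life setting: discounted surpluses over
non-overlapping time intervals are uncorrelated. -/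
theorem hattendorff_uncorrelated_increments
    {Ω : Type*} [m0 : MeasurableSpace Ω] (P : Measure Ω) [IsProbabilityMeasure P]
    (T : Ω → ℝ) (hT : Measurable T) (hTnn : ∀ ω, 0 ≤ T ω)
    (δ μ R : ℝ → ℝ)
    (hδ : Continuous δ) (hμ : Continuous μ)
    (hR : Measurable R) (hRb : ∃ C, ∀ r, |R r| ≤ C)
    -- under P, T has hazard rate μ
    (hTlaw : ∀ t : ℝ, P {ω | t < T ω}
      = ENNReal.ofReal (Real.exp (-(∫ r in (0:ℝ)..t, μ r))))
    (v : ℝ → ℝ) (hv : ∀ t, v t = Real.exp (-(∫ r in (0:ℝ)..t, δ r)))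
    -- discounted surplus Θ̃(t) = -∫₀ᵗ v(r) R(r) dM(r), written out pathwise
    (Θ : ℝ → Ω → ℝ)
    (hΘ : ∀ t ω, Θ t ω =
      -((if 0 < T ω ∧ T ω ≤ t then v (T ω) * R (T ω) else 0)
          - ∫ r in (0:ℝ)..t, (if r < T ω then v r * R r * μ r else 0))) :
    ∀ s t u w : ℝ, 0 ≤ s → s ≤ t → t ≤ u → u ≤ w →
      (∫ ω, (Θ t ω - Θ s ω) * (Θ w ω - Θ u ω) ∂P) = 0 := by
  obtain ⟨C, hRb⟩ := hRb
  have hvc : Continuous v := by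
    have h1 : Continuous fun t => ∫ r in (0:ℝ)..t, δ r :=
      continuous_iff_continuousAt.2 fun x => (HattendorffAux.hasDerivAt_I hδ x).continuousAt
    have h2 : v = fun t => Real.exp (-(∫ r in (0:ℝ)..t, δ r)) := funext hv
    rw [h2]
    exact Real.continuous_exp.comp h1.neg
  have hTlaw' : ∀ t, P {ω | t < T ω} = ENNReal.ofReal (HattendorffAux.Gf μ t) := hTlaw
  intro s t u w hs hst htu huw
  have h0u : (0:ℝ) ≤ u := le_trans hs (le_trans hst htu)
  have hII : ∀ (ω : Ω) (c d : ℝ),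
      IntervalIntegrable (fun r => if r < T ω then v r * R r * μ r else 0) volume c d :=
    fun ω c d => HattendorffAux.intInt (T := T) hμ hvc hR hRb ω c d
  set c : ℝ := ∫ r in s..t, v r * R r * μ r with hc
  have hJdiff : ∀ ω, (if 0 < T ω ∧ T ω ≤ w then v (T ω) * R (T ω) else 0)
      - (if 0 < T ω ∧ T ω ≤ u then v (T ω) * R (T ω) else 0)
      = (if u < T ω ∧ T ω ≤ w then v (T ω) * R (T ω) else 0) := by
    intro ω
    rcases le_or_gt (T ω) u with h | h
    · have h1 : T ω ≤ w := le_trans h huw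
      simp [h, h1, not_lt.2 h]
    · have h1 : 0 < T ω := lt_of_le_of_lt h0u h
      simp [not_le.2 h, h, h1]
  have hYrep : ∀ ω, Θ w ω - Θ u ω
      = (∫ r in u..w, if r < T ω then v r * R r * μ r else 0)
        - (if u < T ω ∧ T ω ≤ w then v (T ω) * R (T ω) else 0) := by
    intro ω
    rw [hΘ, hΘ, ← hJdiff ω,
      ← intervalIntegral.integral_add_adjacent_intervals (hII ω 0 u) (hII ω u w)]
    ring
  have hX : ∀ ω, u < T ω → Θ t ω - Θ s ω = c := by
    intro ω h
    have hts : (if 0 < T ω ∧ T ω ≤ t then v (T ω) * R (T ω) else 0) = 0 := by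
      have h2 : ¬ T ω ≤ t := not_le.2 (lt_of_le_of_lt htu h)
      simp [h2]
    have hss : (if 0 < T ω ∧ T ω ≤ s then v (T ω) * R (T ω) else 0) = 0 := by
      have h2 : ¬ T ω ≤ s := not_le.2 (lt_of_le_of_lt (le_trans hst htu) h)
      simp [h2]
    have h5 : (∫ r in s..t, if r < T ω then v r * R r * μ r else 0) = c := by
      rw [hc]
      refine intervalIntegral.integral_congr fun r hr => ?_
      rw [uIcc_of_le hst] at hr
      exact if_pos (lt_of_le_of_lt (le_trans hr.2 htu) h)
    rw [hΘ, hΘ, hts, hss,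
      ← intervalIntegral.integral_add_adjacent_intervals (hII ω 0 s) (hII ω s t), h5]
    ring
  have hY0 : ∀ ω, T ω ≤ u → Θ w ω - Θ u ω = 0 := by
    intro ω h
    have h1 : (∫ r in u..w, if r < T ω then v r * R r * μ r else 0)
        = ∫ r in u..w, (0:ℝ) := by
      refine intervalIntegral.integral_congr fun r hr => ?_
      rw [uIcc_of_le huw] at hr
      exact if_neg (not_lt.2 (le_trans h hr.1))
    rw [hYrep ω, h1]
    simp [not_lt.2 h]
  have hXY : ∀ ω, (Θ t ω - Θ s ω) * (Θ w ω - Θ u ω) = c * (Θ w ω - Θ u ω) := by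
    intro ω
    rcases le_or_gt (T ω) u with h | h
    · rw [hY0 ω h, mul_zero, mul_zero]
    · rw [hX ω h]
  calc (∫ ω, (Θ t ω - Θ s ω) * (Θ w ω - Θ u ω) ∂P)
      = ∫ ω, c * (Θ w ω - Θ u ω) ∂P :=
        integral_congr_ae (Filter.Eventually.of_forall hXY)
    _ = c * ∫ ω, (Θ w ω - Θ u ω) ∂P := integral_const_mul c _
    _ = 0 := by
        have hI1 : Integrable
            (fun ω => ∫ r in u..w, if r < T ω then v r * R r * μ r else 0) P :=
          HattendorffAux.integrable_A hT hμ hvc hR hRb huw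
        have hI2 : Integrable
            (fun ω => if u < T ω ∧ T ω ≤ w then v (T ω) * R (T ω) else 0) P :=
          HattendorffAux.integrable_J hT hvc hR hRb huw
        have h6 : (∫ ω, (Θ w ω - Θ u ω) ∂P)
            = (∫ ω, (∫ r in u..w, if r < T ω then v r * R r * μ r else 0) ∂P)
              - ∫ ω, (if u < T ω ∧ T ω ≤ w then v (T ω) * R (T ω) else 0) ∂P := by
          rw [← integral_sub hI1 hI2]
          exact integral_congr_ae (Filter.Eventually.of_forall hYrep)
        rw [h6, ← HattendorffAux.mean_zero hT hμ hvc hR hRb hTlaw' huw, sub_self, mul_zero]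
end

section
/- Let (δᴸ,μᴸ) be a first-order and (δᴹ,μᴹ) a second-order technical basis, Vᴸ the Thiele solution on the first-order basis with Vᴸ(n)=S̄, and suppose T has hazard μᴹ. Define the stochastic surplus Θ(t) = ∫₀ᵗ (vᴹ(r)/vᴹ(t)) dB(r) - 1_{T>t}Vᴸ(t), the systematic component c(t) = (δᴹ(t)-δᴸ(t))Vᴸ(t) - (μᴹ(t)-μᴸ(t))(S(t)-Vᴸ(t)), and Mᴹ(t) = N(t)-∫₀ᵗ1_{T>r}μᴹ(r)dr. Then dΘ(t) = δᴹ(t)Θ(t)dt + 1_{T>t}c(t)dt - (S(t)-Vᴸ(t))dMᴹ(t). -/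
open MeasureTheory Set

/-- Surplus dynamics with two technical bases (Scandinavian-style regulation), in
integrated pathwise form: `Θ(t) - Θ(0) = ∫₀ᵗ δᴹ Θ dr + ∫₀ᵗ 1_{T>r} c dr - ∫₀ᵗ (S-Vᴸ) dMᴹ`,
where `c` is the systematic component and `Mᴹ` the compensated counting process
under the experience basis. -/
theorem two_basis_surplus_dynamics
    {Ω : Type*} (n Sbar : ℝ) (hn : 0 < n)
    (T : Ω → ℝ) (hTnn : ∀ ω, 0 ≤ T ω)
    (δL μL δM μM Prem S VL c : ℝ → ℝ)
    (hδL : Continuous δL) (hμL : Continuous μL)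
    (hδM : Continuous δM) (hμM : Continuous μM)
    (hPrem : Continuous Prem) (hS : Continuous S)
    (vM : ℝ → ℝ) (hvM : ∀ t, vM t = Real.exp (-(∫ r in (0:ℝ)..t, δM r)))
    -- Vᴸ solves Thiele's equation on the first-order basis with Vᴸ(n) = S̄
    (hVL : ∀ t ∈ Icc (0:ℝ) n,
      HasDerivAt VL (δL t * VL t + Prem t - μL t * (S t - VL t)) t)
    (hVLn : VL n = Sbar)
    -- systematic component of surplus
    (hc : ∀ t, c t = (δM t - δL t) * VL t - (μM t - μL t) * (S t - VL t))
    -- stochastic surplus Θ(t) = ∫₀ᵗ (vᴹ r / vᴹ t) dB(r) - 1_{T>t} Vᴸ(t)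
    (Θ : ℝ → Ω → ℝ)
    (hΘ : ∀ t ω, Θ t ω =
      (∫ r in (0:ℝ)..t, (vM r / vM t) * (if r < T ω then Prem r else 0))
      - (if 0 < T ω ∧ T ω ≤ t then (vM (T ω) / vM t) * S (T ω) else 0)
      - (if t < T ω then VL t else 0)) :
    ∀ ω, ∀ t ∈ Icc (0:ℝ) n,
      Θ t ω - Θ 0 ω =
        (∫ r in (0:ℝ)..t, δM r * Θ r ω)
        + (∫ r in (0:ℝ)..t, (if r < T ω then c r else 0))
        - ((if 0 < T ω ∧ T ω ≤ t then S (T ω) - VL (T ω) else 0)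
            - ∫ r in (0:ℝ)..t, (if r < T ω then (S r - VL r) * μM r else 0)) := by
  intro ω t ht
  obtain ⟨ht0, htn⟩ := ht
  have hτ0 : (0:ℝ) ≤ T ω := hTnn ω
  set τ := T ω with hτdef
  -- basic facts about vᴹ
  have hvM_pos : ∀ s, 0 < vM s := fun s => by rw [hvM]; positivity
  have hvM_ne : ∀ s, vM s ≠ 0 := fun s => (hvM_pos s).ne'
  have hvM_deriv : ∀ s, HasDerivAt vM (-δM s * vM s) s := by
    intro s
    have h1 : HasDerivAt (fun u => ∫ r in (0:ℝ)..u, δM r) (δM s) s :=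
      (hδM.integral_hasStrictDerivAt 0 s).hasDerivAt
    have h2 : HasDerivAt (fun u => Real.exp (-(∫ r in (0:ℝ)..u, δM r)))
        (Real.exp (-(∫ r in (0:ℝ)..s, δM r)) * -δM s) s := (h1.neg).exp
    have he : (fun u => Real.exp (-(∫ r in (0:ℝ)..u, δM r))) = vM := by
      funext u; rw [hvM]
    rw [he] at h2
    rw [← hvM s] at h2
    simpa [mul_comm] using h2
  have hvM_cont : Continuous vM :=
    continuous_iff_continuousAt.2 fun s => (hvM_deriv s).continuousAt
  -- the accumulated premium value G
  set G : ℝ → ℝ := fun s => ∫ r in (0:ℝ)..s, vM r * Prem r with hGdef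
  have hG_deriv : ∀ s, HasDerivAt G (vM s * Prem s) s := fun s =>
    ((hvM_cont.mul hPrem).integral_hasStrictDerivAt 0 s).hasDerivAt
  have hG_cont : Continuous G :=
    continuous_iff_continuousAt.2 fun s => (hG_deriv s).continuousAt
  -- continuity facts
  have hVL_cont : ContinuousOn VL (Icc 0 n) := fun s hs =>
    ((hVL s hs).continuousAt).continuousWithinAt
  have hSVL_cont : ContinuousOn (fun r => (S r - VL r) * μM r) (Icc 0 n) :=
    (hS.continuousOn.sub hVL_cont).mul hμM.continuousOn
  have hc_cont : ContinuousOn c (Icc 0 n) := by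
    have h2 : ContinuousOn
        (fun r => (δM r - δL r) * VL r - (μM r - μL r) * (S r - VL r)) (Icc 0 n) :=
      ((hδM.continuousOn.sub hδL.continuousOn).mul hVL_cont).sub
        ((hμM.continuousOn.sub hμL.continuousOn).mul (hS.continuousOn.sub hVL_cont))
    exact h2.congr fun r _ => hc r
  have hf_cont : ContinuousOn (fun u => G u / vM u - VL u) (Icc 0 n) :=
    ((hG_cont.continuousOn.div hvM_cont.continuousOn fun x _ => hvM_ne x).sub hVL_cont)
  -- Thiele on the second-order basis for the "alive" surplus f = G/vM - VL
  have hf_deriv : ∀ s ∈ Icc (0:ℝ) n, HasDerivAt (fun u => G u / vM u - VL u)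
      (δM s * (G s / vM s - VL s) + c s + (S s - VL s) * μM s) s := by
    intro s hs
    have hq := (hG_deriv s).div (hvM_deriv s) (hvM_ne s)
    have h2 := hq.sub (hVL s hs)
    refine h2.congr_deriv ?_
    rw [hc s]
    field_simp [hvM_ne s]
    ring
  have hFTCf : ∀ a ∈ Icc (0:ℝ) n, ∀ (hsub : uIcc (0:ℝ) a ⊆ Icc 0 n),
      (∫ r in (0:ℝ)..a, (δM r * (G r / vM r - VL r) + c r + (S r - VL r) * μM r))
        = (G a / vM a - VL a) - (G 0 / vM 0 - VL 0) := by
    intro a ha hsub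
    apply intervalIntegral.integral_eq_sub_of_hasDerivAt
    · intro x hx
      exact hf_deriv x (hsub hx)
    · exact (((hδM.continuousOn.mul hf_cont).add hc_cont).add hSVL_cont).mono hsub
        |>.intervalIntegrable
  -- the "dead" surplus g = K / vM
  have hg_deriv : ∀ (K : ℝ) (s : ℝ), HasDerivAt (fun u => K / vM u) (δM s * (K / vM s)) s := by
    intro K s
    have h := (hasDerivAt_const s K).div (hvM_deriv s) (hvM_ne s)
    refine h.congr_deriv ?_
    field_simp [hvM_ne s]
    ring
  have hFTCg : ∀ (K a b : ℝ), (∫ r in a..b, δM r * (K / vM r)) = K / vM b - K / vM a := by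
    intro K a b
    apply intervalIntegral.integral_eq_sub_of_hasDerivAt (fun x _ => hg_deriv K x)
    exact (hδM.mul (continuous_const.div hvM_cont fun x => hvM_ne x)).intervalIntegrable a b
  -- evaluation of Θ while alive
  have hθ_alive : ∀ s, 0 ≤ s → s < τ → Θ s ω = G s / vM s - VL s := by
    intro s hs0 hsτ
    rw [hΘ, ← hτdef, if_neg (fun h => absurd h.2 (not_le.2 hsτ)), if_pos hsτ]
    have h1 : (∫ r in (0:ℝ)..s, (vM r / vM s) * (if r < τ then Prem r else 0))
        = ∫ r in (0:ℝ)..s, vM r * Prem r / vM s := by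
      apply intervalIntegral.integral_congr
      intro r hr
      rw [uIcc_of_le hs0] at hr
      simp only [if_pos (lt_of_le_of_lt hr.2 hsτ)]
      ring
    rw [h1, intervalIntegral.integral_div]
    simp only [hGdef]
    ring
  -- killing the indicator beyond τ
  have hsupp : ∀ (F : ℝ → ℝ) (b : ℝ), τ ≤ b →
      (∫ r in (0:ℝ)..b, (if r < τ then F r else 0)) = ∫ r in (0:ℝ)..τ, F r := by
    intro F b hτb
    have h1 : (∫ r in (0:ℝ)..b, (if r < τ then F r else 0))
        = ∫ r in (0:ℝ)..b, Set.indicator {x | x ≤ τ} F r := by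
      apply intervalIntegral.integral_congr_ae
      have hne : ∀ᵐ r : ℝ, r ≠ τ := by simp [ae_iff]
      filter_upwards [hne] with r hr _
      by_cases h : r < τ
      · simp [Set.indicator_apply, mem_setOf_eq, h, le_of_lt h]
      · have h2 : ¬ r ≤ τ := fun hle => h (lt_of_le_of_ne hle hr)
        simp [Set.indicator_apply, mem_setOf_eq, h, h2]
    rw [h1, intervalIntegral.integral_indicator ⟨hτ0, hτb⟩]
  -- evaluation of Θ after death
  have hθ_dead : ∀ s, 0 < τ → τ ≤ s → Θ s ω = (G τ - vM τ * S τ) / vM s := by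
    intro s h0τ hτs
    rw [hΘ, ← hτdef, if_pos ⟨h0τ, hτs⟩, if_neg (not_lt.2 hτs)]
    have h0 : (∫ r in (0:ℝ)..s, (vM r / vM s) * (if r < τ then Prem r else 0))
        = ∫ r in (0:ℝ)..s, (if r < τ then vM r * Prem r / vM s else 0) := by
      apply intervalIntegral.integral_congr
      intro r _
      by_cases h : r < τ
      · simp only [if_pos h]; ring
      · simp only [if_neg h, mul_zero]
    rw [h0, hsupp _ s hτs, intervalIntegral.integral_div]
    simp only [hGdef]
    ring
  -- a.e. congruence of interval integrability
  have hIIcongr : ∀ (F F2 : ℝ → ℝ) (a b : ℝ), IntervalIntegrable F volume a b →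
      (∀ᵐ r : ℝ, r ∈ uIoc a b → F2 r = F r) → IntervalIntegrable F2 volume a b := by
    intro F F2 a b hF hae
    rw [intervalIntegrable_iff] at hF ⊢
    exact hF.congr ((ae_restrict_iff' measurableSet_uIoc).2 (hae.mono fun r h hr => (h hr).symm))
  -- main case analysis
  rcases eq_or_lt_of_le hτ0 with h0τ | h0τ
  · -- τ = 0 : the policy never existed, everything vanishes
    have hz : ∀ s, 0 ≤ s → Θ s ω = 0 := by
      intro s hs0
      rw [hΘ, ← hτdef, if_neg (by rw [← h0τ]; exact fun h => lt_irrefl 0 h.1),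
        if_neg (by rw [← h0τ]; exact not_lt.2 hs0)]
      have h1 : (∫ r in (0:ℝ)..s, (vM r / vM s) * (if r < τ then Prem r else 0)) = 0 := by
        apply intervalIntegral.integral_zero_ae
        apply ae_of_all
        intro r hr
        rw [uIoc_of_le hs0] at hr
        rw [if_neg (by rw [← h0τ]; exact not_lt.2 hr.1.le), mul_zero]
      rw [h1]; ring
    have hA : (∫ r in (0:ℝ)..t, δM r * Θ r ω) = 0 := by
      apply intervalIntegral.integral_zero_ae
      apply ae_of_all
      intro r hr
      rw [uIoc_of_le ht0] at hr
      rw [hz r hr.1.le, mul_zero]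
    have hB : (∫ r in (0:ℝ)..t, (if r < τ then c r else 0)) = 0 := by
      apply intervalIntegral.integral_zero_ae
      apply ae_of_all
      intro r hr
      rw [uIoc_of_le ht0] at hr
      rw [if_neg (by rw [← h0τ]; exact not_lt.2 hr.1.le)]
    have hC : (∫ r in (0:ℝ)..t, (if r < τ then (S r - VL r) * μM r else 0)) = 0 := by
      apply intervalIntegral.integral_zero_ae
      apply ae_of_all
      intro r hr
      rw [uIoc_of_le ht0] at hr
      rw [if_neg (by rw [← h0τ]; exact not_lt.2 hr.1.le)]
    rw [hz t ht0, hz 0 le_rfl, hA, hB, hC,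
      if_neg (by rw [← h0τ]; exact fun h => lt_irrefl 0 h.1)]
    ring
  · -- 0 < τ
    have hθ00 : Θ 0 ω = G 0 / vM 0 - VL 0 := hθ_alive 0 le_rfl h0τ
    by_cases htτ : t < τ
    · -- alive at time t
      have hjump : ¬(0 < τ ∧ τ ≤ t) := fun h => absurd htτ (not_lt.2 h.2)
      rw [if_neg hjump, hθ_alive t ht0 htτ, hθ00]
      have hsub : uIcc (0:ℝ) t ⊆ Icc 0 n := by
        rw [uIcc_of_le ht0]; exact Icc_subset_Icc le_rfl htn
      have hA : (∫ r in (0:ℝ)..t, δM r * Θ r ω)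
          = ∫ r in (0:ℝ)..t, δM r * (G r / vM r - VL r) := by
        apply intervalIntegral.integral_congr
        intro r hr
        rw [uIcc_of_le ht0] at hr
        simp only [hθ_alive r hr.1 (lt_of_le_of_lt hr.2 htτ)]
      have hB : (∫ r in (0:ℝ)..t, (if r < τ then c r else 0)) = ∫ r in (0:ℝ)..t, c r := by
        apply intervalIntegral.integral_congr
        intro r hr
        rw [uIcc_of_le ht0] at hr
        simp only [if_pos (lt_of_le_of_lt hr.2 htτ)]
      have hC : (∫ r in (0:ℝ)..t, (if r < τ then (S r - VL r) * μM r else 0))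
          = ∫ r in (0:ℝ)..t, (S r - VL r) * μM r := by
        apply intervalIntegral.integral_congr
        intro r hr
        rw [uIcc_of_le ht0] at hr
        simp only [if_pos (lt_of_le_of_lt hr.2 htτ)]
      rw [hA, hB, hC]
      have hint1 : IntervalIntegrable (fun r => δM r * (G r / vM r - VL r)) volume 0 t :=
        ((hδM.continuousOn.mul hf_cont).mono hsub).intervalIntegrable
      have hint2 : IntervalIntegrable c volume 0 t := (hc_cont.mono hsub).intervalIntegrable
      have hint3 : IntervalIntegrable (fun r => (S r - VL r) * μM r) volume 0 t :=
        (hSVL_cont.mono hsub).intervalIntegrable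
      have hcomb : (∫ r in (0:ℝ)..t, δM r * (G r / vM r - VL r)) + (∫ r in (0:ℝ)..t, c r)
          + (∫ r in (0:ℝ)..t, (S r - VL r) * μM r)
          = (G t / vM t - VL t) - (G 0 / vM 0 - VL 0) := by
        rw [← intervalIntegral.integral_add hint1 hint2,
          ← intervalIntegral.integral_add (hint1.add hint2) hint3]
        exact hFTCf t ⟨ht0, htn⟩ hsub
      linarith [hcomb]
    · -- dead by time t
      push_neg at htτ
      have hτn : τ ≤ n := le_trans htτ htn
      have hτIcc : τ ∈ Icc (0:ℝ) n := ⟨hτ0, hτn⟩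
      have hsub1 : uIcc (0:ℝ) τ ⊆ Icc 0 n := by
        rw [uIcc_of_le hτ0]; exact Icc_subset_Icc le_rfl hτn
      rw [if_pos ⟨h0τ, htτ⟩, hθ_dead t h0τ htτ, hθ00]
      have hB := hsupp c t htτ
      have hC := hsupp (fun r => (S r - VL r) * μM r) t htτ
      rw [hB, hC]
      -- split the Θ-integral at τ
      have hint1 : IntervalIntegrable (fun r => δM r * (G r / vM r - VL r)) volume 0 τ :=
        ((hδM.continuousOn.mul hf_cont).mono hsub1).intervalIntegrable
      have hintg : IntervalIntegrable
          (fun r => δM r * ((G τ - vM τ * S τ) / vM r)) volume τ t :=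
        (hδM.mul (continuous_const.div hvM_cont fun x => hvM_ne x)).intervalIntegrable τ t
      have haeΘf : ∀ᵐ r : ℝ, r ∈ uIoc (0:ℝ) τ →
          δM r * Θ r ω = δM r * (G r / vM r - VL r) := by
        have hne : ∀ᵐ r : ℝ, r ≠ τ := by simp [ae_iff]
        filter_upwards [hne] with r hr hmem
        rw [uIoc_of_le hτ0] at hmem
        rw [hθ_alive r hmem.1.le (lt_of_le_of_ne hmem.2 hr)]
      have haeΘg : ∀ r ∈ uIcc τ t, δM r * Θ r ω = δM r * ((G τ - vM τ * S τ) / vM r) := by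
        intro r hr
        rw [uIcc_of_le htτ] at hr
        rw [hθ_dead r h0τ hr.1]
      have hintΘ1 : IntervalIntegrable (fun r => δM r * Θ r ω) volume 0 τ :=
        hIIcongr _ _ _ _ hint1 haeΘf
      have hintΘ2 : IntervalIntegrable (fun r => δM r * Θ r ω) volume τ t := by
        apply hIIcongr _ _ _ _ hintg
        apply ae_of_all
        intro r hr
        apply haeΘg
        rw [uIcc_of_le htτ]
        rw [uIoc_of_le htτ] at hr
        exact Ioc_subset_Icc_self hr
      have hAsplit : (∫ r in (0:ℝ)..t, δM r * Θ r ω)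
          = (∫ r in (0:ℝ)..τ, δM r * Θ r ω) + ∫ r in τ..t, δM r * Θ r ω :=
        (intervalIntegral.integral_add_adjacent_intervals hintΘ1 hintΘ2).symm
      have hA1 : (∫ r in (0:ℝ)..τ, δM r * Θ r ω)
          = ∫ r in (0:ℝ)..τ, δM r * (G r / vM r - VL r) :=
        intervalIntegral.integral_congr_ae haeΘf
      have hA2 : (∫ r in τ..t, δM r * Θ r ω)
          = ∫ r in τ..t, δM r * ((G τ - vM τ * S τ) / vM r) :=
        intervalIntegral.integral_congr haeΘg
      have hint2 : IntervalIntegrable c volume 0 τ := (hc_cont.mono hsub1).intervalIntegrable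
      have hint3 : IntervalIntegrable (fun r => (S r - VL r) * μM r) volume 0 τ :=
        (hSVL_cont.mono hsub1).intervalIntegrable
      have hcomb : (∫ r in (0:ℝ)..τ, δM r * (G r / vM r - VL r)) + (∫ r in (0:ℝ)..τ, c r)
          + (∫ r in (0:ℝ)..τ, (S r - VL r) * μM r)
          = (G τ / vM τ - VL τ) - (G 0 / vM 0 - VL 0) := by
        rw [← intervalIntegral.integral_add hint1 hint2,
          ← intervalIntegral.integral_add (hint1.add hint2) hint3]
        exact hFTCf τ hτIcc hsub1
      rw [hAsplit, hA1, hA2, hFTCg (G τ - vM τ * S τ) τ t]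
      have hKτ : (G τ - vM τ * S τ) / vM τ = G τ / vM τ - S τ := by
        field_simp [hvM_ne τ]
      linarith [hcomb, hKτ]
end

section
/- In the two-basis model, the expected discounted surplus satisfies Θ̃ᴸᴹ(t) := E_M[vᴹ(t)Θ(t)] = -Vᴸ(0) + ∫₀ᵗ φᴹ(r) c(r) dr, where φᴹ(r) = exp(-∫₀ʳ(δᴹ+μᴹ)) and c(r) = (δᴹ(r)-δᴸ(r))Vᴸ(r) - (μᴹ(r)-μᴸ(r))(S(r)-Vᴸ(r)). -/
open MeasureTheory Set


/-- Derivative of `t ↦ exp(-∫₀ᵗ f)` for continuous `f`. -/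
lemma hasDerivAt_exp_neg_integral {f : ℝ → ℝ} (hf : Continuous f) (x : ℝ) :
    HasDerivAt (fun t => Real.exp (-(∫ r in (0:ℝ)..t, f r)))
      (-f x * Real.exp (-(∫ r in (0:ℝ)..x, f r))) x := by
  have h1 : HasDerivAt (fun t => ∫ r in (0:ℝ)..t, f r) (f x) x :=
    intervalIntegral.integral_hasDerivAt_right (hf.intervalIntegrable _ _)
      hf.stronglyMeasurable.stronglyMeasurableAtFilter hf.continuousAt
  have := (h1.neg).exp
  simpa [mul_comm] using this

/-- Antitone function has nonpositive derivative. -/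
lemma antitone_deriv_nonpos {g : ℝ → ℝ} (hg : Antitone g) {d x : ℝ}
    (h : HasDerivAt g d x) : d ≤ 0 := by
  have hslope : Filter.Tendsto (slope g x) (nhdsWithin x (Ioi x)) (nhds d) := by
    have h' := (h.hasDerivWithinAt (s := Ioi x))
    have := hasDerivWithinAt_iff_tendsto_slope.mp h'
    simpa [Set.diff_singleton_eq_self, notMem_Ioi] using this
  refine le_of_tendsto hslope ?_
  filter_upwards [self_mem_nhdsWithin] with y hy
  have hxy : x < y := hy
  rw [slope_def_field]
  apply div_nonpos_of_nonpos_of_nonneg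
  · have := hg hxy.le; linarith
  · linarith

lemma tail_density_integral {ν : Measure ℝ} {μ : ℝ → ℝ} (hμ : Continuous μ)
    (hν : ∀ r : ℝ, ν (Ioi r)
      = ENNReal.ofReal (Real.exp (-(∫ s in (0:ℝ)..r, μ s))))
    (g : ℝ → ℝ) (hg : Continuous g) (t : ℝ) :
    ∫ x in Ioc 0 t, g x ∂ν
      = ∫ x in Ioc 0 t,
          (μ x * Real.exp (-(∫ s in (0:ℝ)..x, μ s))) * g x := by
  set p : ℝ → ℝ := fun r => Real.exp (-(∫ s in (0:ℝ)..r, μ s)) with hpdef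
  have hp_pos : ∀ r, 0 < p r := fun r => Real.exp_pos _
  have hp_deriv : ∀ x, HasDerivAt p (-μ x * p x) x := fun x =>
    hasDerivAt_exp_neg_integral hμ x
  have hp_cont : Continuous p := by
    rw [continuous_iff_continuousAt]
    exact fun x => (hp_deriv x).continuousAt
  have hq_cont : Continuous fun x => μ x * p x := hμ.mul hp_cont
  have hp_anti : Antitone p := by
    intro a b hab
    have h1 : ν (Ioi b) ≤ ν (Ioi a) := measure_mono (Ioi_subset_Ioi hab)
    rw [hν, hν] at h1
    exact (ENNReal.ofReal_le_ofReal_iff (hp_pos a).le).mp h1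
  have hq0 : ∀ x, 0 ≤ μ x * p x := by
    intro x
    have := antitone_deriv_nonpos hp_anti (hp_deriv x)
    linarith
  have ftc : ∀ a b : ℝ, a ≤ b → (∫ x in a..b, μ x * p x) = p a - p b := by
    intro a b hab
    have h1 : ∀ x ∈ uIcc a b, HasDerivAt (fun r => -p r) (μ x * p x) x := by
      intro x _; have h := (hp_deriv x).neg; simp only [neg_mul, neg_neg] at h; exact h
    rw [intervalIntegral.integral_eq_sub_of_hasDerivAt h1
      ((hq_cont).intervalIntegrable _ _)]
    ring
  have key1 : ∀ a b : ℝ, ν (Ioc a b) = ENNReal.ofReal (p a - p b) := by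
    intro a b
    rcases le_or_gt a b with hab | hab
    · have hU : Ioc a b ∪ Ioi b = Ioi a := Ioc_union_Ioi_eq_Ioi hab
      have hd : Disjoint (Ioc a b) (Ioi b) := Ioc_disjoint_Ioi le_rfl
      have := measure_union (μ := ν) hd measurableSet_Ioi
      rw [hU, hν, hν] at this
      rw [ENNReal.ofReal_sub _ (hp_pos b).le]
      exact ENNReal.eq_sub_of_add_eq ENNReal.ofReal_ne_top this.symm
    · rw [Ioc_eq_empty (by exact fun h => absurd h (not_lt.mpr hab.le)), measure_empty]
      rw [eq_comm, ENNReal.ofReal_eq_zero]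
      have := hp_anti hab.le
      linarith
  set m : Measure ℝ := volume.withDensity (fun r => ENNReal.ofReal (μ r * p r)) with hmdef
  have key2 : ∀ a b : ℝ, m (Ioc a b) = ENNReal.ofReal (p a - p b) := by
    intro a b
    rcases le_or_gt a b with hab | hab
    · rw [hmdef, withDensity_apply _ measurableSet_Ioc]
      have hint : IntegrableOn (fun x => μ x * p x) (Ioc a b) := hq_cont.integrableOn_Ioc
      rw [← ofReal_integral_eq_lintegral_ofReal hint
        (Filter.Eventually.of_forall fun x => hq0 x)]
      rw [← intervalIntegral.integral_of_le hab, ftc a b hab]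
    · rw [Ioc_eq_empty (by exact fun h => absurd h (not_lt.mpr hab.le)), measure_empty]
      rw [eq_comm, ENNReal.ofReal_eq_zero]
      have := hp_anti hab.le
      linarith
  have hres : ν.restrict (Ioc 0 t) = m.restrict (Ioc 0 t) := by
    refine Measure.ext_of_Ioc' _ _ (fun a b _ => ?_) (fun a b _ => ?_)
    · rw [Measure.restrict_apply measurableSet_Ioc]
      exact ne_top_of_le_ne_top (by rw [key1]; exact ENNReal.ofReal_ne_top)
        (measure_mono inter_subset_left)
    · rw [Measure.restrict_apply measurableSet_Ioc,
        Measure.restrict_apply measurableSet_Ioc, Ioc_inter_Ioc, key1, key2]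
  calc ∫ x in Ioc 0 t, g x ∂ν = ∫ x in Ioc 0 t, g x ∂m := by rw [hres]
    _ = ∫ x in Ioc 0 t, (fun x => (μ x * p x).toNNReal) x • g x := by
        rw [hmdef]
        exact setIntegral_withDensity_eq_setIntegral_smul
          (hq_cont.measurable.real_toNNReal) g measurableSet_Ioc
    _ = ∫ x in Ioc 0 t, (μ x * p x) * g x := by
        refine setIntegral_congr_fun measurableSet_Ioc fun x _ => ?_
        simp only [NNReal.smul_def, Real.coe_toNNReal _ (hq0 x)]
        rfl

lemma fubini_indicator {Ω : Type*} [MeasurableSpace Ω] (P : Measure Ω)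
    [IsProbabilityMeasure P] (T : Ω → ℝ) (hT : Measurable T)
    (h : ℝ → ℝ) (hh : Continuous h) {t : ℝ} (ht : 0 ≤ t) :
    Integrable (fun ω => ∫ r in Ioc (0:ℝ) t, (if r < T ω then h r else 0)) P ∧
    (∫ ω, (∫ r in Ioc (0:ℝ) t, (if r < T ω then h r else 0)) ∂P)
      = ∫ r in Ioc (0:ℝ) t, h r * (P {ω | r < T ω}).toReal := by
  set μ : Measure ℝ := volume.restrict (Ioc (0:ℝ) t) with hμdef
  haveI : IsFiniteMeasure μ := by
    constructor
    rw [hμdef, Measure.restrict_apply_univ]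
    exact measure_Ioc_lt_top
  set f : ℝ → Ω → ℝ := fun r ω => if r < T ω then h r else 0 with hfdef
  have hmeas : Measurable (Function.uncurry f) := by
    refine Measurable.ite ?_ (hh.measurable.comp measurable_fst) measurable_const
    exact measurableSet_lt measurable_fst (hT.comp measurable_snd)
  obtain ⟨C, hC⟩ := isCompact_Icc.exists_bound_of_continuousOn
    (s := Icc (0:ℝ) t) hh.continuousOn
  have hae : ∀ᵐ z ∂(μ.prod P), z.1 ∈ Ioc (0:ℝ) t := by
    have h0 : (μ.prod P) {z : ℝ × Ω | z.1 ∉ Ioc (0:ℝ) t} = 0 := by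
      have : {z : ℝ × Ω | z.1 ∉ Ioc (0:ℝ) t} = (Ioc (0:ℝ) t)ᶜ ×ˢ (univ : Set Ω) := by
        ext z; simp
      rw [this, Measure.prod_prod, hμdef,
        Measure.restrict_apply measurableSet_Ioc.compl]
      simp
    exact (MeasureTheory.ae_iff).mpr h0
  have hint : Integrable (Function.uncurry f) (μ.prod P) := by
    refine ⟨hmeas.aestronglyMeasurable, ?_⟩
    refine HasFiniteIntegral.of_bounded (C := |C|) ?_
    filter_upwards [hae] with z hz
    rw [hfdef]
    simp only [Function.uncurry]
    split_ifs with hzz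
    · exact le_trans (hC z.1 (Ioc_subset_Icc_self hz)) (le_abs_self C)
    · simp [abs_nonneg]
  constructor
  · exact hint.integral_prod_right
  · rw [← MeasureTheory.integral_integral_swap hint]
    refine setIntegral_congr_fun measurableSet_Ioc fun r _ => ?_
    have : (fun ω => f r ω) = Set.indicator {ω | r < T ω} (fun _ => h r) := by
      ext ω
      rw [hfdef]
      by_cases hc : r < T ω <;> simp [Set.indicator_apply, hc]
    rw [hfdef]
    simp only []
    have hs : MeasurableSet {ω | r < T ω} := hT measurableSet_Ioi
    rw [this, integral_indicator_const _ hs]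
    simp [mul_comm]
    exact Or.inl rfl

/-- Two-basis model: the modeled discounted surplus equals the initial surplus
`-Vᴸ(0)` plus the integral of the discounted systematic component:
`E_M[vᴹ(t)Θ(t)] = -Vᴸ(0) + ∫₀ᵗ φᴹ(r) c(r) dr`. -/
theorem two_basis_modeled_discounted_surplus
    {Ω : Type*} [m0 : MeasurableSpace Ω] (P : Measure Ω) [IsProbabilityMeasure P]
    (n Sbar : ℝ) (hn : 0 < n)
    (T : Ω → ℝ) (hT : Measurable T) (hTnn : ∀ ω, 0 ≤ T ω)
    (δL μL δM μM Prem S VL c : ℝ → ℝ)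
    (hδL : Continuous δL) (hμL : Continuous μL)
    (hδM : Continuous δM) (hμM : Continuous μM)
    (hPrem : Continuous Prem) (hS : Continuous S)
    -- under the experience measure, T has hazard rate μᴹ
    (hTlaw : ∀ t : ℝ, P {ω | t < T ω}
      = ENNReal.ofReal (Real.exp (-(∫ r in (0:ℝ)..t, μM r))))
    (vM φM : ℝ → ℝ)
    (hvM : ∀ t, vM t = Real.exp (-(∫ r in (0:ℝ)..t, δM r)))
    (hφM : ∀ t, φM t = Real.exp (-(∫ r in (0:ℝ)..t, (δM r + μM r))))
    -- Vᴸ solves Thiele's equation on the first-order basis with Vᴸ(n) = S̄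
    (hVL : ∀ t ∈ Icc (0:ℝ) n,
      HasDerivAt VL (δL t * VL t + Prem t - μL t * (S t - VL t)) t)
    (hVLn : VL n = Sbar)
    -- systematic component of surplus
    (hc : ∀ t, c t = (δM t - δL t) * VL t - (μM t - μL t) * (S t - VL t))
    (Θ : ℝ → Ω → ℝ)
    (hΘ : ∀ t ω, Θ t ω =
      (∫ r in (0:ℝ)..t, (vM r / vM t) * (if r < T ω then Prem r else 0))
      - (if 0 < T ω ∧ T ω ≤ t then (vM (T ω) / vM t) * S (T ω) else 0)
      - (if t < T ω then VL t else 0)) :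
    ∀ t ∈ Icc (0:ℝ) n,
      (∫ ω, vM t * Θ t ω ∂P) = -VL 0 + ∫ r in (0:ℝ)..t, φM r * c r := by
  intro t ht
  obtain ⟨ht0, htn⟩ := ht
  set p : ℝ → ℝ := fun r => Real.exp (-(∫ s in (0:ℝ)..r, μM s)) with hpdef
  have hp_pos : ∀ r, 0 < p r := fun r => Real.exp_pos _
  have hvM_pos : ∀ r, 0 < vM r := fun r => by rw [hvM]; exact Real.exp_pos _
  have hvM_eq : vM = fun r => Real.exp (-(∫ s in (0:ℝ)..r, δM s)) := funext hvM
  have hφM_eq : φM = fun r => Real.exp (-(∫ s in (0:ℝ)..r, (δM s + μM s))) :=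
    funext hφM
  have hvM_cont : Continuous vM := by
    rw [hvM_eq, continuous_iff_continuousAt]
    exact fun x => (hasDerivAt_exp_neg_integral hδM x).continuousAt
  have hp_cont : Continuous p := by
    rw [hpdef, continuous_iff_continuousAt]
    exact fun x => (hasDerivAt_exp_neg_integral hμM x).continuousAt
  have hφ_cont : Continuous φM := by
    rw [hφM_eq, continuous_iff_continuousAt]
    exact fun x => (hasDerivAt_exp_neg_integral (hδM.add hμM) x).continuousAt
  have hφ_eq : ∀ r, φM r = vM r * p r := by
    intro r
    rw [hφM, hvM, hpdef, ← Real.exp_add, ← neg_add]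
    congr 2
    exact intervalIntegral.integral_add (hδM.intervalIntegrable _ _)
      (hμM.intervalIntegrable _ _)
  have hVL_contOn : ContinuousOn VL (Icc 0 n) :=
    fun x hx => (hVL x hx).continuousAt.continuousWithinAt
  -- Step 1: rewrite integrand
  set fB : ℝ → ℝ := (Ioc (0:ℝ) t).indicator (fun x => vM x * S x) with hfBdef
  have hfB_meas : Measurable fB :=
    (hvM_cont.mul hS).measurable.indicator measurableSet_Ioc
  set gC : Ω → ℝ := Set.indicator {ω | t < T ω} (fun _ => vM t * VL t) with hgCdef
  have key : ∀ ω, vM t * Θ t ω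
      = (∫ r in Ioc (0:ℝ) t, (if r < T ω then vM r * Prem r else 0))
        - fB (T ω) - gC ω := by
    intro ω
    have hvMt : vM t ≠ 0 := (hvM_pos t).ne'
    rw [hΘ, mul_sub, mul_sub]
    have e1 : vM t * (∫ r in (0:ℝ)..t, (vM r / vM t) * (if r < T ω then Prem r else 0))
        = ∫ r in Ioc (0:ℝ) t, (if r < T ω then vM r * Prem r else 0) := by
      rw [← intervalIntegral.integral_const_mul, intervalIntegral.integral_of_le ht0]
      refine setIntegral_congr_fun measurableSet_Ioc fun r _ => ?_
      by_cases hc' : r < T ω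
      · simp only [hc', if_true]
        field_simp
      · simp [hc']
    have e2 : vM t * (if 0 < T ω ∧ T ω ≤ t then (vM (T ω) / vM t) * S (T ω) else 0)
        = fB (T ω) := by
      rw [hfBdef]
      by_cases hc' : 0 < T ω ∧ T ω ≤ t
      · simp only [hc', if_true, Set.indicator_apply, Set.mem_Ioc, hc'.1, hc'.2,
          and_self, if_true]
        field_simp
      · have : T ω ∉ Ioc (0:ℝ) t := by
          rw [Set.mem_Ioc]; exact hc'
        simp [hc', Set.indicator_apply, this]
    have e3 : vM t * (if t < T ω then VL t else 0) = gC ω := by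
      rw [hgCdef]
      by_cases hc' : t < T ω <;> simp [hc', Set.indicator_apply]
    rw [e1, e2, e3]
  -- Step 2: integrability & values
  obtain ⟨hIntA, hValA⟩ := fubini_indicator P T hT (fun r => vM r * Prem r)
    (hvM_cont.mul hPrem) ht0
  have hIntB : Integrable (fun ω => fB (T ω)) P := by
    obtain ⟨C2, hC2⟩ := isCompact_Icc.exists_bound_of_continuousOn
      (s := Icc (0:ℝ) t) (hvM_cont.mul hS).continuousOn
    refine ⟨((hfB_meas.comp hT)).aestronglyMeasurable, ?_⟩
    refine HasFiniteIntegral.of_bounded (C := |C2|) (Filter.Eventually.of_forall fun ω => ?_)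
    rw [hfBdef]
    by_cases hc' : T ω ∈ Ioc (0:ℝ) t
    · rw [Set.indicator_of_mem hc']
      exact le_trans (hC2 _ (Ioc_subset_Icc_self hc')) (le_abs_self C2)
    · rw [Set.indicator_of_notMem hc']
      simp [abs_nonneg]
  have hIntC : Integrable gC P := by
    rw [hgCdef]
    exact (integrable_const (vM t * VL t)).indicator (hT measurableSet_Ioi)
  have hν : ∀ r : ℝ, (P.map T) (Ioi r)
      = ENNReal.ofReal (Real.exp (-(∫ s in (0:ℝ)..r, μM s))) := by
    intro r
    rw [Measure.map_apply hT measurableSet_Ioi]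
    exact hTlaw r
  have hValB : ∫ ω, fB (T ω) ∂P
      = ∫ x in Ioc (0:ℝ) t, (μM x * p x) * (vM x * S x) := by
    rw [← integral_map hT.aemeasurable hfB_meas.aestronglyMeasurable]
    rw [hfBdef, integral_indicator measurableSet_Ioc]
    exact tail_density_integral hμM hν (fun x => vM x * S x) (hvM_cont.mul hS) t
  have hValC : ∫ ω, gC ω ∂P = p t * (vM t * VL t) := by
    rw [hgCdef]
    have hs : MeasurableSet {ω | t < T ω} := hT measurableSet_Ioi
    rw [integral_indicator_const _ hs, measureReal_def, hTlaw, hpdef]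
    rw [ENNReal.toReal_ofReal (Real.exp_nonneg _)]
    simp [smul_eq_mul]
  -- Step 3: split the expectation
  have hsplit : (∫ ω, vM t * Θ t ω ∂P)
      = (∫ ω, (∫ r in Ioc (0:ℝ) t, (if r < T ω then vM r * Prem r else 0)) ∂P)
        - (∫ ω, fB (T ω) ∂P) - (∫ ω, gC ω ∂P) := by
    rw [show (fun ω => vM t * Θ t ω)
        = fun ω => (∫ r in Ioc (0:ℝ) t, (if r < T ω then vM r * Prem r else 0))
          - fB (T ω) - gC ω from funext key]
    have hIntAB : Integrable (fun ω =>
        (∫ r in Ioc (0:ℝ) t, (if r < T ω then vM r * Prem r else 0)) - fB (T ω)) P :=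
      hIntA.sub hIntB
    rw [integral_sub hIntAB hIntC, integral_sub hIntA hIntB]
  -- Step 4: interval-integral forms
  have hA' : (∫ ω, (∫ r in Ioc (0:ℝ) t, (if r < T ω then vM r * Prem r else 0)) ∂P)
      = ∫ r in (0:ℝ)..t, φM r * Prem r := by
    rw [hValA, intervalIntegral.integral_of_le ht0]
    refine setIntegral_congr_fun measurableSet_Ioc fun r _ => ?_
    rw [hTlaw, ENNReal.toReal_ofReal (Real.exp_nonneg _), hφ_eq, hpdef]
    ring
  have hB' : (∫ ω, fB (T ω) ∂P) = ∫ r in (0:ℝ)..t, φM r * (μM r * S r) := by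
    rw [hValB, intervalIntegral.integral_of_le ht0]
    refine setIntegral_congr_fun measurableSet_Ioc fun r _ => ?_
    rw [hφ_eq]
    ring
  have hC' : (∫ ω, gC ω ∂P) = φM t * VL t := by
    rw [hValC, hφ_eq]; ring
  -- Step 5: FTC / Thiele
  have hc_contOn : ContinuousOn c (Icc (0:ℝ) n) := by
    rw [show c = fun x => (δM x - δL x) * VL x - (μM x - μL x) * (S x - VL x)
      from funext hc]
    exact ((hδM.sub hδL).continuousOn.mul hVL_contOn).sub
      ((hμM.sub hμL).continuousOn.mul (hS.continuousOn.sub hVL_contOn))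
  have hIcc_sub : Icc (0:ℝ) t ⊆ Icc (0:ℝ) n := Icc_subset_Icc le_rfl htn
  have hderiv : ∀ x ∈ uIcc (0:ℝ) t,
      HasDerivAt (fun r => φM r * VL r) (φM x * (Prem x - μM x * S x - c x)) x := by
    intro x hx
    rw [uIcc_of_le ht0] at hx
    have hx' : x ∈ Icc (0:ℝ) n := hIcc_sub hx
    have h1 : HasDerivAt φM (-(δM x + μM x) * φM x) x := by
      rw [hφM_eq]
      exact hasDerivAt_exp_neg_integral (hδM.add hμM) x
    have h2 := h1.mul (hVL x hx')
    refine h2.congr_deriv ?_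
    rw [hc]
    ring
  have hInt_integrand : IntervalIntegrable
      (fun x => φM x * (Prem x - μM x * S x - c x)) volume 0 t := by
    apply ContinuousOn.intervalIntegrable
    rw [uIcc_of_le ht0]
    exact hφ_cont.continuousOn.mul ((hPrem.continuousOn.sub
      (hμM.mul hS).continuousOn).sub (hc_contOn.mono hIcc_sub))
  have hftc := intervalIntegral.integral_eq_sub_of_hasDerivAt hderiv hInt_integrand
  have hφ0 : φM 0 = 1 := by
    rw [hφM, intervalIntegral.integral_same, neg_zero, Real.exp_zero]
  rw [hφ0, one_mul] at hftc
  -- split the FTC integral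
  have hi1 : IntervalIntegrable (fun x => φM x * Prem x) volume 0 t :=
    (hφ_cont.mul hPrem).intervalIntegrable _ _
  have hi2 : IntervalIntegrable (fun x => φM x * (μM x * S x)) volume 0 t :=
    (hφ_cont.mul (hμM.mul hS)).intervalIntegrable _ _
  have hi3 : IntervalIntegrable (fun x => φM x * c x) volume 0 t := by
    apply ContinuousOn.intervalIntegrable
    rw [uIcc_of_le ht0]
    exact hφ_cont.continuousOn.mul (hc_contOn.mono hIcc_sub)
  have hsplit2 : (∫ x in (0:ℝ)..t, φM x * (Prem x - μM x * S x - c x))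
      = (∫ x in (0:ℝ)..t, φM x * Prem x) - (∫ x in (0:ℝ)..t, φM x * (μM x * S x))
        - (∫ x in (0:ℝ)..t, φM x * c x) := by
    rw [← intervalIntegral.integral_sub hi1 hi2, ← intervalIntegral.integral_sub
      (hi1.sub hi2) hi3]
    congr 1
    ext x
    ring
  rw [hsplit2] at hftc
  rw [hsplit, hA', hB', hC']
  linarith
end

section
/- Let πᴸ be the net premium rate on valuation basis (δᴸ,μᴸ), i.e. the premium rate for which the Thiele solution satisfies both g(0)=0 and g(n)=S̄. If Vᴸ is the Thiele solution with the actual contractual premium rate P and Vᴸ(n)=S̄, then Vᴸ(0) = -∫₀ⁿ φᴸ(r)(P(r) - πᴸ(r)) dr, where φᴸ(r)=exp(-∫₀ʳ(δᴸ+μᴸ)). -/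
open Set

/-- The initial policy value capitalizes all future net premium loadings:
`Vᴸ(0) = -∫₀ⁿ φᴸ(r) (P(r) - πᴸ(r)) dr`. -/
theorem initial_value_capitalizes_net_loadings
    (n Sbar : ℝ) (hn : 0 < n)
    (δL μL P πL S VL g : ℝ → ℝ)
    (hδ : ContinuousOn δL (Icc 0 n)) (hμ : ContinuousOn μL (Icc 0 n))
    (hP : ContinuousOn P (Icc 0 n)) (hπ : ContinuousOn πL (Icc 0 n))
    (hS : ContinuousOn S (Icc 0 n))
    (φL : ℝ → ℝ)
    (hφ : ∀ t, φL t = Real.exp (-(∫ r in (0:ℝ)..t, (δL r + μL r))))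
    -- the net premium rate πᴸ : the Thiele solution g with premium πᴸ satisfies
    -- both boundary conditions g(0)=0 and g(n)=S̄
    (hgnet : ∀ t ∈ Icc (0:ℝ) n,
      HasDerivAt g (δL t * g t + πL t - μL t * (S t - g t)) t)
    (hg0 : g 0 = 0) (hgn : g n = Sbar)
    -- Vᴸ : the Thiele solution with the actual contractual premium P and Vᴸ(n)=S̄
    (hVL : ∀ t ∈ Icc (0:ℝ) n,
      HasDerivAt VL (δL t * VL t + P t - μL t * (S t - VL t)) t)
    (hVLn : VL n = Sbar) :
    VL 0 = -∫ r in (0:ℝ)..n, φL r * (P r - πL r) := by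
  have hδμ : ContinuousOn (fun r => δL r + μL r) (Icc 0 n) := hδ.add hμ
  -- interval integrability of δ+μ on subintervals
  have hint : ∀ t ∈ Icc (0:ℝ) n, IntervalIntegrable (fun r => δL r + μL r)
      MeasureTheory.volume 0 t := by
    intro t ht
    apply (hδμ.mono _).intervalIntegrable
    rw [uIcc_of_le ht.1]
    exact Icc_subset_Icc le_rfl ht.2
  -- the primitive I
  set I : ℝ → ℝ := fun t => ∫ r in (0:ℝ)..t, (δL r + μL r) with hI
  have hIcont : ContinuousOn I (Icc 0 n) := by
    intro t ht
    apply intervalIntegral.continuousWithinAt_primitive (by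
      simp [MeasureTheory.measure_singleton])
    rw [min_self, max_eq_right hn.le]
    exact hint n ⟨hn.le, le_rfl⟩
  have hφcont : ContinuousOn φL (Icc 0 n) := by
    have : ContinuousOn (fun t => Real.exp (-(I t))) (Icc 0 n) :=
      (hIcont.neg).rexp
    exact this.congr fun t ht => hφ t
  have hφpos : ∀ t, 0 < φL t := fun t => by rw [hφ]; exact Real.exp_pos _
  -- derivative of φ at interior points
  have hφderiv : ∀ t ∈ Ioo (0:ℝ) n, HasDerivAt φL (-(δL t + μL t) * φL t) t := by
    intro t ht
    have hmem : Icc (0:ℝ) n ∈ nhds t := Icc_mem_nhds ht.1 ht.2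
    have hIder : HasDerivAt I (δL t + μL t) t := by
      apply intervalIntegral.integral_hasDerivAt_right (hint t (Ioo_subset_Icc_self ht))
      · exact (hδμ.mono Ioo_subset_Icc_self).stronglyMeasurableAtFilter isOpen_Ioo t ht
      · exact hδμ.continuousAt hmem
    have : HasDerivAt (fun t => Real.exp (-(I t))) (Real.exp (-(I t)) * (-(δL t + μL t))) t := by
      exact (Real.hasDerivAt_exp _).comp t hIder.neg
    have heq : (fun t => Real.exp (-(I t))) = φL := by
      funext s; rw [hφ]
    rw [heq] at this
    convert this using 1
    rw [hφ]; ring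
  -- the function F = φ * (VL - g)
  set F : ℝ → ℝ := fun t => φL t * (VL t - g t) with hF
  have hVLcont : ContinuousOn VL (Icc 0 n) := fun t ht =>
    ((hVL t ht).continuousAt).continuousWithinAt
  have hgcont : ContinuousOn g (Icc 0 n) := fun t ht =>
    ((hgnet t ht).continuousAt).continuousWithinAt
  have hFcont : ContinuousOn F (Icc 0 n) := hφcont.mul (hVLcont.sub hgcont)
  have hFderiv : ∀ t ∈ Ioo (0:ℝ) n, HasDerivAt F (φL t * (P t - πL t)) t := by
    intro t ht
    have htI := Ioo_subset_Icc_self ht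
    have hd : HasDerivAt (fun s => VL s - g s)
        ((δL t + μL t) * (VL t - g t) + (P t - πL t)) t := by
      have := (hVL t htI).sub (hgnet t htI)
      exact this.congr_deriv (by ring)
    have := (hφderiv t ht).mul hd
    exact this.congr_deriv (by ring)
  have hintegrand : IntervalIntegrable (fun r => φL r * (P r - πL r))
      MeasureTheory.volume 0 n := by
    apply ((hφcont.mul (hP.sub hπ)).mono _).intervalIntegrable
    rw [uIcc_of_le hn.le]
  have key : ∫ r in (0:ℝ)..n, φL r * (P r - πL r) = F n - F 0 := by
    apply intervalIntegral.integral_eq_sub_of_hasDeriv_right_of_le hn.le hFcont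
      (fun t ht => ((hFderiv t ht).hasDerivWithinAt)) hintegrand
  have hφ0 : φL 0 = 1 := by rw [hφ]; simp
  have hFn : F n = 0 := by simp [hF, hVLn, hgn]
  have hF0 : F 0 = VL 0 := by simp [hF, hφ0, hg0]
  rw [key, hFn, hF0]; ring
end

section
/- Let τᴸ be any valuation premium rate substituted for the contractual premium in computing policy values Vᴸ on basis (δᴸ,μᴸ) with Vᴸ(n)=S̄, and let πᴸ be the net premium rate on the same basis. Then Vᴸ(0) = -∫₀ⁿ φᴸ(r)(τᴸ(r) - πᴸ(r)) dr. -/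
open Set

/-- The initial policy value capitalizes the valuation premium loadings:
`Vᴸ(0) = -∫₀ⁿ φᴸ(r) (τᴸ(r) - πᴸ(r)) dr`. -/
theorem initial_value_capitalizes_valuation_loadings
    (n Sbar : ℝ) (hn : 0 < n)
    (δL μL τL πL S VL g : ℝ → ℝ)
    (hδ : ContinuousOn δL (Icc 0 n)) (hμ : ContinuousOn μL (Icc 0 n))
    (hτ : ContinuousOn τL (Icc 0 n)) (hπ : ContinuousOn πL (Icc 0 n))
    (hS : ContinuousOn S (Icc 0 n))
    (φL : ℝ → ℝ)
    (hφ : ∀ t, φL t = Real.exp (-(∫ r in (0:ℝ)..t, (δL r + μL r))))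
    -- the net premium rate πᴸ on the valuation basis
    (hgnet : ∀ t ∈ Icc (0:ℝ) n,
      HasDerivAt g (δL t * g t + πL t - μL t * (S t - g t)) t)
    (hg0 : g 0 = 0) (hgn : g n = Sbar)
    -- Vᴸ : the Thiele solution with the valuation premium rate τᴸ and Vᴸ(n)=S̄
    (hVL : ∀ t ∈ Icc (0:ℝ) n,
      HasDerivAt VL (δL t * VL t + τL t - μL t * (S t - VL t)) t)
    (hVLn : VL n = Sbar) :
    VL 0 = -∫ r in (0:ℝ)..n, φL r * (τL r - πL r) := by
  have hφL : φL = fun t => Real.exp (-(∫ r in (0:ℝ)..t, (δL r + μL r))) := funext hφ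
  subst hφL
  set f : ℝ → ℝ := fun t => δL t + μL t with hf
  have hfc : ContinuousOn f (Icc 0 n) := hδ.add hμ
  have hnle : (0:ℝ) ≤ n := hn.le
  have huIcc : uIcc (0:ℝ) n = Icc 0 n := uIcc_of_le hnle
  have hfint : MeasureTheory.IntegrableOn f (Icc 0 n) MeasureTheory.volume := hfc.integrableOn_Icc
  set G : ℝ → ℝ := fun t => ∫ r in (0:ℝ)..t, f r with hG
  have hGcont : ContinuousOn G (Icc 0 n) := by
    have := intervalIntegral.continuousOn_primitive_interval (a := 0) (b := n)
      (f := f) (μ := MeasureTheory.volume) (by rwa [huIcc])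
    rwa [huIcc] at this
  set φ : ℝ → ℝ := fun t => Real.exp (-(G t)) with hφdef
  have hφcont : ContinuousOn φ (Icc 0 n) :=
    Real.continuous_exp.comp_continuousOn hGcont.neg
  -- derivative of φ on the interior
  have hφderiv : ∀ t ∈ Ioo (0:ℝ) n, HasDerivAt φ (-(f t) * φ t) t := by
    intro t ht
    have htIcc : Icc (0:ℝ) n ∈ nhds t := Icc_mem_nhds ht.1 ht.2
    have hfat : ContinuousAt f t := hfc.continuousAt htIcc
    have hmeas : StronglyMeasurableAtFilter f (nhds t) := by
      exact ⟨Icc 0 n, htIcc, hfc.aestronglyMeasurable measurableSet_Icc⟩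
    have hintt : IntervalIntegrable f MeasureTheory.volume 0 t := by
      have h1 : MeasureTheory.IntegrableOn f (Icc 0 t) MeasureTheory.volume :=
        hfint.mono_set (Icc_subset_Icc_right ht.2.le)
      exact (intervalIntegrable_iff_integrableOn_Icc_of_le ht.1.le).mpr h1
    have hGd : HasDerivAt G (f t) t :=
      intervalIntegral.integral_hasDerivAt_right hintt hmeas hfat
    have := (hGd.neg).exp
    convert this using 1
    simp [hφdef]
    exact mul_comm _ _
  -- derivative of the difference h = VL - g
  have hcV : ContinuousOn VL (Icc 0 n) := fun t ht => (hVL t ht).continuousAt.continuousWithinAt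
  have hcg : ContinuousOn g (Icc 0 n) := fun t ht => (hgnet t ht).continuousAt.continuousWithinAt
  set F : ℝ → ℝ := fun t => φ t * (VL t - g t) with hF
  have hFcont : ContinuousOn F (Icc 0 n) := hφcont.mul (hcV.sub hcg)
  have hFderiv : ∀ t ∈ Ioo (0:ℝ) n, HasDerivAt F (φ t * (τL t - πL t)) t := by
    intro t ht
    have htIcc : t ∈ Icc (0:ℝ) n := ⟨ht.1.le, ht.2.le⟩
    have hd := (hφderiv t ht).mul ((hVL t htIcc).sub (hgnet t htIcc))
    convert hd using 1
    · rfl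
    · rfl
    · rfl
    simp only [f, Pi.sub_apply]
    ring
  have hintF : IntervalIntegrable (fun t => φ t * (τL t - πL t)) MeasureTheory.volume 0 n := by
    apply ContinuousOn.intervalIntegrable
    rw [huIcc]
    exact hφcont.mul (hτ.sub hπ)
  have key := intervalIntegral.integral_eq_sub_of_hasDeriv_right_of_le hnle hFcont (fun t ht => (hFderiv t ht).hasDerivWithinAt) hintF
  have hφ0 : φ 0 = 1 := by simp [hφdef, hG]
  have : F n = 0 := by simp [hF, hVLn, hgn]
  rw [this, hF] at key
  simp [hφ0, hg0] at key
  linarith [key]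
end

section
/- With valuation premium rate τᴸ and benefits (Sᴸ, S̄ᴸ) in the valuation actuarial basis, contractual cashflows with premium P=τᴹ and benefits (Sᴹ, S̄ᴹ), experience hazard μᴹ and discount vᴹ, define the augmented systematic component ĉ(t) = (δᴹ(t)-δᴸ(t))Vᴸ(t) - (μᴹ(t)-μᴸ(t))(Sᴸ(t)-Vᴸ(t)) + (τᴹ(t)-τᴸ(t)) - μᴹ(t)(Sᴹ(t)-Sᴸ(t)). Then the expected discounted surplus satisfies Θ̃(t) = -Vᴸ(0) + ∫₀ᵗ φᴹ(r) ĉ(r) dr for 0 ≤ t < n. -/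
open MeasureTheory Set

private lemma exp_negint_hasDerivAt (f : ℝ → ℝ) (hf : Continuous f) (u : ℝ) :
    HasDerivAt (fun x => Real.exp (-(∫ r in (0:ℝ)..x, f r)))
      (-(f u) * Real.exp (-(∫ r in (0:ℝ)..u, f r))) u := by
  have h1 : HasDerivAt (fun x => ∫ r in (0:ℝ)..x, f r) (f u) u :=
    intervalIntegral.integral_hasDerivAt_right (hf.intervalIntegrable 0 u)
      (hf.stronglyMeasurableAtFilter _ _) hf.continuousAt
  have h2 := (h1.neg).exp
  convert h2 using 1
  · rfl
  · simp only [Pi.neg_apply]; ring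

/-- Three-actuarial-basis model: with valuation premium `τᴸ` and valuation
benefits `(Sᴸ, S̄ᴸ)`, contractual premium `P = τᴹ` and benefits `(Sᴹ, S̄ᴹ)`,
the modeled discounted surplus satisfies
`Θ̃(t) = -Vᴸ(0) + ∫₀ᵗ φᴹ(r) ĉ(r) dr` for `0 ≤ t < n`, where `ĉ` is the
augmented systematic component. -/
theorem three_basis_modeled_discounted_surplus
    {Ω : Type*} [m0 : MeasurableSpace Ω] (P : Measure Ω) [IsProbabilityMeasure P]
    (n SbarL SbarM : ℝ) (hn : 0 < n)
    (T : Ω → ℝ) (hT : Measurable T) (hTnn : ∀ ω, 0 ≤ T ω)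
    (δL μL δM μM τL τM SL SM VL chat : ℝ → ℝ)
    (hδL : Continuous δL) (hμL : Continuous μL)
    (hδM : Continuous δM) (hμM : Continuous μM)
    (hτL : Continuous τL) (hτM : Continuous τM)
    (hSL : Continuous SL) (hSM : Continuous SM)
    -- under the experience measure, T has hazard rate μᴹ
    (hTlaw : ∀ t : ℝ, P {ω | t < T ω}
      = ENNReal.ofReal (Real.exp (-(∫ r in (0:ℝ)..t, μM r))))
    (vM φM : ℝ → ℝ)
    (hvM : ∀ t, vM t = Real.exp (-(∫ r in (0:ℝ)..t, δM r)))
    (hφM : ∀ t, φM t = Real.exp (-(∫ r in (0:ℝ)..t, (δM r + μM r))))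
    -- Vᴸ solves Thiele's equation on the valuation actuarial basis with Vᴸ(n) = S̄ᴸ
    (hVL : ∀ t ∈ Icc (0:ℝ) n,
      HasDerivAt VL (δL t * VL t + τL t - μL t * (SL t - VL t)) t)
    (hVLn : VL n = SbarL)
    -- augmented systematic component of surplus
    (hchat : ∀ t, chat t =
      (δM t - δL t) * VL t - (μM t - μL t) * (SL t - VL t)
      + (τM t - τL t) - μM t * (SM t - SL t))
    -- surplus Θ(t) = ∫₀ᵗ (vᴹ r / vᴹ t) dBᴹ(r) - 1_{T>t} Vᴸ(t)
    (Θ : ℝ → Ω → ℝ)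
    (hΘ : ∀ t ω, Θ t ω =
      (∫ r in (0:ℝ)..t, (vM r / vM t) * (if r < T ω then τM r else 0))
      - (if 0 < T ω ∧ T ω ≤ t then (vM (T ω) / vM t) * SM (T ω) else 0)
      - (if t < T ω then VL t else 0)) :
    ∀ t, 0 ≤ t → t < n →
      (∫ ω, vM t * Θ t ω ∂P) = -VL 0 + ∫ r in (0:ℝ)..t, φM r * chat r := by
  intro t ht0 htn
  -- survival function
  set s : ℝ → ℝ := fun u => Real.exp (-(∫ r in (0:ℝ)..u, μM r)) with hs_def
  have hs_pos : ∀ u, 0 < s u := fun u => Real.exp_pos _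
  have hs_deriv : ∀ u, HasDerivAt s (-(μM u) * s u) u := exp_negint_hasDerivAt μM hμM
  have hs_cont : Continuous s :=
    continuous_iff_continuousAt.2 fun u => (hs_deriv u).continuousAt
  have hs_zero : s 0 = 1 := by simp [hs_def]
  have hvM_cont : Continuous vM := by
    have : vM = fun u => Real.exp (-(∫ r in (0:ℝ)..u, δM r)) := funext hvM
    rw [this]
    exact continuous_iff_continuousAt.2 fun u =>
      (exp_negint_hasDerivAt δM hδM u).continuousAt
  have hvM_pos : ∀ u, 0 < vM u := fun u => by rw [hvM]; exact Real.exp_pos _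
  have hφ_eq : ∀ u, φM u = vM u * s u := by
    intro u
    rw [hφM, hvM, hs_def]
    rw [intervalIntegral.integral_add (hδM.intervalIntegrable _ _)
      (hμM.intervalIntegrable _ _), ← Real.exp_add]
    ring_nf
  have hφM_cont : Continuous φM := by
    have : φM = fun u => vM u * s u := funext hφ_eq
    rw [this]; exact hvM_cont.mul hs_cont
  have hφM_deriv : ∀ u, HasDerivAt φM (-(δM u + μM u) * φM u) u := by
    intro u
    have hh : φM = fun x => Real.exp (-(∫ r in (0:ℝ)..x, (δM r + μM r))) := funext hφM
    rw [hh]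
    have := exp_negint_hasDerivAt (fun r => δM r + μM r) (hδM.add hμM) u
    simpa [hφM] using this
  have hφM_zero : φM 0 = 1 := by simp [hφM]
  -- the law of T
  have hν_Ioi : ∀ x : ℝ, Measure.map T P (Ioi x) = ENNReal.ofReal (s x) := by
    intro x
    rw [Measure.map_apply hT measurableSet_Ioi]
    exact hTlaw x
  have hs_one_of_neg : ∀ x < (0:ℝ), s x = 1 := by
    intro x hx
    have huniv : {ω | x < T ω} = univ :=
      eq_univ_of_forall fun ω => lt_of_lt_of_le hx (hTnn ω)
    have h := hTlaw x
    rw [huniv, measure_univ] at h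
    exact (ENNReal.ofReal_eq_one.mp h.symm)
  have hs_max : ∀ x : ℝ, s x = s (max x 0) := by
    intro x
    rcases lt_or_ge x 0 with h | h
    · rw [max_eq_right h.le, hs_zero, hs_one_of_neg x h]
    · rw [max_eq_left h]
  -- monotonicity ⇒ nonnegativity of μM on (0, ∞)
  have hs_anti : ∀ a b : ℝ, a ≤ b → s b ≤ s a := by
    intro a b hab
    have h1 := hν_Ioi a
    have h2 := hν_Ioi b
    have hle : Measure.map T P (Ioi b) ≤ Measure.map T P (Ioi a) :=
      measure_mono (Ioi_subset_Ioi hab)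
    rw [h1, h2] at hle
    exact (ENNReal.ofReal_le_ofReal_iff (hs_pos a).le).mp hle
  have hμM_nonneg : ∀ r : ℝ, 0 < r → 0 ≤ μM r := by
    intro r hr
    set M : ℝ → ℝ := fun u => ∫ x in (0:ℝ)..u, μM x with hM_def
    have hM_deriv : HasDerivAt M (μM r) r :=
      intervalIntegral.integral_hasDerivAt_right (hμM.intervalIntegrable 0 r)
        (hμM.stronglyMeasurableAtFilter _ _) hμM.continuousAt
    have hM_mono : ∀ a b : ℝ, 0 ≤ a → a ≤ b → M a ≤ M b := by
      intro a b ha hab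
      have h := hs_anti a b hab
      simp only [hs_def] at h
      have h2 := Real.exp_le_exp.mp h
      simp only [hM_def]
      linarith
    have htend : Filter.Tendsto (slope M r) (nhdsWithin r (Ioi r)) (nhds (μM r)) := by
      have h := hasDerivAt_iff_tendsto_slope.mp hM_deriv
      exact h.mono_left (nhdsWithin_mono r fun x hx => ne_of_gt hx)
    refine ge_of_tendsto htend ?_
    filter_upwards [self_mem_nhdsWithin] with x hx
    have hx' : r < x := hx
    have h1 : M r ≤ M x := hM_mono r x hr.le hx'.le
    rw [slope_def_field]
    exact div_nonneg (by linarith) (by linarith)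
  -- the density of the law of T
  set f : ℝ → NNReal := fun r => Real.toNNReal (if 0 < r then μM r * s r else 0)
    with hf_def
  have hf_meas : Measurable f := by
    apply Measurable.real_toNNReal
    exact Measurable.ite measurableSet_Ioi ((hμM.mul hs_cont).measurable)
      measurable_const
  have hν_eq : Measure.map T P = volume.withDensity (fun r => (f r : ENNReal)) := by
    haveI : IsFiniteMeasure (Measure.map T P) := by
      constructor
      rw [Measure.map_apply hT MeasurableSet.univ]
      simp
    have hIic : Measure.map T P (Iic 0) = 0 := by
      have hcompl : (Iic (0:ℝ)) = (Ioi 0)ᶜ := by simp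
      rw [hcompl, measure_compl measurableSet_Ioi (measure_ne_top _ _), hν_Ioi,
        hs_zero]
      simp only [ENNReal.ofReal_one]
      rw [Measure.map_apply hT MeasurableSet.univ]
      simp
    refine Measure.ext_of_Ioc _ _ ?_
    intro a b hab
    have hIoc_ν : Measure.map T P (Ioc a b)
        = ENNReal.ofReal (s a) - ENNReal.ofReal (s b) := by
      have hdiff : Ioc a b = Ioi a \ Ioi b := by
        ext x; simp [and_comm, not_lt]
      rw [hdiff, measure_diff (Ioi_subset_Ioi hab.le) measurableSet_Ioi.nullMeasurableSet
        (measure_ne_top _ _), hν_Ioi, hν_Ioi]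
    rcases le_or_gt b 0 with hb | hb
    · -- both sides vanish
      have h1 : Measure.map T P (Ioc a b) = 0 := by
        refine le_antisymm ?_ zero_le
        refine le_trans (measure_mono ?_) hIic.le
        exact fun x hx => le_trans hx.2 hb
      have h2 : (volume.withDensity fun r => (f r : ENNReal)) (Ioc a b) = 0 := by
        rw [withDensity_apply _ measurableSet_Ioc]
        have hz : ∀ᵐ r ∂(volume.restrict (Ioc a b)), (f r : ENNReal) = 0 := by
          filter_upwards [ae_restrict_mem measurableSet_Ioc] with r hr
          have hr0 : ¬ (0 < r) := not_lt.mpr (le_trans hr.2 hb)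
          simp [hf_def, hr0]
        rw [lintegral_congr_ae hz]
        simp
      rw [h1, h2]
    · -- 0 < b
      have ha'b : max a 0 ≤ b := max_le hab.le hb.le
      have hν_val : Measure.map T P (Ioc a b) = ENNReal.ofReal (s (max a 0) - s b) := by
        rw [hIoc_ν, ← ENNReal.ofReal_sub _ (hs_pos b).le, hs_max a]
      rw [hν_val, withDensity_apply _ measurableSet_Ioc]
      symm
      calc ∫⁻ r in Ioc a b, (f r : ENNReal)
          = ∫⁻ r in Ioc a b,
              (Ioi (0:ℝ)).indicator (fun x => ENNReal.ofReal (μM x * s x)) r := by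
            refine lintegral_congr fun r => ?_
            rcases lt_or_ge 0 r with h | h
            · rw [indicator_of_mem (mem_Ioi.mpr h)]
              simp [hf_def, h, ENNReal.ofReal]
            · rw [indicator_of_notMem (by simpa using not_lt.mpr h)]
              simp [hf_def, not_lt.mpr h]
        _ = ∫⁻ r in Ioc a b ∩ Ioi 0, ENNReal.ofReal (μM r * s r) := by
            rw [lintegral_indicator measurableSet_Ioi, Measure.restrict_restrict
              measurableSet_Ioi]
            rw [inter_comm]
        _ = ∫⁻ r in Ioc (max a 0) b, ENNReal.ofReal (μM r * s r) := by
            have hseteq : Ioc a b ∩ Ioi (0:ℝ) = Ioc (max a 0) b := by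
              ext x
              simp only [mem_inter_iff, mem_Ioc, mem_Ioi, max_lt_iff]
              constructor
              · rintro ⟨⟨h1, h2⟩, h3⟩; exact ⟨⟨h1, h3⟩, h2⟩
              · rintro ⟨⟨h1, h3⟩, h2⟩; exact ⟨⟨h1, h2⟩, h3⟩
            rw [hseteq]
        _ = ENNReal.ofReal (∫ r in Ioc (max a 0) b, μM r * s r) := by
            rw [← ofReal_integral_eq_lintegral_ofReal (f := fun r => μM r * s r)
              ((hμM.mul hs_cont).integrableOn_Ioc) ?_]
            filter_upwards [ae_restrict_mem measurableSet_Ioc] with r hr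
            have hr0 : 0 < r := lt_of_le_of_lt (le_max_right a 0) hr.1
            exact mul_nonneg (hμM_nonneg r hr0) (hs_pos r).le
        _ = ENNReal.ofReal (s (max a 0) - s b) := by
            congr 1
            rw [← intervalIntegral.integral_of_le ha'b]
            have hieq : ∫ r in (max a 0)..b, μM r * s r
                = (fun u => -(s u)) b - (fun u => -(s u)) (max a 0) := by
              refine intervalIntegral.integral_eq_sub_of_hasDerivAt
                (f := fun u => -(s u)) (f' := fun u => μM u * s u)
                (a := max a 0) (b := b)
                (fun u _ => ?_) ((hμM.mul hs_cont).intervalIntegrable _ _)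
              have h := (hs_deriv u).neg
              convert h using 1
              · rfl
              · ring
            rw [hieq]; ring
  -- finiteness instances
  haveI hres_fin : IsFiniteMeasure (volume.restrict (Ioc (0:ℝ) t)) := by
    constructor
    rw [Measure.restrict_apply_univ, Real.volume_Ioc]
    exact ENNReal.ofReal_lt_top
  -- the pure-endowment term
  have hSmeas : MeasurableSet {ω | t < T ω} := hT measurableSet_Ioi
  have hG : ∫ ω, (if t < T ω then vM t * VL t else 0) ∂P = φM t * VL t := by
    have h1 : (fun ω => if t < T ω then vM t * VL t else 0)
        = fun ω => ({ω | t < T ω} : Set Ω).indicator (fun _ => vM t * VL t) ω := by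
      funext ω
      by_cases h : t < T ω <;> simp [indicator, h]
    rw [h1, integral_indicator_const _ hSmeas, measureReal_def, hTlaw t,
      ENNReal.toReal_ofReal (Real.exp_pos _).le, hφ_eq t]
    simp only [smul_eq_mul, hs_def]
    ring
  -- the death-benefit term
  have hE : ∫ ω, (if 0 < T ω ∧ T ω ≤ t then vM (T ω) * SM (T ω) else 0) ∂P
      = ∫ r in (0:ℝ)..t, φM r * (μM r * SM r) := by
    have h1 : (fun ω => if 0 < T ω ∧ T ω ≤ t then vM (T ω) * SM (T ω) else 0)
        = fun ω => (Ioc (0:ℝ) t).indicator (fun x => vM x * SM x) (T ω) := by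
      funext ω
      by_cases h : 0 < T ω ∧ T ω ≤ t
      · rw [if_pos h, indicator_of_mem (mem_Ioc.mpr h)]
      · rw [if_neg h, indicator_of_notMem (fun hc => h (mem_Ioc.mp hc))]
    rw [h1]
    have hsm : AEStronglyMeasurable
        ((Ioc (0:ℝ) t).indicator (fun x => vM x * SM x)) (Measure.map T P) :=
      ((hvM_cont.mul hSM).stronglyMeasurable.indicator measurableSet_Ioc).aestronglyMeasurable
    rw [← integral_map hT.aemeasurable hsm, hν_eq,
      integral_indicator measurableSet_Ioc,
      setIntegral_withDensity_eq_setIntegral_smul hf_meas _ measurableSet_Ioc]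
    rw [intervalIntegral.integral_of_le ht0]
    refine setIntegral_congr_fun measurableSet_Ioc fun r hr => ?_
    have hr0 : 0 < r := hr.1
    have hnn : 0 ≤ μM r * s r := mul_nonneg (hμM_nonneg r hr0) (hs_pos r).le
    show (f r : ℝ) • (vM r * SM r) = φM r * (μM r * SM r)
    simp only [hf_def, if_pos hr0, smul_eq_mul]
    rw [Real.coe_toNNReal _ hnn, hφ_eq]
    ring
  -- the premium term: joint integrability and Fubini
  set F : Ω → ℝ → ℝ := fun ω r => vM r * (if r < T ω then τM r else 0) with hF_def
  have hU : MeasurableSet {p : Ω × ℝ | p.2 < T p.1} :=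
    measurableSet_lt measurable_snd (hT.comp measurable_fst)
  have hFform : Function.uncurry F
      = ({p : Ω × ℝ | p.2 < T p.1}).indicator (fun p => vM p.2 * τM p.2) := by
    funext p
    rcases p with ⟨ω, r⟩
    by_cases h : r < T ω
    · simp only [hF_def, Function.uncurry_apply_pair, if_pos h]
      exact (Set.indicator_of_mem
        (show (ω, r) ∈ {p : Ω × ℝ | p.2 < T p.1} from h)
        (fun p => vM p.2 * τM p.2)).symm
    · simp only [hF_def, Function.uncurry_apply_pair, if_neg h, mul_zero]
      exact (Set.indicator_of_notMem
        (show (ω, r) ∉ {p : Ω × ℝ | p.2 < T p.1} from h)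
        (fun p => vM p.2 * τM p.2)).symm
  have hFint : Integrable (Function.uncurry F)
      (P.prod (volume.restrict (Ioc (0:ℝ) t))) := by
    obtain ⟨C, hC⟩ := (isCompact_Icc (a := (0:ℝ)) (b := t)).exists_bound_of_continuousOn
      (hvM_cont.mul hτM).continuousOn
    constructor
    · rw [hFform]
      exact (((hvM_cont.mul hτM).stronglyMeasurable.comp_measurable
        measurable_snd).indicator hU).aestronglyMeasurable
    · refine HasFiniteIntegral.of_bounded (C := C) ?_
      have hmem : ∀ᵐ p ∂(P.prod (volume.restrict (Ioc (0:ℝ) t))),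
          p.2 ∈ Ioc (0:ℝ) t := by
        rw [Filter.eventually_iff, mem_ae_iff]
        have hset : {p : Ω × ℝ | p.2 ∈ Ioc (0:ℝ) t}ᶜ
            = (univ : Set Ω) ×ˢ (Ioc (0:ℝ) t)ᶜ := by
          ext p; simp
        rw [hset, Measure.prod_prod, Measure.restrict_apply
          measurableSet_Ioc.compl]
        simp
      filter_upwards [hmem] with p hp
      rw [hFform]
      refine le_trans (norm_indicator_le_norm_self _ _) ?_
      exact hC p.2 ⟨hp.1.le, hp.2⟩
  have hD : ∫ ω, (∫ r in Ioc (0:ℝ) t, vM r * (if r < T ω then τM r else 0)) ∂P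
      = ∫ r in (0:ℝ)..t, φM r * τM r := by
    have hgoal : (fun ω => ∫ r in Ioc (0:ℝ) t, vM r * (if r < T ω then τM r else 0))
        = fun ω => ∫ r, F ω r ∂(volume.restrict (Ioc (0:ℝ) t)) := rfl
    rw [hgoal, integral_integral_swap hFint]
    rw [intervalIntegral.integral_of_le ht0]
    refine setIntegral_congr_fun measurableSet_Ioc fun r hr => ?_
    show ∫ ω, vM r * (if r < T ω then τM r else 0) ∂P = φM r * τM r
    have h2 : (fun ω => vM r * (if r < T ω then τM r else 0))
        = fun ω => ({ω | r < T ω} : Set Ω).indicator (fun _ => vM r * τM r) ω := by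
      funext ω
      by_cases h : r < T ω <;> simp [indicator, h]
    rw [h2, integral_indicator_const _
      (show MeasurableSet {ω | r < T ω} from hT measurableSet_Ioi), measureReal_def, hTlaw r,
      ENNReal.toReal_ofReal (Real.exp_pos _).le, hφ_eq r]
    simp only [smul_eq_mul, hs_def]
    ring
  -- integrability of the three pieces
  have hInt_D : Integrable
      (fun ω => ∫ r in Ioc (0:ℝ) t, vM r * (if r < T ω then τM r else 0)) P :=
    hFint.integral_prod_left
  have hInt_E : Integrable
      (fun ω => if 0 < T ω ∧ T ω ≤ t then vM (T ω) * SM (T ω) else 0) P := by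
    have h1 : (fun ω => if 0 < T ω ∧ T ω ≤ t then vM (T ω) * SM (T ω) else 0)
        = fun ω => (Ioc (0:ℝ) t).indicator (fun x => vM x * SM x) (T ω) := by
      funext ω
      by_cases h : 0 < T ω ∧ T ω ≤ t
      · rw [if_pos h, indicator_of_mem (mem_Ioc.mpr h)]
      · rw [if_neg h, indicator_of_notMem (fun hc => h (mem_Ioc.mp hc))]
    rw [h1]
    constructor
    · exact (((hvM_cont.mul hSM).stronglyMeasurable.indicator
        measurableSet_Ioc).comp_measurable hT).aestronglyMeasurable
    · obtain ⟨C, hC⟩ := (isCompact_Icc (a := (0:ℝ)) (b := t)).exists_bound_of_continuousOn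
        (hvM_cont.mul hSM).continuousOn
      have hC0 : 0 ≤ C := le_trans (norm_nonneg _) (hC 0 ⟨le_refl 0, ht0⟩)
      refine HasFiniteIntegral.of_bounded (C := C) (ae_of_all _ fun ω => ?_)
      by_cases h : T ω ∈ Ioc (0:ℝ) t
      · rw [indicator_of_mem h]
        exact hC (T ω) ⟨h.1.le, h.2⟩
      · rw [indicator_of_notMem h]
        simpa using hC0
  have hInt_G : Integrable (fun ω => if t < T ω then vM t * VL t else 0) P := by
    have h1 : (fun ω => if t < T ω then vM t * VL t else 0)
        = ({ω | t < T ω} : Set Ω).indicator (fun _ => vM t * VL t) := by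
      funext ω
      by_cases h : t < T ω <;> simp [indicator, h]
    rw [h1]
    exact (integrable_const _).indicator hSmeas
  -- pointwise decomposition of the integrand
  have hpt : ∀ ω, vM t * Θ t ω
      = (∫ r in Ioc (0:ℝ) t, vM r * (if r < T ω then τM r else 0))
        - (if 0 < T ω ∧ T ω ≤ t then vM (T ω) * SM (T ω) else 0)
        - (if t < T ω then vM t * VL t else 0) := by
    intro ω
    rw [hΘ]
    have hvMt : vM t ≠ 0 := (hvM_pos t).ne'
    have hA : vM t * (∫ r in (0:ℝ)..t, (vM r / vM t) * (if r < T ω then τM r else 0))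
        = ∫ r in Ioc (0:ℝ) t, vM r * (if r < T ω then τM r else 0) := by
      rw [← intervalIntegral.integral_const_mul, intervalIntegral.integral_of_le ht0]
      refine setIntegral_congr_fun measurableSet_Ioc fun r _ => ?_
      rw [← mul_assoc, mul_comm (vM t) (vM r / vM t), div_mul_cancel₀ _ hvMt]
    have hB : vM t * (if 0 < T ω ∧ T ω ≤ t then (vM (T ω) / vM t) * SM (T ω) else 0)
        = (if 0 < T ω ∧ T ω ≤ t then vM (T ω) * SM (T ω) else 0) := by
      by_cases h : 0 < T ω ∧ T ω ≤ t
      · rw [if_pos h, if_pos h, ← mul_assoc, mul_comm (vM t) (vM (T ω) / vM t),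
          div_mul_cancel₀ _ hvMt]
      · rw [if_neg h, if_neg h]; ring
    have hC : vM t * (if t < T ω then VL t else 0)
        = (if t < T ω then vM t * VL t else 0) := by
      by_cases h : t < T ω
      · rw [if_pos h, if_pos h]
      · rw [if_neg h, if_neg h]; ring
    rw [mul_sub, mul_sub, hA, hB, hC]
  -- assemble the expectation
  have hLHS : (∫ ω, vM t * Θ t ω ∂P)
      = (∫ r in (0:ℝ)..t, φM r * τM r) - (∫ r in (0:ℝ)..t, φM r * (μM r * SM r))
        - φM t * VL t := by
    have hcg := integral_congr_ae (μ := P) (Filter.Eventually.of_forall hpt)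
    rw [hcg]
    have hDE : Integrable (fun ω =>
        (∫ r in Ioc (0:ℝ) t, vM r * (if r < T ω then τM r else 0))
        - (if 0 < T ω ∧ T ω ≤ t then vM (T ω) * SM (T ω) else 0)) P :=
      hInt_D.sub hInt_E
    rw [integral_sub hDE hInt_G, integral_sub hInt_D hInt_E, hD, hE, hG]
  rw [hLHS]
  -- FTC for φM * VL
  have hVL_cont : ContinuousOn VL (Icc 0 n) := fun x hx =>
    ((hVL x hx).continuousAt).continuousWithinAt
  have hsub : Icc (0:ℝ) t ⊆ Icc 0 n := Icc_subset_Icc le_rfl htn.le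
  have huIcc : uIcc (0:ℝ) t = Icc 0 t := uIcc_of_le ht0
  set d : ℝ → ℝ := fun u => -(δM u + μM u) * φM u * VL u
    + φM u * (δL u * VL u + τL u - μL u * (SL u - VL u)) with hd_def
  have hd_cont : ContinuousOn d (Icc 0 t) := by
    have hVL' : ContinuousOn VL (Icc 0 t) := hVL_cont.mono hsub
    apply ContinuousOn.add
    · exact (((((hδM.add hμM).neg).continuousOn).mul hφM_cont.continuousOn).mul hVL')
    · exact hφM_cont.continuousOn.mul
        (((hδL.continuousOn.mul hVL').add hτL.continuousOn).sub
          (hμL.continuousOn.mul (hSL.continuousOn.sub hVL')))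
  have hint3 : IntervalIntegrable d volume 0 t := by
    have hcc : ContinuousOn d (uIcc 0 t) := by rw [huIcc]; exact hd_cont
    exact hcc.intervalIntegrable
  have hFTC : ∫ r in (0:ℝ)..t, d r = φM t * VL t - VL 0 := by
    have h := intervalIntegral.integral_eq_sub_of_hasDerivAt
      (f := fun u => φM u * VL u) (f' := d) (a := (0:ℝ)) (b := t)
      (fun u hu => by
        rw [huIcc] at hu
        have h1 := (hφM_deriv u).mul (hVL u (hsub hu))
        exact h1)
      hint3
    rw [h]
    simp [hφM_zero]
  have hcongr : ∫ r in (0:ℝ)..t, φM r * chat r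
      = ∫ r in (0:ℝ)..t, (φM r * τM r - φM r * (μM r * SM r) - d r) := by
    refine intervalIntegral.integral_congr fun r _ => ?_
    rw [hchat r, hd_def]
    ring
  have hint1 : IntervalIntegrable (fun r => φM r * τM r) volume 0 t :=
    (hφM_cont.mul hτM).intervalIntegrable _ _
  have hint2 : IntervalIntegrable (fun r => φM r * (μM r * SM r)) volume 0 t :=
    (hφM_cont.mul (hμM.mul hSM)).intervalIntegrable _ _
  rw [hcongr, intervalIntegral.integral_sub (hint1.sub hint2) hint3,
    intervalIntegral.integral_sub hint1 hint2, hFTC]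
  ring
end

section
/- In the three-basis model with augmented systematic component ĉᴸᴹ as defined from valuation basis Aᴸ = ((δᴸ,μᴸ),(τᴸ,Sᴸ,S̄ᴸ)), the total expected discounted surplus -Vᴸ(0) + ∫₀ⁿ φᴹ(r) ĉᴸᴹ(r) dr - φᴹ(n)(S̄ᴹ - S̄ᴸ) equals E_M[∫₀ⁿ vᴹ(r) dBᴹ(r)] - φᴹ(n)S̄ᴹ, and hence is independent of the choice of valuation actuarial basis Aᴸ. -/
open MeasureTheory Set

private lemma primitive_hasDerivAt' {f : ℝ → ℝ} (hf : Continuous f) (t : ℝ) :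
    HasDerivAt (fun u => ∫ r in (0:ℝ)..u, f r) (f t) t :=
  intervalIntegral.integral_hasDerivAt_right (hf.intervalIntegrable _ _)
    (hf.stronglyMeasurableAtFilter _ _) hf.continuousAt

private lemma expneg_hasDerivAt' {f : ℝ → ℝ} (hf : Continuous f) (t : ℝ) :
    HasDerivAt (fun u => Real.exp (-(∫ r in (0:ℝ)..u, f r)))
      (-(f t) * Real.exp (-(∫ r in (0:ℝ)..t, f r))) t := by
  have h := ((primitive_hasDerivAt' hf t).neg).exp
  simpa [mul_comm] using h


/-- Invariance of the total expected discounted surplus under change of valuation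
actuarial basis: `-Vᴸ(0) + ∫₀ⁿ φᴹ ĉᴸᴹ - φᴹ(n)(S̄ᴹ - S̄ᴸ)` equals
`E_M[∫₀ⁿ vᴹ dBᴹ] - φᴹ(n) S̄ᴹ`, which does not depend on the valuation basis. -/
theorem total_surplus_invariant_under_valuation_basis
    {Ω : Type*} [m0 : MeasurableSpace Ω] (P : Measure Ω) [IsProbabilityMeasure P]
    (n SbarL SbarM : ℝ) (hn : 0 < n)
    (T : Ω → ℝ) (hT : Measurable T) (hTnn : ∀ ω, 0 ≤ T ω)
    (δL μL δM μM τL Prem SL SM VL chat : ℝ → ℝ)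
    (hδL : Continuous δL) (hμL : Continuous μL)
    (hδM : Continuous δM) (hμM : Continuous μM)
    (hτL : Continuous τL) (hPrem : Continuous Prem)
    (hSL : Continuous SL) (hSM : Continuous SM)
    -- under the experience measure, T has hazard rate μᴹ
    (hTlaw : ∀ t : ℝ, P {ω | t < T ω}
      = ENNReal.ofReal (Real.exp (-(∫ r in (0:ℝ)..t, μM r))))
    (vM φM : ℝ → ℝ)
    (hvM : ∀ t, vM t = Real.exp (-(∫ r in (0:ℝ)..t, δM r)))
    (hφM : ∀ t, φM t = Real.exp (-(∫ r in (0:ℝ)..t, (δM r + μM r))))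
    -- Vᴸ solves Thiele's equation on the valuation actuarial basis with Vᴸ(n) = S̄ᴸ
    (hVL : ∀ t ∈ Icc (0:ℝ) n,
      HasDerivAt VL (δL t * VL t + τL t - μL t * (SL t - VL t)) t)
    (hVLn : VL n = SbarL)
    -- augmented systematic component of surplus
    (hchat : ∀ t, chat t =
      (δM t - δL t) * VL t - (μM t - μL t) * (SL t - VL t)
      + (Prem t - τL t) - μM t * (SM t - SL t)) :
    -VL 0 + (∫ r in (0:ℝ)..n, φM r * chat r) - φM n * (SbarM - SbarL)
      = (∫ ω, ((∫ r in (0:ℝ)..n, vM r * (if r < T ω then Prem r else 0))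
          - (if 0 < T ω ∧ T ω ≤ n then vM (T ω) * SM (T ω) else 0)) ∂P)
        - φM n * SbarM := by
  -- basic objects
  set H : ℝ → ℝ := fun t => ∫ r in (0:ℝ)..t, μM r with hHdef
  set G : ℝ → ℝ := fun t => Real.exp (-(H t)) with hGdef
  have hGd : ∀ t, HasDerivAt G (-(μM t) * G t) t := fun t => expneg_hasDerivAt' hμM t
  have hGcont : Continuous G := continuous_iff_continuousAt.mpr fun t => (hGd t).continuousAt
  have hGpos : ∀ t, 0 < G t := fun t => Real.exp_pos _
  have hvMcont : Continuous vM := by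
    refine (continuous_iff_continuousAt.mpr fun t =>
      (expneg_hasDerivAt' hδM t).continuousAt).congr fun t => (hvM t).symm
  have hφd : ∀ t, HasDerivAt φM (-(δM t + μM t) * φM t) t := by
    intro t
    have hfun : φM = fun u => Real.exp (-(∫ r in (0:ℝ)..u, (δM r + μM r))) := funext hφM
    rw [hfun]
    exact expneg_hasDerivAt' (hδM.add hμM) t
  have hφcont : Continuous φM := continuous_iff_continuousAt.mpr fun t => (hφd t).continuousAt
  -- φM = vM * G
  have hφ_eq : ∀ t, φM t = vM t * G t := by
    intro t
    rw [hφM, hvM, hGdef, ← Real.exp_add]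
    congr 1
    rw [hHdef]
    rw [intervalIntegral.integral_add (hδM.intervalIntegrable _ _) (hμM.intervalIntegrable _ _)]
    ring
  -- H is monotone, hence μM is nonnegative
  have hHmono : Monotone H := by
    intro s t hst
    have h1 : P {ω | t < T ω} ≤ P {ω | s < T ω} :=
      measure_mono fun ω h => lt_of_le_of_lt hst h
    rw [hTlaw, hTlaw] at h1
    have h2 := (ENNReal.ofReal_le_ofReal_iff (Real.exp_pos _).le).mp h1
    have h3 := Real.exp_le_exp.mp h2
    simp only [neg_le_neg_iff] at h3
    exact h3
  have hμMnn : ∀ t, 0 ≤ μM t := by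
    intro t
    have hs : Filter.Tendsto (slope H t) (nhdsWithin t (Ioi t)) (nhds (μM t)) :=
      (hasDerivAt_iff_tendsto_slope.mp (primitive_hasDerivAt' hμM t)).mono_left
        (nhdsWithin_mono _ (fun x hx => ne_of_gt hx))
    refine ge_of_tendsto hs ?_
    filter_upwards [self_mem_nhdsWithin] with x hx
    rw [slope_def_field]
    exact div_nonneg (sub_nonneg.mpr (hHmono (le_of_lt hx))) (sub_pos.mpr hx).le
  -- the law of T
  set ρ : ℝ → ℝ := fun t => μM t * G t with hρdef
  have hρcont : Continuous ρ := hμM.mul hGcont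
  have hρnn : ∀ t, 0 ≤ ρ t := fun t => mul_nonneg (hμMnn t) (hGpos t).le
  have hnegGd : ∀ t, HasDerivAt (fun u => -G u) (ρ t) t := by
    intro t
    have := (hGd t).neg
    rw [show ρ t = -(-μM t * G t) by simp only [hρdef]; ring]
    exact this
  have hρint : ∀ a b : ℝ, a ≤ b → ∫ t in Ioc a b, ρ t = G a - G b := by
    intro a b hab
    rw [← intervalIntegral.integral_of_le hab]
    rw [intervalIntegral.integral_eq_sub_of_hasDerivAt (fun t _ => hnegGd t)
      (hρcont.intervalIntegrable _ _)]
    ring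
  have hmap : P.map T = volume.withDensity (fun t => ENNReal.ofReal (ρ t)) := by
    have hprob : IsProbabilityMeasure (P.map T) := Measure.isProbabilityMeasure_map hT.aemeasurable
    refine Measure.ext_of_Ioc (P.map T) _ ?_
    intro a b hab
    rw [Measure.map_apply hT measurableSet_Ioc]
    have hmeasb : MeasurableSet {ω | b < T ω} := measurableSet_lt measurable_const hT
    have hsub : {ω | b < T ω} ⊆ {ω | a < T ω} := fun ω h => lt_of_le_of_lt hab.le h
    have hpre : T ⁻¹' Ioc a b = {ω | a < T ω} \ {ω | b < T ω} := by
      ext ω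
      simp only [mem_preimage, mem_Ioc, mem_diff, mem_setOf_eq, not_lt]
    rw [hpre, measure_diff hsub hmeasb.nullMeasurableSet (measure_ne_top P _), hTlaw, hTlaw]
    rw [withDensity_apply _ measurableSet_Ioc]
    rw [← ofReal_integral_eq_lintegral_ofReal
      (hρcont.integrableOn_Ioc) (Filter.Eventually.of_forall fun t => hρnn t)]
    rw [hρint a b hab.le, ENNReal.ofReal_sub _ (hGpos b).le]
  -- Term B : the death benefit expectation
  set g : ℝ → ℝ := fun t => vM t * SM t with hgdef
  have hgcont : Continuous g := hvMcont.mul hSM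
  have hBpt : ∀ ω, (if 0 < T ω ∧ T ω ≤ n then vM (T ω) * SM (T ω) else 0)
      = (Ioc (0:ℝ) n).indicator g (T ω) := by
    intro ω
    by_cases h : 0 < T ω ∧ T ω ≤ n
    · rw [if_pos h, indicator_of_mem (mem_Ioc.mpr h)]
    · rw [if_neg h, indicator_of_notMem (fun hm => h (mem_Ioc.mp hm))]
  have hB : (∫ ω, (Ioc (0:ℝ) n).indicator g (T ω) ∂P)
      = ∫ t in Ioc (0:ℝ) n, φM t * (μM t * SM t) := by
    rw [← integral_map hT.aemeasurable
      ((hgcont.measurable.indicator measurableSet_Ioc).aestronglyMeasurable)]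
    rw [hmap]
    have hρ' : (fun t => ENNReal.ofReal (ρ t)) = fun t => ((ρ t).toNNReal : ENNReal) := rfl
    rw [hρ', integral_withDensity_eq_integral_smul
      (hρcont.measurable.real_toNNReal)]
    have hpt : ∀ t, (ρ t).toNNReal • (Ioc (0:ℝ) n).indicator g t
        = (Ioc (0:ℝ) n).indicator (fun u => φM u * (μM u * SM u)) t := by
      intro t
      by_cases h : t ∈ Ioc (0:ℝ) n
      · rw [indicator_of_mem h, indicator_of_mem h, NNReal.smul_def,
          Real.coe_toNNReal _ (hρnn t), hρdef, hgdef, hφ_eq, smul_eq_mul]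
        ring
      · rw [indicator_of_notMem h, indicator_of_notMem h, smul_zero]
    simp_rw [hpt]
    rw [integral_indicator measurableSet_Ioc]
  have hφ_eq2 : ∀ t, φM t = vM t * Real.exp (-(∫ r in (0:ℝ)..t, μM r)) :=
    fun t => hφ_eq t
  -- Term A : the premium expectation
  set f : Ω → ℝ → ℝ := fun ω r => if r < T ω then vM r * Prem r else 0 with hfdef
  have hνfin : IsFiniteMeasure (volume.restrict (Ioc (0:ℝ) n)) :=
    ⟨by rw [Measure.restrict_apply_univ]; exact measure_Ioc_lt_top⟩
  obtain ⟨C, hC⟩ := (isCompact_Icc (a := (0:ℝ)) (b := n)).exists_bound_of_continuousOn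
      ((hvMcont.mul hPrem).continuousOn)
  have hsmeas : MeasurableSet {p : Ω × ℝ | p.2 < T p.1} :=
    measurableSet_lt measurable_snd (hT.comp measurable_fst)
  have hFmeas : Measurable (Function.uncurry f) := by
    refine Measurable.ite hsmeas ?_ measurable_const
    exact ((hvMcont.mul hPrem).measurable).comp measurable_snd
  have hmem : ∀ᵐ p ∂(P.prod (volume.restrict (Ioc (0:ℝ) n))), p.2 ∈ Ioc (0:ℝ) n := by
    have heq : P.prod (volume.restrict (Ioc (0:ℝ) n))
        = (P.prod volume).restrict (univ ×ˢ Ioc (0:ℝ) n) := by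
      rw [← Measure.prod_restrict, Measure.restrict_univ]
    rw [heq]
    filter_upwards [ae_restrict_mem (MeasurableSet.univ.prod measurableSet_Ioc)] with p hp
    exact hp.2
  have hFint : Integrable (Function.uncurry f) (P.prod (volume.restrict (Ioc (0:ℝ) n))) := by
    refine Integrable.mono' (integrable_const C) hFmeas.aestronglyMeasurable ?_
    filter_upwards [hmem] with p hp
    simp only [Function.uncurry, hfdef]
    by_cases h : p.2 < T p.1
    · rw [if_pos h]
      exact hC p.2 (Ioc_subset_Icc_self hp)
    · rw [if_neg h]
      simpa using (norm_nonneg (vM 0 * Prem 0)).trans (hC 0 (left_mem_Icc.mpr hn.le))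
  have h1 : ∀ ω, (∫ r in (0:ℝ)..n, vM r * (if r < T ω then Prem r else 0))
      = ∫ r in Ioc (0:ℝ) n, f ω r := by
    intro ω
    rw [intervalIntegral.integral_of_le hn.le]
    refine integral_congr_ae (Filter.Eventually.of_forall fun r => ?_)
    by_cases h : r < T ω <;> simp [hfdef, h]
  have hA : (∫ ω, (∫ r in Ioc (0:ℝ) n, f ω r) ∂P)
      = ∫ r in Ioc (0:ℝ) n, φM r * Prem r := by
    rw [integral_integral_swap hFint]
    refine integral_congr_ae (Filter.Eventually.of_forall fun r => ?_)
    have h2 : ∀ ω, f ω r = Set.indicator {ω | r < T ω} (fun _ => vM r * Prem r) ω := by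
      intro ω
      by_cases h : r < T ω
      · simp only [hfdef]; rw [if_pos h]; exact (indicator_of_mem (show ω ∈ {ω | r < T ω} from h) (fun _ => vM r * Prem r)).symm
      · simp only [hfdef]; rw [if_neg h]; exact (indicator_of_notMem (show ω ∉ {ω | r < T ω} from h) (fun _ => vM r * Prem r)).symm
    simp_rw [h2]
    rw [integral_indicator_const _ (measurableSet_lt measurable_const hT), measureReal_def, hTlaw,
      ENNReal.toReal_ofReal (Real.exp_pos _).le, smul_eq_mul, hφ_eq2]
    ring
  -- Thiele / FTC part
  set D : ℝ → ℝ := fun t =>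
    -(δM t + μM t) * φM t * VL t
      + φM t * (δL t * VL t + τL t - μL t * (SL t - VL t)) with hDdef
  have hVLcont : ContinuousOn VL (Icc (0:ℝ) n) :=
    fun t ht => (hVL t ht).continuousAt.continuousWithinAt
  have hDcont : ContinuousOn D (Icc (0:ℝ) n) := by
    refine ContinuousOn.add ?_ ?_
    · exact ((hδM.add hμM).neg.continuousOn.mul hφcont.continuousOn).mul hVLcont
    · exact hφcont.continuousOn.mul
        (((hδL.continuousOn.mul hVLcont).add hτL.continuousOn).sub
          (hμL.continuousOn.mul (hSL.continuousOn.sub hVLcont)))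
  have hDint : IntervalIntegrable D volume 0 n :=
    ContinuousOn.intervalIntegrable (by rwa [uIcc_of_le hn.le])
  have hgd : ∀ t ∈ uIcc (0:ℝ) n, HasDerivAt (fun u => φM u * VL u) (D t) t := by
    intro t ht
    rw [uIcc_of_le hn.le] at ht
    exact (hφd t).mul (hVL t ht)
  have hFTC : ∫ t in (0:ℝ)..n, D t = φM n * SbarL - VL 0 := by
    rw [intervalIntegral.integral_eq_sub_of_hasDerivAt hgd hDint, hVLn]
    have hφ0 : φM 0 = 1 := by rw [hφM]; simp
    rw [hφ0, one_mul]
  have hptw : ∀ t, φM t * chat t = φM t * (Prem t - μM t * SM t) - D t := by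
    intro t
    rw [hchat, hDdef]
    ring
  have hint1 : IntervalIntegrable (fun t => φM t * (Prem t - μM t * SM t)) volume 0 n :=
    (hφcont.mul (hPrem.sub (hμM.mul hSM))).intervalIntegrable _ _
  have hsplit : ∫ r in (0:ℝ)..n, φM r * chat r
      = (∫ r in (0:ℝ)..n, φM r * (Prem r - μM r * SM r)) - ∫ r in (0:ℝ)..n, D r := by
    rw [← intervalIntegral.integral_sub hint1 hDint]
    exact intervalIntegral.integral_congr fun t _ => hptw t
  -- integrability on the probability side
  have hAint : Integrable (fun ω => ∫ r in Ioc (0:ℝ) n, f ω r) P := hFint.integral_prod_left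
  obtain ⟨C₂, hC₂⟩ := (isCompact_Icc (a := (0:ℝ)) (b := n)).exists_bound_of_continuousOn
      hgcont.continuousOn
  have hBint : Integrable (fun ω => (Ioc (0:ℝ) n).indicator g (T ω)) P := by
    refine Integrable.mono' (integrable_const C₂)
      (((hgcont.measurable.indicator measurableSet_Ioc).comp hT).aestronglyMeasurable) ?_
    refine Filter.Eventually.of_forall fun ω => ?_
    by_cases h : T ω ∈ Ioc (0:ℝ) n
    · rw [indicator_of_mem h]
      exact hC₂ _ (Ioc_subset_Icc_self h)
    · rw [indicator_of_notMem h]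
      simpa using (norm_nonneg (g 0)).trans (hC₂ 0 (left_mem_Icc.mpr hn.le))
  have hExp : (∫ ω, ((∫ r in (0:ℝ)..n, vM r * (if r < T ω then Prem r else 0))
        - (if 0 < T ω ∧ T ω ≤ n then vM (T ω) * SM (T ω) else 0)) ∂P)
      = (∫ r in Ioc (0:ℝ) n, φM r * Prem r)
        - ∫ t in Ioc (0:ℝ) n, φM t * (μM t * SM t) := by
    simp_rw [h1, hBpt]
    rw [integral_sub hAint hBint, hA, hB]
  have hIocA : (∫ r in Ioc (0:ℝ) n, φM r * Prem r) = ∫ r in (0:ℝ)..n, φM r * Prem r :=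
    (intervalIntegral.integral_of_le hn.le).symm
  have hIocB : (∫ t in Ioc (0:ℝ) n, φM t * (μM t * SM t))
      = ∫ t in (0:ℝ)..n, φM t * (μM t * SM t) :=
    (intervalIntegral.integral_of_le hn.le).symm
  have hI1 : (∫ r in (0:ℝ)..n, φM r * (Prem r - μM r * SM r))
      = (∫ r in (0:ℝ)..n, φM r * Prem r) - ∫ r in (0:ℝ)..n, φM r * (μM r * SM r) := by
    rw [← intervalIntegral.integral_sub (f := fun r => φM r * Prem r) (g := fun r => φM r * (μM r * SM r)) ((hφcont.mul hPrem).intervalIntegrable _ _)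
      ((hφcont.mul (hμM.mul hSM)).intervalIntegrable _ _)]
    exact intervalIntegral.integral_congr fun t _ => by ring
  rw [hExp, hsplit, hFTC, hIocA, hIocB, hI1]
  ring
end
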